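/- arXiv:math/0502556 — 6 statements merged into one kernel-verified Lean document; each statement's English description precedes it below -/
import Mathlib

section
/- Let b = (b_{jk}) be an arbitrary real d × d matrix. Let ∘_b denote the product on ℝ^{d+1} given by x ∘_b y = (x₀ + y₀ + ∑_{j,k=1}^d b_{kj} x_j y_k, x' + y'), and let ∘_L denote the product x ∘_L y = (x₀ + y₀ + ½ ∑_{j,k=1}^d (b_{kj} − b_{jk}) x_j y_k, x' + y'). Then the map φ_b(x) = (x₀ − ¼ ∑_{j,k=1}^d (b_{jk} + b_{kj}) x_j x_k, x') is a group isomorphism from (ℝ^{d+1}, ∘_b) onto (ℝ^{d+1}, ∘_L). Moreover φ_b commutes with the dilations, φ_b(t.x) = t.φ_b(x) for all t ∈ ℝ, the Jacobian determinant of φ_b is identically 1, and φ_b⁻¹(y) = −φ_b(−y) for all y. -/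
namespace Stmt3Aux

variable {d : ℕ}

/-- The shear map `(a, v) ↦ (a + L v, v)`. -/
noncomputable def shear (L : (Fin d → ℝ) →ₗ[ℝ] ℝ) : (ℝ × (Fin d → ℝ)) →ₗ[ℝ] ℝ × (Fin d → ℝ) where
  toFun p := (p.1 + L p.2, p.2)
  map_add' p q := by simp [Prod.ext_iff]; ring
  map_smul' c p := by simp [Prod.ext_iff]; ring

lemma shear_comp (L L' : (Fin d → ℝ) →ₗ[ℝ] ℝ) :
    shear L ∘ₗ shear L' = shear (L + L') := by
  apply LinearMap.ext; intro p
  simp [shear, Prod.ext_iff]; ring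

noncomputable def Dscale : (ℝ × (Fin d → ℝ)) ≃ₗ[ℝ] ℝ × (Fin d → ℝ) where
  toFun p := (2 * p.1, p.2)
  invFun p := (p.1 / 2, p.2)
  map_add' p q := by simp [Prod.ext_iff]; ring
  map_smul' c p := by simp [Prod.ext_iff]; try ring
  left_inv p := by simp [Prod.ext_iff]; try ring
  right_inv p := by simp [Prod.ext_iff]; try ring

lemma det_shear (L : (Fin d → ℝ) →ₗ[ℝ] ℝ) : LinearMap.det (shear L) = 1 := by
  set D : (ℝ × (Fin d → ℝ)) ≃ₗ[ℝ] ℝ × (Fin d → ℝ) := Dscale with hD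
  have key : (D : (ℝ × (Fin d → ℝ)) →ₗ[ℝ] _) ∘ₗ shear L ∘ₗ (D.symm : _ →ₗ[ℝ] _)
      = shear ((2 : ℝ) • L) := by
    apply LinearMap.ext; intro p
    simp [shear, hD, Dscale, Prod.ext_iff]
    ring
  have h1 : LinearMap.det (shear ((2:ℝ) • L)) = LinearMap.det (shear L) := by
    rw [← key, LinearMap.det_conj]
  have h2 : shear L ∘ₗ shear L = shear ((2:ℝ) • L) := by
    rw [shear_comp, two_smul]
  have h3 : (LinearMap.det (shear L)) * LinearMap.det (shear L) = LinearMap.det (shear L) := by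
    rw [← LinearMap.det_comp, h2, h1]
  have h4 : shear L ∘ₗ shear (-L) = LinearMap.id := by
    rw [shear_comp, add_neg_cancel]
    apply LinearMap.ext; intro p; simp [shear]
  have h5 : LinearMap.det (shear L) ≠ 0 := by
    intro h
    have := LinearMap.det_comp (shear L) (shear (-L))
    rw [h4, LinearMap.det_id, h] at this
    simp at this
  field_simp at h3
  tauto

end Stmt3Aux


/-- For an arbitrary real `d × d` matrix `b`, the map
`φ_b(x) = (x₀ − ¼ ∑ (b_{jk}+b_{kj}) x_j x_k, x')` is a group isomorphism from
`(ℝ^{d+1}, ∘_b)` onto `(ℝ^{d+1}, ∘_L)` with `L_{jk} = b_{kj} − b_{jk}`; it commutes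
with the anisotropic dilations, has Jacobian determinant `1`, and its inverse is
`y ↦ −φ_b(−y)`. -/
theorem stmt3 (d : ℕ) (b : Matrix (Fin d) (Fin d) ℝ)
    (mulb mulL : (ℝ × (Fin d → ℝ)) → (ℝ × (Fin d → ℝ)) → ℝ × (Fin d → ℝ))
    (hmulb : mulb = fun x y =>
      (x.1 + y.1 + ∑ j, ∑ k, b k j * x.2 j * y.2 k, x.2 + y.2))
    (hmulL : mulL = fun x y =>
      (x.1 + y.1 + (1 / 2) * ∑ j, ∑ k, (b k j - b j k) * x.2 j * y.2 k, x.2 + y.2))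
    (φ : (ℝ × (Fin d → ℝ)) → ℝ × (Fin d → ℝ))
    (hφ : φ = fun x =>
      (x.1 - (1 / 4) * ∑ j, ∑ k, (b j k + b k j) * x.2 j * x.2 k, x.2))
    (dil : ℝ → (ℝ × (Fin d → ℝ)) → ℝ × (Fin d → ℝ))
    (hdil : dil = fun t x => (t ^ 2 * x.1, t • x.2)) :
    -- group homomorphism
    (∀ x y, φ (mulb x y) = mulL (φ x) (φ y)) ∧
    -- bijectivity ("onto")
    Function.Bijective φ ∧
    -- commutes with the dilations
    (∀ (t : ℝ) (x), φ (dil t x) = dil t (φ x)) ∧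
    -- Jacobian determinant identically 1
    (∀ x, LinearMap.det (fderiv ℝ φ x).toLinearMap = 1) ∧
    -- φ⁻¹(y) = −φ(−y)
    (∀ y, φ (-φ (-y)) = y) ∧ (∀ x, -φ (-φ x) = x) := by
  subst hmulb hmulL hφ hdil
  -- swap lemma for double sums
  have hswap : ∀ u w : Fin d → ℝ,
      ∑ j, ∑ k, (b j k + b k j) * u j * w k = ∑ j, ∑ k, (b j k + b k j) * w j * u k := by
    intro u w
    rw [Finset.sum_comm]
    exact Finset.sum_congr rfl fun j _ => Finset.sum_congr rfl fun k _ => by ring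
  -- part 5 and 6 (inverse)
  have hinv1 : ∀ y : ℝ × (Fin d → ℝ),
      (fun x : ℝ × (Fin d → ℝ) =>
        ((x.1 - (1 / 4) * ∑ j, ∑ k, (b j k + b k j) * x.2 j * x.2 k, x.2) : ℝ × (Fin d → ℝ)))
        (-(fun x : ℝ × (Fin d → ℝ) =>
        ((x.1 - (1 / 4) * ∑ j, ∑ k, (b j k + b k j) * x.2 j * x.2 k, x.2) : ℝ × (Fin d → ℝ))) (-y)) = y := by
    intro y
    have hQ : ∀ v : Fin d → ℝ, ∑ j, ∑ k, (b j k + b k j) * (-v) j * (-v) k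
        = ∑ j, ∑ k, (b j k + b k j) * v j * v k :=
      fun v => Finset.sum_congr rfl fun j _ => Finset.sum_congr rfl fun k _ => by
        simp only [Pi.neg_apply]; ring
    simp only [Prod.fst_neg, Prod.snd_neg, hQ, neg_neg, neg_sub]
    exact Prod.ext (by ring) rfl
  have hinv2 : ∀ x : ℝ × (Fin d → ℝ),
      -(fun x : ℝ × (Fin d → ℝ) =>
        ((x.1 - (1 / 4) * ∑ j, ∑ k, (b j k + b k j) * x.2 j * x.2 k, x.2) : ℝ × (Fin d → ℝ)))
        (-(fun x : ℝ × (Fin d → ℝ) =>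
        ((x.1 - (1 / 4) * ∑ j, ∑ k, (b j k + b k j) * x.2 j * x.2 k, x.2) : ℝ × (Fin d → ℝ))) x) = x := by
    intro x
    have hQ : ∀ v : Fin d → ℝ, ∑ j, ∑ k, (b j k + b k j) * (-v) j * (-v) k
        = ∑ j, ∑ k, (b j k + b k j) * v j * v k :=
      fun v => Finset.sum_congr rfl fun j _ => Finset.sum_congr rfl fun k _ => by
        simp only [Pi.neg_apply]; ring
    simp only [Prod.fst_neg, Prod.snd_neg, hQ, neg_neg, neg_sub, Prod.neg_mk]
    exact Prod.ext (by ring) rfl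
  refine ⟨?_, ?_, ?_, ?_, hinv1, hinv2⟩
  · -- homomorphism
    intro x y
    refine Prod.ext ?_ rfl
    simp only
    have e1 : ∑ j, ∑ k, (b j k + b k j) * (x.2 + y.2) j * (x.2 + y.2) k
        = (∑ j, ∑ k, (b j k + b k j) * x.2 j * x.2 k)
          + (∑ j, ∑ k, (b j k + b k j) * y.2 j * y.2 k)
          + 2 * ∑ j, ∑ k, (b j k + b k j) * x.2 j * y.2 k := by
      have expand : ∑ j, ∑ k, (b j k + b k j) * (x.2 + y.2) j * (x.2 + y.2) k
          = ∑ j, ∑ k, ((b j k + b k j) * x.2 j * x.2 k + (b j k + b k j) * y.2 j * y.2 k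
            + ((b j k + b k j) * x.2 j * y.2 k + (b j k + b k j) * y.2 j * x.2 k)) :=
        Finset.sum_congr rfl fun j _ => Finset.sum_congr rfl fun k _ => by
          simp only [Pi.add_apply]; ring
      rw [expand]
      simp only [Finset.sum_add_distrib]
      rw [hswap y.2 x.2]
      ring
    have e2 : ∑ j, ∑ k, (b k j - b j k) * x.2 j * y.2 k
        = 2 * (∑ j, ∑ k, b k j * x.2 j * y.2 k)
          - ∑ j, ∑ k, (b j k + b k j) * x.2 j * y.2 k := by
      rw [Finset.mul_sum, ← Finset.sum_sub_distrib]
      refine Finset.sum_congr rfl fun j _ => ?_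
      rw [Finset.mul_sum, ← Finset.sum_sub_distrib]
      exact Finset.sum_congr rfl fun k _ => by ring
    rw [e1, e2]
    ring
  · -- bijectivity
    exact ⟨Function.LeftInverse.injective (g := fun x => -(fun x : ℝ × (Fin d → ℝ) =>
        ((x.1 - (1 / 4) * ∑ j, ∑ k, (b j k + b k j) * x.2 j * x.2 k, x.2) : ℝ × (Fin d → ℝ))) (-x)) hinv2,
      Function.RightInverse.surjective (g := fun y => -(fun x : ℝ × (Fin d → ℝ) =>
        ((x.1 - (1 / 4) * ∑ j, ∑ k, (b j k + b k j) * x.2 j * x.2 k, x.2) : ℝ × (Fin d → ℝ))) (-y)) hinv1⟩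
  · -- dilations
    intro t x
    refine Prod.ext ?_ rfl
    simp only
    have e : ∑ j, ∑ k, (b j k + b k j) * (t • x.2) j * (t • x.2) k
        = t ^ 2 * ∑ j, ∑ k, (b j k + b k j) * x.2 j * x.2 k := by
      rw [Finset.mul_sum]
      refine Finset.sum_congr rfl fun j _ => ?_
      rw [Finset.mul_sum]
      exact Finset.sum_congr rfl fun k _ => by
        simp only [Pi.smul_apply, smul_eq_mul]; ring
    rw [e]
    ring
  · -- Jacobian determinant
    intro x
    set P : Fin d → (ℝ × (Fin d → ℝ)) →L[ℝ] ℝ := fun j =>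
      (ContinuousLinearMap.proj j).comp (ContinuousLinearMap.snd ℝ ℝ (Fin d → ℝ)) with hPdef
    have hP : ∀ j, HasFDerivAt (fun y : ℝ × (Fin d → ℝ) => y.2 j) (P j) x := fun j =>
      ((ContinuousLinearMap.proj j).comp (ContinuousLinearMap.snd ℝ ℝ (Fin d → ℝ))).hasFDerivAt
    have hsum : HasFDerivAt
        (fun y : ℝ × (Fin d → ℝ) => ∑ j, ∑ k, (b j k + b k j) * y.2 j * y.2 k)
        (∑ j, ∑ k, (((b j k + b k j) * x.2 j) • P k + x.2 k • ((b j k + b k j) • P j))) x := by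
      refine HasFDerivAt.fun_sum fun j _ => HasFDerivAt.fun_sum fun k _ => ?_
      exact ((hP j).const_mul _).mul (hP k)
    have hq : HasFDerivAt
        (fun y : ℝ × (Fin d → ℝ) => y.1 - (1 / 4) * ∑ j, ∑ k, (b j k + b k j) * y.2 j * y.2 k)
        (ContinuousLinearMap.fst ℝ ℝ (Fin d → ℝ)
          - (1 / 4 : ℝ) • ∑ j, ∑ k, (((b j k + b k j) * x.2 j) • P k + x.2 k • ((b j k + b k j) • P j))) x :=
      (hasFDerivAt_fst).sub (hsum.const_mul (1 / 4))
    have hφd : HasFDerivAt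
        (fun x : ℝ × (Fin d → ℝ) =>
          ((x.1 - (1 / 4) * ∑ j, ∑ k, (b j k + b k j) * x.2 j * x.2 k, x.2) : ℝ × (Fin d → ℝ)))
        ((ContinuousLinearMap.fst ℝ ℝ (Fin d → ℝ)
          - (1 / 4 : ℝ) • ∑ j, ∑ k, (((b j k + b k j) * x.2 j) • P k + x.2 k • ((b j k + b k j) • P j))).prod
          (ContinuousLinearMap.snd ℝ ℝ (Fin d → ℝ))) x :=
      hq.prodMk hasFDerivAt_snd
    rw [hφd.fderiv]
    set L : (Fin d → ℝ) →ₗ[ℝ] ℝ :=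
      ∑ j, ∑ k, ((-(1 / 4 : ℝ) * ((b j k + b k j) * x.2 j)) • (LinearMap.proj k : (Fin d → ℝ) →ₗ[ℝ] ℝ)
        + (-(1 / 4 : ℝ) * ((b j k + b k j) * x.2 k)) • (LinearMap.proj j : (Fin d → ℝ) →ₗ[ℝ] ℝ)) with hLdef
    have key : ((ContinuousLinearMap.fst ℝ ℝ (Fin d → ℝ)
          - (1 / 4 : ℝ) • ∑ j, ∑ k, (((b j k + b k j) * x.2 j) • P k + x.2 k • ((b j k + b k j) • P j))).prod
          (ContinuousLinearMap.snd ℝ ℝ (Fin d → ℝ))).toLinearMap = Stmt3Aux.shear L := by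
      apply LinearMap.ext; intro p
      refine Prod.ext ?_ rfl
      simp only [ContinuousLinearMap.coe_coe, ContinuousLinearMap.prod_apply,
        ContinuousLinearMap.coe_sub', Pi.sub_apply, ContinuousLinearMap.coe_smul',
        Pi.smul_apply, ContinuousLinearMap.coe_sum', Finset.sum_apply,
        ContinuousLinearMap.add_apply, ContinuousLinearMap.coe_fst',
        ContinuousLinearMap.coe_snd', smul_eq_mul, hPdef,
        ContinuousLinearMap.coe_comp', Function.comp_apply, ContinuousLinearMap.proj_apply,
        Stmt3Aux.shear, LinearMap.coe_mk, AddHom.coe_mk, hLdef, LinearMap.sum_apply,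
        LinearMap.add_apply, LinearMap.smul_apply, LinearMap.proj_apply]
      rw [sub_eq_add_neg]
      congr 1
      rw [Finset.mul_sum, ← Finset.sum_neg_distrib]
      refine Finset.sum_congr rfl fun j _ => ?_
      rw [Finset.mul_sum, ← Finset.sum_neg_distrib]
      exact Finset.sum_congr rfl fun k _ => by ring
    rw [key]
    exact Stmt3Aux.det_shear L
end

section
/- Let U ⊆ ℝ^{d+1} be an open neighborhood of 0 and let X : U → ℝ^{d+1} be a smooth vector field, with components X(x) = (a₀(x), a₁(x), …, a_d(x)). (i) If X(0) = e_j for some 1 ≤ j ≤ d, then for every x ∈ ℝ^{d+1} one has lim_{t→0⁺} t · δ_{1/t}(X(t.x)) = e_j + (∑_{k=1}^d (∂a₀/∂x_k)(0) x_k) e₀, where δ_{1/t}(v₀, v') = (t^{−2} v₀, t^{−1} v'). (ii) If X(0) = e₀, then for every x ∈ ℝ^{d+1} one has lim_{t→0⁺} t² · δ_{1/t}(X(t.x)) = e₀. (In both cases t.x ∈ U for all sufficiently small t > 0, so the expressions are defined.) -/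
open Filter Topology

/-- Let `X` be a smooth vector field on an open neighborhood `U` of `0`
in `ℝ^{d+1}`, with components `X(x) = (a₀(x), a₁(x), …, a_d(x))`.
(i) If `X(0) = e_j` (`1 ≤ j ≤ d`) then `t • δ_{1/t}(X(t.x)) → e_j + (∑_k ∂a₀/∂x_k(0) x_k) e₀`
as `t → 0⁺`; (ii) if `X(0) = e₀` then `t² • δ_{1/t}(X(t.x)) → e₀`.
Moreover `t.x ∈ U` for all sufficiently small `t > 0`. -/
theorem stmt5 (d : ℕ) (U : Set (ℝ × (Fin d → ℝ))) (hU : IsOpen U)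
    (h0 : (0 : ℝ × (Fin d → ℝ)) ∈ U)
    (X : (ℝ × (Fin d → ℝ)) → ℝ × (Fin d → ℝ))
    (hX : ContDiffOn ℝ (⊤ : ℕ∞) X U)
    (dil : ℝ → (ℝ × (Fin d → ℝ)) → ℝ × (Fin d → ℝ))
    (hdil : dil = fun t x => (t ^ 2 * x.1, t • x.2))
    (dilInv : ℝ → (ℝ × (Fin d → ℝ)) → ℝ × (Fin d → ℝ))
    (hdilInv : dilInv = fun t v => ((t ^ 2)⁻¹ * v.1, t⁻¹ • v.2)) :
    -- t.x ∈ U for all sufficiently small t > 0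
    (∀ x : ℝ × (Fin d → ℝ), ∀ᶠ t in 𝓝[>] (0 : ℝ), dil t x ∈ U) ∧
    -- (i)
    (∀ j : Fin d, X 0 = ((0 : ℝ), Pi.single j 1) →
      ∀ x : ℝ × (Fin d → ℝ),
        Tendsto (fun t : ℝ => t • dilInv t (X (dil t x))) (𝓝[>] (0 : ℝ))
          (𝓝 ((∑ k, fderiv ℝ (fun y => (X y).1) 0 ((0 : ℝ), Pi.single k 1) * x.2 k),
              Pi.single j 1))) ∧
    -- (ii)
    (X 0 = ((1 : ℝ), (0 : Fin d → ℝ)) →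
      ∀ x : ℝ × (Fin d → ℝ),
        Tendsto (fun t : ℝ => t ^ 2 • dilInv t (X (dil t x))) (𝓝[>] (0 : ℝ))
          (𝓝 ((1 : ℝ), (0 : Fin d → ℝ)))) := by
  have hUn : U ∈ 𝓝 (0 : ℝ × (Fin d → ℝ)) := hU.mem_nhds h0
  have hXat : ContDiffAt ℝ (⊤ : ℕ∞) X 0 := hX.contDiffAt hUn
  have hXd : DifferentiableAt ℝ X 0 := hXat.differentiableAt (by simp)
  have hXc : ContinuousAt X 0 := hXd.continuousAt
  have hdx : ∀ x : ℝ × (Fin d → ℝ),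
      Tendsto (fun t : ℝ => dil t x) (𝓝[>] (0 : ℝ)) (𝓝 0) := by
    intro x
    have hcont : ContinuousAt (fun t : ℝ => dil t x) 0 := by
      rw [hdil]; fun_prop
    have h0' : dil 0 x = 0 := by rw [hdil]; simp
    have := hcont.tendsto
    rw [h0'] at this
    exact this.mono_left nhdsWithin_le_nhds
  -- the composed map tends to X 0
  have hXdx : ∀ x : ℝ × (Fin d → ℝ),
      Tendsto (fun t : ℝ => X (dil t x)) (𝓝[>] (0 : ℝ)) (𝓝 (X 0)) := fun x =>
    hXc.tendsto.comp (hdx x)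
  refine ⟨fun x => (hdx x).eventually_mem hUn, ?_, ?_⟩
  · -- (i)
    intro j hXj x
    set f : (ℝ × (Fin d → ℝ)) → ℝ := fun y => (X y).1 with hf_def
    set L := fderiv ℝ f 0 with hL_def
    have hfd : DifferentiableAt ℝ f 0 := hXd.fst
    have hf : HasFDerivAt f L 0 := hfd.hasFDerivAt
    set c : ℝ → ℝ × (Fin d → ℝ) := fun t => dil t x with hc_def
    have hc0 : c 0 = 0 := by rw [hc_def, hdil]; simp
    have hc : HasDerivAt c ((0 : ℝ), x.2) 0 := by
      rw [hc_def, hdil]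
      have h1 : HasDerivAt (fun t : ℝ => t ^ 2 * x.1) 0 0 := by
        simpa using (hasDerivAt_pow 2 (0 : ℝ)).mul_const x.1
      have h2 : HasDerivAt (fun t : ℝ => t • x.2) x.2 0 := by
        simpa using (hasDerivAt_id (0 : ℝ)).smul_const x.2
      exact h1.prodMk h2
    have hf' : HasFDerivAt f L (c 0) := by rw [hc0]; exact hf
    have hg : HasDerivAt (fun t => f (c t)) (L ((0 : ℝ), x.2)) 0 :=
      hf'.comp_hasDerivAt 0 hc
    have hg0 : f (c 0) = 0 := by rw [hc0, hf_def]; simp [hXj]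
    have hslope := hasDerivAt_iff_tendsto_slope.mp hg
    have hsub : (Set.Ioi (0 : ℝ)) ⊆ {(0 : ℝ)}ᶜ := fun t ht => ht.ne'
    have h1' : Tendsto (fun t : ℝ => t⁻¹ * f (c t)) (𝓝[>] (0 : ℝ))
        (𝓝 (L ((0 : ℝ), x.2))) := by
      have := hslope.mono_left (nhdsWithin_mono _ hsub)
      refine this.congr (fun t => ?_)
      simp [slope, hg0]
    -- rewrite the limit value
    have hx2 : (((0 : ℝ), x.2) : ℝ × (Fin d → ℝ)) =
        ∑ k, x.2 k • ((((0 : ℝ), Pi.single k 1)) : ℝ × (Fin d → ℝ)) := by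
      refine Prod.ext ?_ ?_
      · simp [Prod.fst_sum]
      · funext i
        simp [Prod.snd_sum, Finset.sum_apply, Pi.single_apply]
    have hL : L ((0 : ℝ), x.2) = ∑ k, L ((0 : ℝ), Pi.single k 1) * x.2 k := by
      rw [hx2, map_sum]
      refine Finset.sum_congr rfl fun k _ => ?_
      rw [map_smul, smul_eq_mul, mul_comm]
    rw [hL] at h1'
    have h2' : Tendsto (fun t : ℝ => (X (dil t x)).2) (𝓝[>] (0 : ℝ))
        (𝓝 (Pi.single j 1)) := by
      have : Tendsto (fun t : ℝ => (X (dil t x)).2) (𝓝[>] (0 : ℝ)) (𝓝 (X 0).2) :=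
        (continuous_snd.continuousAt.tendsto).comp (hXdx x)
      simpa [hXj] using this
    have key := h1'.prodMk_nhds h2'
    refine key.congr' ?_ |>.mono_left le_rfl
    filter_upwards [self_mem_nhdsWithin] with t ht
    have htne : (t : ℝ) ≠ 0 := ht.ne'
    rw [hdilInv]
    have : t • (((t ^ 2)⁻¹ * (X (dil t x)).1, t⁻¹ • (X (dil t x)).2)
        : ℝ × (Fin d → ℝ)) =
        (t * ((t ^ 2)⁻¹ * (X (dil t x)).1), t • t⁻¹ • (X (dil t x)).2) := rfl
    rw [this, smul_smul, mul_inv_cancel₀ htne, one_smul]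
    refine Prod.ext ?_ rfl
    simp only
    field_simp
    ring
  · -- (ii)
    intro hX0 x
    have h1' : Tendsto (fun t : ℝ => (X (dil t x)).1) (𝓝[>] (0 : ℝ))
        (𝓝 (1 : ℝ)) := by
      have : Tendsto (fun t : ℝ => (X (dil t x)).1) (𝓝[>] (0 : ℝ)) (𝓝 (X 0).1) :=
        (continuous_fst.continuousAt.tendsto).comp (hXdx x)
      simpa [hX0] using this
    have h2' : Tendsto (fun t : ℝ => t • (X (dil t x)).2) (𝓝[>] (0 : ℝ))
        (𝓝 (0 : Fin d → ℝ)) := by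
      have ht0 : Tendsto (fun t : ℝ => t) (𝓝[>] (0 : ℝ)) (𝓝 0) :=
        tendsto_id.mono_right nhdsWithin_le_nhds
      have hv : Tendsto (fun t : ℝ => (X (dil t x)).2) (𝓝[>] (0 : ℝ)) (𝓝 (X 0).2) :=
        (continuous_snd.continuousAt.tendsto).comp (hXdx x)
      simpa using ht0.smul hv
    have key := h1'.prodMk_nhds h2'
    refine key.congr' ?_
    filter_upwards [self_mem_nhdsWithin] with t ht
    have htne : (t : ℝ) ≠ 0 := ht.ne'
    rw [hdilInv]
    have : (t ^ 2) • (((t ^ 2)⁻¹ * (X (dil t x)).1, t⁻¹ • (X (dil t x)).2)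
        : ℝ × (Fin d → ℝ)) =
        (t ^ 2 * ((t ^ 2)⁻¹ * (X (dil t x)).1), (t ^ 2) • t⁻¹ • (X (dil t x)).2) := rfl
    rw [this, smul_smul]
    refine Prod.ext ?_ ?_
    · simp only
      field_simp
    · simp only
      congr 1
      field_simp
end

section
/- Let d ≥ 1 and s ∈ ℝ. The function y ↦ ‖y‖^{−s} is Lebesgue integrable on the unit ball {y ∈ ℝ^{d+1} : ‖y‖ ≤ 1} if and only if s < d + 2. In particular, the function y ↦ ‖y‖^{−(d+2)} is not Lebesgue integrable on any neighborhood of the origin in ℝ^{d+1}. -/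
open MeasureTheory Set Metric

noncomputable def Pfun (d : ℕ) (x : ℝ × (Fin d → ℝ)) : ℝ :=
  (x.1 ^ 2 + (∑ j, x.2 j ^ 2) ^ 2) ^ (1 / 4 : ℝ)

lemma Pfun_base_nonneg (d : ℕ) (x : ℝ × (Fin d → ℝ)) :
    0 ≤ x.1 ^ 2 + (∑ j, x.2 j ^ 2) ^ 2 := by positivity

lemma Pfun_nonneg (d : ℕ) (x : ℝ × (Fin d → ℝ)) : 0 ≤ Pfun d x :=
  Real.rpow_nonneg (Pfun_base_nonneg d x) _

lemma Pfun_cont (d : ℕ) : Continuous (Pfun d) := by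
  apply Continuous.rpow_const
  · fun_prop
  · exact fun x => Or.inr (by norm_num)

lemma Pfun_zero (d : ℕ) : Pfun d 0 = 0 := by
  simp [Pfun, Real.zero_rpow (by norm_num : (1/4 : ℝ) ≠ 0)]

lemma Pfun_pos (d : ℕ) {x : ℝ × (Fin d → ℝ)} (hx : x ≠ 0) : 0 < Pfun d x := by
  apply Real.rpow_pos_of_pos
  rcases eq_or_ne x.1 0 with h1 | h1
  · have h2 : x.2 ≠ 0 := fun h2 => hx (Prod.ext h1 h2)
    obtain ⟨j, hj⟩ := Function.ne_iff.1 h2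
    have h3 : x.2 j ^ 2 ≤ ∑ i, x.2 i ^ 2 :=
      Finset.single_le_sum (f := fun i => x.2 i ^ 2) (fun i _ => sq_nonneg _)
        (Finset.mem_univ j)
    have hj' : x.2 j ≠ 0 := by simpa using hj
    have hpos : 0 < ∑ i, x.2 i ^ 2 := lt_of_lt_of_le (by positivity) h3
    positivity
  · positivity

lemma Pfun_pow4 (d : ℕ) (x : ℝ × (Fin d → ℝ)) :
    Pfun d x ^ 4 = x.1 ^ 2 + (∑ j, x.2 j ^ 2) ^ 2 := by
  rw [Pfun, ← Real.rpow_natCast ((x.1 ^ 2 + (∑ j, x.2 j ^ 2) ^ 2) ^ (1/4 : ℝ)) 4,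
    ← Real.rpow_mul (Pfun_base_nonneg d x)]
  norm_num

lemma Pfun_scale (d : ℕ) (c : ℝ) (x : ℝ × (Fin d → ℝ)) :
    Pfun d (c ^ 2 * x.1, c • x.2) = |c| * Pfun d x := by
  have h1 : ∑ j, (c • x.2) j ^ 2 = c ^ 2 * ∑ j, x.2 j ^ 2 := by
    simp [Finset.mul_sum, mul_pow]
  have h2 : (c ^ 2 * x.1) ^ 2 + (c ^ 2 * ∑ j, x.2 j ^ 2) ^ 2
      = |c| ^ 4 * (x.1 ^ 2 + (∑ j, x.2 j ^ 2) ^ 2) := by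
    have h3 : |c| ^ 4 = c ^ 4 := by rw [pow_abs, abs_of_nonneg (by positivity)]
    rw [h3]; ring
  rw [Pfun]
  simp only [h1]
  rw [h2, Real.mul_rpow (by positivity) (Pfun_base_nonneg d x)]
  rw [Pfun]
  congr 1
  rw [← Real.rpow_natCast |c| 4, ← Real.rpow_mul (abs_nonneg c)]
  norm_num

/-- The anisotropic ball. -/
def Sball (d : ℕ) (t : ℝ) : Set (ℝ × (Fin d → ℝ)) := {x | Pfun d x ≤ t}

lemma measurableSet_Sball (d : ℕ) (t : ℝ) : MeasurableSet (Sball d t) :=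
  measurableSet_le (Pfun_cont d).measurable measurable_const

lemma Sball_subset_closedBall (d : ℕ) {ε : ℝ} (hε0 : 0 ≤ ε) (hε1 : ε ≤ 1) :
    Sball d ε ⊆ Metric.closedBall 0 ε := by
  intro x hx
  have hx' : Pfun d x ≤ ε := hx
  have h0 := Pfun_nonneg d x
  have hbase : x.1 ^ 2 + (∑ j, x.2 j ^ 2) ^ 2 ≤ ε ^ 4 := by
    rw [← Pfun_pow4]
    exact pow_le_pow_left₀ h0 hx' 4
  have hT : 0 ≤ ∑ j, x.2 j ^ 2 := by positivity
  have hsq1 : ε ^ 2 ≤ 1 := by nlinarith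
  have hε4 : ε ^ 4 ≤ ε ^ 2 := by nlinarith [sq_nonneg ε, sq_nonneg (ε ^ 2)]
  have h1 : |x.1| ≤ ε := by
    nlinarith [abs_nonneg x.1, sq_abs x.1, sq_nonneg (∑ j, x.2 j ^ 2)]
  have hTle : ∑ j, x.2 j ^ 2 ≤ ε ^ 2 := by nlinarith
  have h2 : ∀ j, |x.2 j| ≤ ε := by
    intro j
    have h3 : x.2 j ^ 2 ≤ ∑ i, x.2 i ^ 2 :=
      Finset.single_le_sum (f := fun i => x.2 i ^ 2) (fun i _ => sq_nonneg _)
        (Finset.mem_univ j)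
    nlinarith [abs_nonneg (x.2 j), sq_abs (x.2 j)]
  rw [mem_closedBall_zero_iff, Prod.norm_def]
  refine max_le ?_ ?_
  · simpa [Real.norm_eq_abs] using h1
  · exact (pi_norm_le_iff_of_nonneg hε0).2 fun j => by simpa [Real.norm_eq_abs] using h2 j

lemma vol_Sball_one_ne_top (d : ℕ) : volume (Sball d 1) ≠ ⊤ :=
  ((measure_mono (Sball_subset_closedBall d zero_le_one le_rfl)).trans_lt
    measure_closedBall_lt_top).ne

lemma vol_Sball_one_pos (d : ℕ) : 0 < volume (Sball d 1) := by
  have hopen : IsOpen {x : ℝ × (Fin d → ℝ) | Pfun d x < 1} :=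
    isOpen_lt (Pfun_cont d) continuous_const
  have hne : {x : ℝ × (Fin d → ℝ) | Pfun d x < 1}.Nonempty := ⟨0, by simp [Pfun_zero]⟩
  calc (0 : ENNReal) < volume {x : ℝ × (Fin d → ℝ) | Pfun d x < 1} :=
        hopen.measure_pos volume hne
    _ ≤ volume (Sball d 1) :=
        measure_mono fun x (hx : Pfun d x < 1) => (le_of_lt hx : Pfun d x ≤ 1)

lemma prod_smul_apply {α β : Type*} [MeasurableSpace α] [MeasurableSpace β]
    (μ : Measure α) (ν : Measure β) [SFinite μ] [SFinite ν] (a b : ENNReal)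
    {s : Set (α × β)} (hs : MeasurableSet s) :
    ((a • μ).prod (b • ν)) s = a * b * (μ.prod ν) s := by
  rw [Measure.prod_apply hs, Measure.prod_apply hs, lintegral_smul_measure]
  simp only [Measure.smul_apply, smul_eq_mul]
  rw [lintegral_const_mul _ (measurable_measure_prodMk_left hs)]
  ring

lemma vol_Sball_eq (d : ℕ) {t : ℝ} (ht : 0 < t) :
    volume (Sball d t)
      = ENNReal.ofReal (t ^ ((d : ℝ) + 2)) * volume (Sball d 1) := by
  set f : ℝ → ℝ := fun a => (t⁻¹) ^ 2 * a with hf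
  set g : (Fin d → ℝ) → (Fin d → ℝ) := fun v => t⁻¹ • v with hg
  have hfm : Measurable f := (measurable_id.const_mul _)
  have hgm : Measurable g := measurable_const_smul _
  have hψ : Measurable (Prod.map f g) := hfm.prodMap hgm
  have hpre : Prod.map f g ⁻¹' (Sball d 1) = Sball d t := by
    ext x
    have hPψ : Pfun d (Prod.map f g x) = |t⁻¹| * Pfun d x := by
      have := Pfun_scale d t⁻¹ x
      simpa [Prod.map, hf, hg] using this
    simp only [Set.mem_preimage, Sball, Set.mem_setOf_eq, hPψ,
      abs_of_pos (inv_pos.2 ht)]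
    rw [inv_mul_le_iff₀ ht, mul_one]
  have hmap : volume (Sball d t) = (Measure.map (Prod.map f g) volume) (Sball d 1) := by
    rw [Measure.map_apply hψ (measurableSet_Sball d 1), hpre]
  rw [hmap, Measure.volume_eq_prod, ← Measure.map_prod_map _ _ hfm hgm]
  have hmf : Measure.map f volume = ENNReal.ofReal (t ^ 2) • volume := by
    rw [hf]
    rw [Real.map_volume_mul_left (by positivity : (t⁻¹ : ℝ) ^ 2 ≠ 0)]
    congr 1
    rw [abs_of_nonneg (by positivity)]
    congr 1
    field_simp
  have hmg : Measure.map g volume = ENNReal.ofReal (t ^ d) • volume := by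
    rw [hg, Measure.map_addHaar_smul volume (inv_ne_zero ht.ne')]
    congr 1
    rw [Module.finrank_fin_fun, abs_of_nonneg (by positivity)]
    congr 1
    field_simp
    rw [one_div, inv_pow, inv_mul_cancel₀ (pow_ne_zero _ ht.ne')]
  rw [hmf, hmg, prod_smul_apply volume volume _ _ (measurableSet_Sball d 1),
    ← Measure.volume_eq_prod]
  congr 1
  rw [← ENNReal.ofReal_mul (by positivity)]
  congr 1
  rw [← pow_add, ← Real.rpow_natCast t (2 + d)]
  congr 1
  push_cast
  ring

lemma vol_Sball_ne_top (d : ℕ) {t : ℝ} (ht : 0 < t) : volume (Sball d t) ≠ ⊤ := by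
  rw [vol_Sball_eq d ht]
  exact ENNReal.mul_ne_top ENNReal.ofReal_ne_top (vol_Sball_one_ne_top d)

lemma pow_rpow_comm (x : ℝ) (hx : 0 ≤ x) (k : ℕ) (r : ℝ) :
    (x ^ k) ^ r = (x ^ r) ^ k := by
  rw [← Real.rpow_natCast x k, ← Real.rpow_mul hx, mul_comm, Real.rpow_mul hx,
    Real.rpow_natCast]

set_option maxHeartbeats 1000000 in
/-- The key lintegral computation. -/
lemma key_lintegral (d : ℕ) {s ε : ℝ} (hs : 0 < s) (hε : 0 < ε) :
    (∫⁻ x in Sball d ε, ENNReal.ofReal (Pfun d x ^ (-s))) < ⊤ ↔ s < (d : ℝ) + 2 := by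
  set D : ℝ := (d : ℝ) + 2 with hD
  have hD0 : 0 < D := by rw [hD]; positivity
  set q : ℝ := 2⁻¹ with hq
  have hq0 : (0:ℝ) < q := by rw [hq]; norm_num
  have hq1 : q < 1 := by rw [hq]; norm_num
  set c := volume (Sball d 1) with hc
  have hc0 : c ≠ 0 := (vol_Sball_one_pos d).ne'
  have hcT : c ≠ ⊤ := vol_Sball_one_ne_top d
  set b : ℕ → ℝ := fun k => ε * q ^ k with hb
  have hb0 : ∀ k, 0 < b k := fun k => by simp only [hb]; positivity
  have hbanti : ∀ {i j : ℕ}, i ≤ j → b j ≤ b i := fun {i j} hij => by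
    simp only [hb]
    exact mul_le_mul_of_nonneg_left (pow_le_pow_of_le_one hq0.le hq1.le hij) hε.le
  have hb0eq : b 0 = ε := by simp [hb]
  have hbr : ∀ (k : ℕ) (r : ℝ), b k ^ r = ε ^ r * (q ^ r) ^ k := by
    intro k r
    simp only [hb]
    rw [Real.mul_rpow hε.le (pow_nonneg hq0.le k), pow_rpow_comm q hq0.le k r]
  have e1 : ε ^ (-s) * ε ^ D = ε ^ (D - s) := by
    rw [← Real.rpow_add hε, neg_add_eq_sub]
  have e2 : q ^ (-s) * q ^ D = q ^ (D - s) := by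
    rw [← Real.rpow_add hq0, neg_add_eq_sub]
  have h1q : 0 < 1 - q ^ D := by
    have := Real.rpow_lt_one hq0.le hq1 hD0
    linarith
  set A : ℕ → Set (ℝ × (Fin d → ℝ)) := fun k => Sball d (b k) \ Sball d (b (k+1)) with hA
  have hAmeas : ∀ k, MeasurableSet (A k) :=
    fun k => (measurableSet_Sball _ _).diff (measurableSet_Sball _ _)
  have hAmem : ∀ k x, x ∈ A k ↔ (Pfun d x ≤ b k ∧ b (k+1) < Pfun d x) := by
    intro k x
    simp [hA, Sball, not_le]
  have hdisj : Pairwise (Function.onFun Disjoint A) := by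
    rw [pairwise_disjoint_on]
    intro m n hmn
    rw [Set.disjoint_left]
    intro x hxm hxn
    have h1 : b n ≤ b (m+1) := hbanti hmn
    have h2 := ((hAmem m x).1 hxm).2
    have h3 := ((hAmem n x).1 hxn).1
    linarith
  have hcover : Sball d ε \ {0} = ⋃ k, A k := by
    ext x
    simp only [Set.mem_diff, Set.mem_singleton_iff, Set.mem_iUnion]
    constructor
    · rintro ⟨hxε, hx0⟩
      have hP0 : 0 < Pfun d x := Pfun_pos d hx0
      have hex : ∃ k, b (k+1) < Pfun d x := by
        obtain ⟨n, hn⟩ := exists_pow_lt_of_lt_one (div_pos hP0 hε) hq1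
        refine ⟨n, ?_⟩
        have h5 : q ^ (n+1) < Pfun d x / ε :=
          lt_of_le_of_lt (pow_le_pow_of_le_one hq0.le hq1.le (Nat.le_succ n)) hn
        have h6 := (lt_div_iff₀ hε).1 h5
        calc b (n+1) = q ^ (n+1) * ε := by simp only [hb]; ring
          _ < Pfun d x := h6
      refine ⟨Nat.find hex, (hAmem _ x).2 ⟨?_, Nat.find_spec hex⟩⟩
      rcases Nat.eq_zero_or_pos (Nat.find hex) with h0 | h0
      · rw [h0, hb0eq]
        exact hxε
      · have h6 := Nat.find_min hex (Nat.sub_lt h0 one_pos)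
        rw [not_lt] at h6
        have h9 : Nat.find hex - 1 + 1 = Nat.find hex := by omega
        rwa [h9] at h6
    · rintro ⟨k, hk⟩
      obtain ⟨h1, h2⟩ := (hAmem k x).1 hk
      refine ⟨le_trans h1 (le_trans (hbanti (Nat.zero_le k)) hb0eq.le), ?_⟩
      intro h0
      rw [h0, Pfun_zero] at h2
      exact absurd h2 (not_lt.2 (hb0 _).le)
  have hzero : volume ({(0 : ℝ × (Fin d → ℝ))} : Set _) = 0 := by
    have h7 : ({(0 : ℝ × (Fin d → ℝ))} : Set _)
        = ({0} : Set ℝ) ×ˢ ({0} : Set (Fin d → ℝ)) := by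
      rw [Set.singleton_prod_singleton]
      rfl
    rw [h7, Measure.volume_eq_prod, Measure.prod_prod, Real.volume_singleton, zero_mul]
  have hae : (Sball d ε : Set _) =ᵐ[volume] (Sball d ε \ {0} : Set _) :=
    (diff_ae_eq_self.2 (measure_mono_null Set.inter_subset_right hzero)).symm
  have hsplit : (∫⁻ x in Sball d ε, ENNReal.ofReal (Pfun d x ^ (-s)))
      = ∑' k, ∫⁻ x in A k, ENNReal.ofReal (Pfun d x ^ (-s)) := by
    rw [setLIntegral_congr hae, hcover, lintegral_iUnion hAmeas hdisj]
  have hvolS : ∀ k, volume (Sball d (b k)) = ENNReal.ofReal (b k ^ D) * c :=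
    fun k => vol_Sball_eq d (hb0 k)
  have hvolA : ∀ k, volume (A k) = ENNReal.ofReal (b k ^ D - b (k+1) ^ D) * c := by
    intro k
    have hsub : Sball d (b (k+1)) ⊆ Sball d (b k) :=
      fun x hx => le_trans hx (hbanti (Nat.le_succ k))
    have h8 : A k = Sball d (b k) \ Sball d (b (k+1)) := rfl
    rw [h8, measure_diff hsub (measurableSet_Sball _ _).nullMeasurableSet
        (vol_Sball_ne_top d (hb0 _)), hvolS, hvolS,
      ENNReal.ofReal_sub _ (Real.rpow_nonneg (hb0 (k+1)).le _),
      ENNReal.sub_mul (fun _ _ => hcT)]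
  have hfmeas : Measurable fun x : ℝ × (Fin d → ℝ) => ENNReal.ofReal (Pfun d x ^ (-s)) :=
    ((Pfun_cont d).measurable.pow measurable_const).ennreal_ofReal
  constructor
  · intro hfin
    by_contra hnot
    push_neg at hnot
    have hident : ∀ k, b k ^ (-s) * (b k ^ D - b (k+1) ^ D)
        = (ε ^ (D - s) * (1 - q ^ D)) * (q ^ (D - s)) ^ k := by
      intro k
      calc b k ^ (-s) * (b k ^ D - b (k+1) ^ D)
          = (ε ^ (-s) * ε ^ D) * ((q ^ (-s) * q ^ D) ^ k) * (1 - q ^ D) := by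
            rw [hbr k (-s), hbr k D, hbr (k+1) D, pow_succ, mul_pow]; ring
        _ = (ε ^ (D - s) * (1 - q ^ D)) * (q ^ (D - s)) ^ k := by rw [e1, e2]; ring
    have hlow : ∀ k, ENNReal.ofReal (ε ^ (D - s) * (1 - q ^ D)) * c
        ≤ ∫⁻ x in A k, ENNReal.ofReal (Pfun d x ^ (-s)) := by
      intro k
      have hreal : ε ^ (D - s) * (1 - q ^ D) ≤ b k ^ (-s) * (b k ^ D - b (k+1) ^ D) := by
        rw [hident k]
        have hone : (1:ℝ) ≤ q ^ (D - s) :=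
          Real.one_le_rpow_of_pos_of_le_one_of_nonpos hq0 hq1.le (by linarith)
        have honek : (1:ℝ) ≤ (q ^ (D - s)) ^ k := one_le_pow₀ hone
        have hnn : 0 ≤ ε ^ (D - s) * (1 - q ^ D) :=
          mul_nonneg (Real.rpow_pos_of_pos hε _).le h1q.le
        nlinarith
      calc ENNReal.ofReal (ε ^ (D - s) * (1 - q ^ D)) * c
          ≤ ENNReal.ofReal (b k ^ (-s) * (b k ^ D - b (k+1) ^ D)) * c :=
            mul_le_mul_left (ENNReal.ofReal_le_ofReal hreal) c
        _ = ENNReal.ofReal (b k ^ (-s)) * volume (A k) := by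
            rw [hvolA k, ENNReal.ofReal_mul (Real.rpow_nonneg (hb0 k).le _), mul_assoc]
        _ = ∫⁻ _ in A k, ENNReal.ofReal (b k ^ (-s)) := by
            rw [setLIntegral_const]
        _ ≤ ∫⁻ x in A k, ENNReal.ofReal (Pfun d x ^ (-s)) := by
            refine setLIntegral_mono hfmeas fun x hx => ?_
            obtain ⟨h1, h2⟩ := (hAmem k x).1 hx
            exact ENNReal.ofReal_le_ofReal
              (Real.rpow_le_rpow_of_nonpos (lt_trans (hb0 _) h2) h1 (neg_nonpos.2 hs.le))
    have hne : ENNReal.ofReal (ε ^ (D - s) * (1 - q ^ D)) * c ≠ 0 := by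
      refine mul_ne_zero ?_ hc0
      simp only [ne_eq, ENNReal.ofReal_eq_zero, not_le]
      exact mul_pos (Real.rpow_pos_of_pos hε _) h1q
    rw [hsplit] at hfin
    have htop : (⊤ : ENNReal) ≤ ∑' k, ∫⁻ x in A k, ENNReal.ofReal (Pfun d x ^ (-s)) :=
      le_trans (ENNReal.tsum_const_eq_top_of_ne_zero hne).ge (ENNReal.tsum_le_tsum hlow)
    exact absurd hfin (not_lt.2 htop)
  · intro hsD
    rw [hsplit]
    have hident : ∀ k, b (k+1) ^ (-s) * b k ^ D
        = (ε ^ (D - s) * q ^ (-s)) * (q ^ (D - s)) ^ k := by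
      intro k
      calc b (k+1) ^ (-s) * b k ^ D
          = (ε ^ (-s) * ε ^ D) * ((q ^ (-s) * q ^ D) ^ k) * q ^ (-s) := by
            rw [hbr (k+1) (-s), hbr k D, pow_succ, mul_pow]; ring
        _ = (ε ^ (D - s) * q ^ (-s)) * (q ^ (D - s)) ^ k := by rw [e1, e2]; ring
    have hup : ∀ k, (∫⁻ x in A k, ENNReal.ofReal (Pfun d x ^ (-s)))
        ≤ ENNReal.ofReal (ε ^ (D - s) * q ^ (-s)) * c * ENNReal.ofReal (q ^ (D - s)) ^ k := by
      intro k
      calc (∫⁻ x in A k, ENNReal.ofReal (Pfun d x ^ (-s)))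
          ≤ ∫⁻ _ in A k, ENNReal.ofReal (b (k+1) ^ (-s)) := by
            refine setLIntegral_mono measurable_const fun x hx => ?_
            obtain ⟨h1, h2⟩ := (hAmem k x).1 hx
            exact ENNReal.ofReal_le_ofReal
              (Real.rpow_le_rpow_of_nonpos (hb0 (k+1)) h2.le (neg_nonpos.2 hs.le))
        _ = ENNReal.ofReal (b (k+1) ^ (-s)) * volume (A k) := setLIntegral_const _ _
        _ ≤ ENNReal.ofReal (b (k+1) ^ (-s)) * volume (Sball d (b k)) :=
            mul_le_mul_right (measure_mono Set.diff_subset) _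
        _ = ENNReal.ofReal (b (k+1) ^ (-s) * b k ^ D) * c := by
            rw [hvolS, ENNReal.ofReal_mul (Real.rpow_nonneg (hb0 _).le _), mul_assoc]
        _ = ENNReal.ofReal ((ε ^ (D - s) * q ^ (-s)) * (q ^ (D - s)) ^ k) * c := by
            rw [hident k]
        _ = ENNReal.ofReal (ε ^ (D - s) * q ^ (-s)) * c * ENNReal.ofReal (q ^ (D - s)) ^ k := by
            rw [ENNReal.ofReal_mul (mul_nonneg (Real.rpow_pos_of_pos hε _).le
                (Real.rpow_pos_of_pos hq0 _).le),
              ENNReal.ofReal_pow (Real.rpow_pos_of_pos hq0 _).le]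
            ring
    have hρ : ENNReal.ofReal (q ^ (D - s)) < 1 := by
      rw [ENNReal.ofReal_lt_one]
      exact Real.rpow_lt_one hq0.le hq1 (by linarith)
    calc (∑' k, ∫⁻ x in A k, ENNReal.ofReal (Pfun d x ^ (-s)))
        ≤ ∑' k, ENNReal.ofReal (ε ^ (D - s) * q ^ (-s)) * c * ENNReal.ofReal (q ^ (D - s)) ^ k :=
          ENNReal.tsum_le_tsum hup
      _ = ENNReal.ofReal (ε ^ (D - s) * q ^ (-s)) * c
            * ∑' k : ℕ, ENNReal.ofReal (q ^ (D - s)) ^ k := by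
          rw [ENNReal.tsum_mul_left]
      _ < ⊤ := by
          rw [ENNReal.tsum_geometric]
          refine ENNReal.mul_lt_top (ENNReal.mul_lt_top ENNReal.ofReal_lt_top hcT.lt_top) ?_
          rw [ENNReal.inv_lt_top, tsub_pos_iff_lt]
          exact hρ

set_option maxHeartbeats 1000000 in
/-- With the anisotropic pseudo-norm
`‖x‖ = (x₀² + (x₁² + ⋯ + x_d²)²)^{1/4}` on `ℝ^{d+1}`, the function `y ↦ ‖y‖^{−s}`
is Lebesgue integrable on the unit ball `{‖y‖ ≤ 1}` iff `s < d + 2`; in particular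
`y ↦ ‖y‖^{−(d+2)}` is not integrable on any neighborhood of the origin. -/
theorem stmt8 (d : ℕ) (hd : 1 ≤ d) (s : ℝ)
    (pnorm : (ℝ × (Fin d → ℝ)) → ℝ)
    (hpnorm : pnorm = fun x => (x.1 ^ 2 + (∑ j, x.2 j ^ 2) ^ 2) ^ (1 / 4 : ℝ)) :
    (IntegrableOn (fun y => pnorm y ^ (-s)) {y | pnorm y ≤ 1} ↔ s < (d : ℝ) + 2) ∧
    (∀ V ∈ nhds (0 : ℝ × (Fin d → ℝ)),
      ¬ IntegrableOn (fun y => pnorm y ^ (-((d : ℝ) + 2))) V) := by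
  have hP : pnorm = Pfun d := hpnorm
  rw [hP]
  have hDpos : (0 : ℝ) < (d : ℝ) + 2 := by positivity
  have hmeas : ∀ r : ℝ, Measurable fun y => Pfun d y ^ r := fun r =>
    (Pfun_cont d).measurable.pow measurable_const
  have hnonneg : ∀ (r : ℝ) (y : ℝ × (Fin d → ℝ)), 0 ≤ Pfun d y ^ r := fun r y =>
    Real.rpow_nonneg (Pfun_nonneg d y) _
  have hInt : ∀ (r : ℝ) (t : ℝ),
      IntegrableOn (fun y => Pfun d y ^ (-r)) (Sball d t) ↔
      (∫⁻ x in Sball d t, ENNReal.ofReal (Pfun d x ^ (-r))) < ⊤ := by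
    intro r t
    constructor
    · intro h
      have := h.hasFiniteIntegral
      rwa [hasFiniteIntegral_iff_ofReal (Filter.Eventually.of_forall fun y => hnonneg _ y)]
        at this
    · intro h
      refine ⟨(hmeas (-r)).aestronglyMeasurable, ?_⟩
      rwa [hasFiniteIntegral_iff_ofReal (Filter.Eventually.of_forall fun y => hnonneg _ y)]
  constructor
  · show IntegrableOn (fun y => Pfun d y ^ (-s)) (Sball d 1) volume ↔ s < (d : ℝ) + 2
    rw [hInt s 1]
    rcases le_or_gt s 0 with hs | hs
    · constructor
      · intro _; linarith
      · intro _
        calc (∫⁻ x in Sball d 1, ENNReal.ofReal (Pfun d x ^ (-s)))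
            ≤ ∫⁻ _ in Sball d 1, 1 := by
              refine setLIntegral_mono measurable_const fun x hx => ?_
              have : Pfun d x ^ (-s) ≤ 1 :=
                Real.rpow_le_one (Pfun_nonneg d x) hx (by linarith)
              calc ENNReal.ofReal (Pfun d x ^ (-s)) ≤ ENNReal.ofReal 1 :=
                    ENNReal.ofReal_le_ofReal this
                _ = 1 := ENNReal.ofReal_one
          _ = volume (Sball d 1) := by rw [setLIntegral_const, one_mul]
          _ < ⊤ := (vol_Sball_one_ne_top d).lt_top
    · exact key_lintegral d hs one_pos
  · intro V hV hint
    obtain ⟨δ, hδ, hball⟩ := Metric.mem_nhds_iff.1 hV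
    set ε := min (δ / 2) 1 with hε
    have hε0 : 0 < ε := lt_min (by linarith) one_pos
    have hε1 : ε ≤ 1 := min_le_right _ _
    have hsub : Sball d ε ⊆ V := by
      refine (Sball_subset_closedBall d hε0.le hε1).trans ?_
      refine (Metric.closedBall_subset_ball ?_).trans hball
      calc ε ≤ δ / 2 := min_le_left _ _
        _ < δ := by linarith
    have hint' : IntegrableOn (fun y => Pfun d y ^ (-((d : ℝ) + 2))) (Sball d ε) :=
      hint.mono_set hsub
    rw [hInt ((d : ℝ) + 2) ε, key_lintegral d hDpos hε0] at hint'
    exact lt_irrefl _ hint'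
end

section
/- Let n ≥ 1 and ω ∈ ℝ with ω ≠ 0. Define k̂₀ : ℝ^{2n} × (0, ∞) → ℝ by k̂₀(x, t) = (2πt)^{−n} (tω / sinh(tω))^n exp(−(ω / (2 tanh(tω))) |x|²). Then k̂₀ is smooth and for all x ∈ ℝ^{2n} and t > 0 it satisfies the heat equation of the twisted harmonic oscillator: ∂_t k̂₀ = ½ ∑_{j=1}^n (∂_{x_j} − i ω x_{n+j})² k̂₀ + ½ ∑_{j=1}^n (∂_{x_{n+j}} + i ω x_j)² k̂₀, where (∂_{x_j} − i ω x_{n+j})² means the first-order operator f ↦ ∂_{x_j} f − i ω x_{n+j} f applied twice (and similarly for the other summands). -/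
open Real Filter Complex

namespace Stmt11Aux

abbrev PT (n : ℕ) := ((Fin n → ℝ) × (Fin n → ℝ)) × ℝ

/-- Directional derivative via a line derivative. -/
lemma line_fderiv {E F : Type*} [NormedAddCommGroup E] [NormedSpace ℝ E]
    [NormedAddCommGroup F] [NormedSpace ℝ F] {f : E → F} {p v : E} {m : F}
    (hf : DifferentiableAt ℝ f p)
    (h : HasDerivAt (fun s : ℝ => f (p + s • v)) m 0) : fderiv ℝ f p v = m := by
  have hc : HasDerivAt (fun s : ℝ => p + s • v) v 0 := by
    simpa using ((hasDerivAt_id (0 : ℝ)).smul_const v).const_add p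
  have hf' : HasFDerivAt f (fderiv ℝ f p) ((fun s : ℝ => p + s • v) 0) := by
    simpa using hf.hasFDerivAt
  have h2 := hf'.comp_hasDerivAt 0 hc
  simpa using h2.unique h

noncomputable def SS (n : ℕ) (q : (Fin n → ℝ) × (Fin n → ℝ)) : ℝ :=
  (∑ j, q.1 j ^ 2) + ∑ j, q.2 j ^ 2

noncomputable def gg (ω t : ℝ) : ℝ := -(ω * Real.cosh (t * ω) / (2 * Real.sinh (t * ω)))

noncomputable def aa (n : ℕ) (ω t : ℝ) : ℝ :=
  ((2 * Real.pi) ^ n)⁻¹ * (ω / Real.sinh (t * ω)) ^ n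

noncomputable def G (n : ℕ) (ω : ℝ) (p : PT n) : ℝ :=
  aa n ω p.2 * Real.exp (gg ω p.2 * SS n p.1)

noncomputable def KF (n : ℕ) (ω : ℝ) (p : PT n) : ℂ :=
  ((((2 * Real.pi * p.2) ^ n)⁻¹ * (p.2 * ω / Real.sinh (p.2 * ω)) ^ n *
      Real.exp (-(ω / (2 * Real.tanh (p.2 * ω))) *
        ((∑ j, p.1.1 j ^ 2) + ∑ j, p.1.2 j ^ 2)) : ℝ) : ℂ)

lemma gg_eq (ω t : ℝ) : -(ω / (2 * Real.tanh (t * ω))) = gg ω t := by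
  rw [Real.tanh_eq_sinh_div_cosh, gg,
    show (2 : ℝ) * (Real.sinh (t * ω) / Real.cosh (t * ω))
        = 2 * Real.sinh (t * ω) / Real.cosh (t * ω) from (mul_div_assoc _ _ _).symm,
    div_div_eq_mul_div]

lemma sinh_ne (ω : ℝ) (hω : ω ≠ 0) {t : ℝ} (ht : t ≠ 0) : Real.sinh (t * ω) ≠ 0 :=
  Real.sinh_ne_zero.2 (mul_ne_zero ht hω)

lemma F_eq_G (n : ℕ) (ω : ℝ) (hω : ω ≠ 0) {p : PT n} (ht : p.2 ≠ 0) :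
    ((2 * Real.pi * p.2) ^ n)⁻¹ * (p.2 * ω / Real.sinh (p.2 * ω)) ^ n *
        Real.exp (-(ω / (2 * Real.tanh (p.2 * ω))) * SS n p.1) = G n ω p := by
  rw [gg_eq, G]
  congr 1
  have hs := sinh_ne ω hω ht
  rw [aa, mul_pow, mul_pow, div_pow, div_pow, mul_pow]
  field_simp

lemma KF_eq (n : ℕ) (ω : ℝ) (hω : ω ≠ 0) {p : PT n} (ht : p.2 ≠ 0) :
    KF n ω p = ((G n ω p : ℝ) : ℂ) := by
  rw [KF]
  exact congrArg _ (F_eq_G n ω hω ht)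

/-! ### one-dimensional derivatives -/

lemma hasDerivAt_sinh_mul (ω t : ℝ) :
    HasDerivAt (fun u => Real.sinh (u * ω)) (Real.cosh (t * ω) * ω) t := by
  have := (Real.hasDerivAt_sinh (t * ω)).comp t ((hasDerivAt_id t).mul_const ω)
  simp only [one_mul] at this
  exact this

lemma hasDerivAt_cosh_mul (ω t : ℝ) :
    HasDerivAt (fun u => Real.cosh (u * ω)) (Real.sinh (t * ω) * ω) t := by
  have := (Real.hasDerivAt_cosh (t * ω)).comp t ((hasDerivAt_id t).mul_const ω)
  simp only [one_mul] at this
  exact this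

lemma hasDerivAt_gg (ω : ℝ) (hω : ω ≠ 0) {t : ℝ} (ht : t ≠ 0) :
    HasDerivAt (gg ω) (2 * gg ω t ^ 2 - ω ^ 2 / 2) t := by
  have hs : Real.sinh (t * ω) ≠ 0 := sinh_ne ω hω ht
  have hnum : HasDerivAt (fun u => ω * Real.cosh (u * ω))
      (ω * (Real.sinh (t * ω) * ω)) t := (hasDerivAt_cosh_mul ω t).const_mul ω
  have hden : HasDerivAt (fun u => 2 * Real.sinh (u * ω))
      (2 * (Real.cosh (t * ω) * ω)) t := (hasDerivAt_sinh_mul ω t).const_mul 2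
  have h := (hnum.div hden (by simpa using hs)).neg
  refine h.congr_deriv (Eq.symm ?_)
  have hcs := Real.cosh_sq_sub_sinh_sq (t * ω)
  rw [gg]
  field_simp
  nlinarith [hcs]

lemma hasDerivAt_aa (n : ℕ) (hn : 1 ≤ n) (ω : ℝ) (hω : ω ≠ 0) {t : ℝ} (ht : t ≠ 0) :
    HasDerivAt (aa n ω) (2 * n * gg ω t * aa n ω t) t := by
  obtain ⟨m, rfl⟩ : ∃ m, n = m + 1 := ⟨n - 1, (Nat.succ_pred_eq_of_pos hn).symm⟩
  have hs : Real.sinh (t * ω) ≠ 0 := sinh_ne ω hω ht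
  have hq : HasDerivAt (fun u => ω / Real.sinh (u * ω))
      ((0 * Real.sinh (t * ω) - ω * (Real.cosh (t * ω) * ω)) / Real.sinh (t * ω) ^ 2) t :=
    (hasDerivAt_const t ω).div (hasDerivAt_sinh_mul ω t) hs
  have h := (hq.pow (m + 1)).const_mul (((2 * Real.pi) ^ (m + 1))⁻¹ : ℝ)
  refine h.congr_deriv (Eq.symm ?_)
  have hm : m + 1 - 1 = m := rfl
  rw [hm, gg, aa]
  field_simp
  have hs' : Real.sinh (ω * t) ≠ 0 := by rwa [mul_comm]
  have key : Real.sinh (ω * t) * (ω / Real.sinh (ω * t)) = ω := by field_simp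
  linear_combination (-(ω * Real.cosh (ω * t) * (ω / Real.sinh (ω * t)) ^ m)) * key

/-! ### sums of squares along coordinate lines -/

lemma sum_sq_single {n : ℕ} (x : Fin n → ℝ) (j : Fin n) (s : ℝ) :
    ∑ i, (x i + s * (Pi.single j (1:ℝ) : Fin n → ℝ) i) ^ 2
      = (∑ i, x i ^ 2) + (2 * x j * s + s ^ 2) := by
  have h : ∀ i : Fin n, (x i + s * (Pi.single j (1:ℝ) : Fin n → ℝ) i) ^ 2
      = x i ^ 2 + (if i = j then 2 * x j * s + s ^ 2 else 0) := by
    intro i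
    rcases eq_or_ne i j with h | h
    · subst h; simp [Pi.single_apply]; ring
    · simp [Pi.single_apply, h]
  rw [Finset.sum_congr rfl fun i _ => h i, Finset.sum_add_distrib,
    Finset.sum_ite_eq' Finset.univ j]
  simp

lemma SS_line1 {n : ℕ} (x y : Fin n → ℝ) (j : Fin n) (s : ℝ) :
    SS n (x + s • (Pi.single j (1:ℝ) : Fin n → ℝ), y)
      = SS n (x, y) + (2 * x j * s + s ^ 2) := by
  simp only [SS]
  have := sum_sq_single x j s
  simp only [Pi.add_apply, Pi.smul_apply, smul_eq_mul] at *
  rw [this]; ring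

lemma SS_line2 {n : ℕ} (x y : Fin n → ℝ) (j : Fin n) (s : ℝ) :
    SS n (x, y + s • (Pi.single j (1:ℝ) : Fin n → ℝ))
      = SS n (x, y) + (2 * y j * s + s ^ 2) := by
  simp only [SS]
  have := sum_sq_single y j s
  simp only [Pi.add_apply, Pi.smul_apply, smul_eq_mul] at *
  rw [this]; ring

/-! ### smoothness -/

lemma isOpen_V (n : ℕ) : IsOpen {p : PT n | p.2 ≠ 0} :=
  isOpen_ne.preimage continuous_snd

lemma contDiff_SS (n : ℕ) : ContDiff ℝ (⊤ : ℕ∞) (SS n) := by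
  apply ContDiff.add
  · exact ContDiff.sum fun j _ => (contDiff_pi.mp contDiff_fst j).pow 2
  · exact ContDiff.sum fun j _ => (contDiff_pi.mp contDiff_snd j).pow 2

lemma contDiffOn_G (n : ℕ) (ω : ℝ) (hω : ω ≠ 0) :
    ContDiffOn ℝ (⊤ : ℕ∞) (G n ω) {p : PT n | p.2 ≠ 0} := by
  have hsinh : ContDiff ℝ (⊤ : ℕ∞) (fun p : PT n => Real.sinh (p.2 * ω)) :=
    Real.contDiff_sinh.comp (contDiff_snd.mul contDiff_const)
  have hcosh : ContDiff ℝ (⊤ : ℕ∞) (fun p : PT n => Real.cosh (p.2 * ω)) :=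
    Real.contDiff_cosh.comp (contDiff_snd.mul contDiff_const)
  have hne : ∀ p ∈ {p : PT n | p.2 ≠ 0}, Real.sinh (p.2 * ω) ≠ 0 :=
    fun p hp => sinh_ne ω hω hp
  have hne2 : ∀ p ∈ {p : PT n | p.2 ≠ 0}, 2 * Real.sinh (p.2 * ω) ≠ 0 :=
    fun p hp => by simpa using sinh_ne ω hω hp
  have haa : ContDiffOn ℝ (⊤ : ℕ∞) (fun p : PT n => aa n ω p.2) {p | p.2 ≠ 0} :=
    contDiffOn_const.mul ((contDiffOn_const.div hsinh.contDiffOn hne).pow n)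
  have hgg : ContDiffOn ℝ (⊤ : ℕ∞) (fun p : PT n => gg ω p.2) {p | p.2 ≠ 0} :=
    (((contDiff_const.mul hcosh).contDiffOn).div
      ((contDiff_const.mul hsinh).contDiffOn) hne2).neg
  exact haa.mul (((hgg.mul ((contDiff_SS n).comp contDiff_fst).contDiffOn)).exp)

lemma diff_G (n : ℕ) (ω : ℝ) (hω : ω ≠ 0) {p : PT n} (hp : p.2 ≠ 0) :
    DifferentiableAt ℝ (G n ω) p :=
  ((contDiffOn_G n ω hω).contDiffAt ((isOpen_V n).mem_nhds hp)).differentiableAt (by simp)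

lemma smooth_part (n : ℕ) (ω : ℝ) (hω : ω ≠ 0) :
    ContDiffOn ℝ (⊤ : ℕ∞) (KF n ω) {p : PT n | 0 < p.2} := by
  have hsub : {p : PT n | 0 < p.2} ⊆ {p : PT n | p.2 ≠ 0} := fun p hp => ne_of_gt hp
  have hF : ContDiffOn ℝ (⊤ : ℕ∞)
      (fun p : PT n => ((2 * Real.pi * p.2) ^ n)⁻¹ * (p.2 * ω / Real.sinh (p.2 * ω)) ^ n *
        Real.exp (-(ω / (2 * Real.tanh (p.2 * ω))) * SS n p.1)) {p : PT n | 0 < p.2} :=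
    ((contDiffOn_G n ω hω).mono hsub).congr
      (fun p hp => F_eq_G n ω hω (ne_of_gt hp))
  exact Complex.ofRealCLM.contDiff.comp_contDiffOn hF


/-! ### directional derivatives of G -/

variable {n : ℕ} {ω : ℝ}

lemma exp_line_hasDerivAt (c S0 xj : ℝ) :
    HasDerivAt (fun s : ℝ => c * Real.exp (gg ω t0 * (S0 + (2 * xj * s + s ^ 2))))
      (c * (Real.exp (gg ω t0 * S0) * (gg ω t0 * (2 * xj)))) 0 := by
  have h1 : HasDerivAt (fun s : ℝ => S0 + (2 * xj * s + s ^ 2)) (2 * xj) 0 := by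
    have h := (((hasDerivAt_id (0 : ℝ)).const_mul (2 * xj)).add
      (hasDerivAt_pow 2 (0 : ℝ))).const_add S0
    simpa using h
  have h2 := ((h1.const_mul (gg ω t0)).exp).const_mul c
  simpa using h2

lemma fderiv_G_e1 (hω : ω ≠ 0) {x y : Fin n → ℝ} {t : ℝ} (ht : t ≠ 0) (j : Fin n) :
    fderiv ℝ (G n ω) ((x, y), t) ((Pi.single j (1:ℝ), 0), 0)
      = 2 * gg ω t * x j * G n ω ((x, y), t) := by
  apply line_fderiv (diff_G n ω hω ht)
  have key : (fun s : ℝ => G n ω (((x, y), t) + s • (((Pi.single j (1:ℝ) : Fin n → ℝ), (0 : Fin n → ℝ)), (0:ℝ))))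
      = fun s : ℝ => aa n ω t * Real.exp (gg ω t * (SS n (x, y) + (2 * x j * s + s ^ 2))) := by
    funext s
    rw [show (((x, y), t) + s • (((Pi.single j (1:ℝ) : Fin n → ℝ), (0 : Fin n → ℝ)), (0:ℝ)) : PT n)
        = ((x + s • (Pi.single j (1:ℝ) : Fin n → ℝ), y), t) by simp]
    simp only [G]
    rw [SS_line1]
  rw [key]
  refine (exp_line_hasDerivAt (ω := ω) (t0 := t) (aa n ω t) (SS n (x, y)) (x j)).congr_deriv (Eq.symm ?_)
  simp only [G]; ring

lemma fderiv_G_e2 (hω : ω ≠ 0) {x y : Fin n → ℝ} {t : ℝ} (ht : t ≠ 0) (j : Fin n) :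
    fderiv ℝ (G n ω) ((x, y), t) ((0, Pi.single j (1:ℝ)), 0)
      = 2 * gg ω t * y j * G n ω ((x, y), t) := by
  apply line_fderiv (diff_G n ω hω ht)
  have key : (fun s : ℝ => G n ω (((x, y), t) + s • (((0 : Fin n → ℝ), (Pi.single j (1:ℝ) : Fin n → ℝ)), (0:ℝ))))
      = fun s : ℝ => aa n ω t * Real.exp (gg ω t * (SS n (x, y) + (2 * y j * s + s ^ 2))) := by
    funext s
    rw [show (((x, y), t) + s • (((0 : Fin n → ℝ), (Pi.single j (1:ℝ) : Fin n → ℝ)), (0:ℝ)) : PT n)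
        = ((x, y + s • (Pi.single j (1:ℝ) : Fin n → ℝ)), t) by simp]
    simp only [G]
    rw [SS_line2]
  rw [key]
  refine (exp_line_hasDerivAt (ω := ω) (t0 := t) (aa n ω t) (SS n (x, y)) (y j)).congr_deriv (Eq.symm ?_)
  simp only [G]; ring

lemma fderiv_G_et (hn : 1 ≤ n) (hω : ω ≠ 0) {x y : Fin n → ℝ} {t : ℝ} (ht : t ≠ 0) :
    fderiv ℝ (G n ω) ((x, y), t) ((0, 0), 1)
      = (2 * n * gg ω t + (2 * gg ω t ^ 2 - ω ^ 2 / 2) * SS n (x, y)) * G n ω ((x, y), t) := by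
  apply line_fderiv (diff_G n ω hω ht)
  have key : (fun s : ℝ => G n ω (((x, y), t) + s • (((0 : Fin n → ℝ), (0 : Fin n → ℝ)), (1:ℝ))))
      = fun s : ℝ => aa n ω (t + s) * Real.exp (gg ω (t + s) * SS n (x, y)) := by
    funext s
    rw [show (((x, y), t) + s • (((0 : Fin n → ℝ), (0 : Fin n → ℝ)), (1:ℝ)) : PT n) = ((x, y), t + s) by simp]
    simp only [G]
  rw [key]
  have ha := hasDerivAt_aa n hn ω hω ht
  have hg := hasDerivAt_gg ω hω ht
  have h2 := ha.mul ((hg.mul_const (SS n (x, y))).exp)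
  have h2' : HasDerivAt (fun u => aa n ω u * Real.exp (gg ω u * SS n (x, y)))
      (2 * ↑n * gg ω t * aa n ω t * Real.exp (gg ω t * SS n (x, y)) +
        aa n ω t * (Real.exp (gg ω t * SS n (x, y)) *
          ((2 * gg ω t ^ 2 - ω ^ 2 / 2) * SS n (x, y)))) (t + 0) := by
    rw [add_zero]; exact h2
  have h3 := h2'.comp 0 ((hasDerivAt_id (0 : ℝ)).const_add t)
  refine h3.congr_deriv (Eq.symm ?_)
  simp only [G]; ring

/-! ### auxiliary first-derivative functions and their derivatives -/

noncomputable def P1 (n : ℕ) (ω : ℝ) (j : Fin n) (q : PT n) : ℝ :=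
  2 * gg ω q.2 * q.1.1 j * G n ω q

noncomputable def P2 (n : ℕ) (ω : ℝ) (j : Fin n) (q : PT n) : ℝ :=
  2 * gg ω q.2 * q.1.2 j * G n ω q

noncomputable def R1 (n : ℕ) (ω : ℝ) (j : Fin n) (q : PT n) : ℝ :=
  q.1.2 j * G n ω q

noncomputable def R2 (n : ℕ) (ω : ℝ) (j : Fin n) (q : PT n) : ℝ :=
  q.1.1 j * G n ω q

lemma diff_ggsnd (hω : ω ≠ 0) {p : PT n} (hp : p.2 ≠ 0) :
    DifferentiableAt ℝ (fun q : PT n => gg ω q.2) p :=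
  ((hasDerivAt_gg ω hω hp).differentiableAt).comp p differentiableAt_snd

lemma diff_coord1 (j : Fin n) (p : PT n) :
    DifferentiableAt ℝ (fun q : PT n => q.1.1 j) p :=
  (((contDiff_pi.mp (contDiff_fst.comp contDiff_fst) j)).differentiable
    one_ne_zero).differentiableAt

lemma diff_coord2 (j : Fin n) (p : PT n) :
    DifferentiableAt ℝ (fun q : PT n => q.1.2 j) p :=
  (((contDiff_pi.mp (contDiff_snd.comp contDiff_fst) j)).differentiable
    one_ne_zero).differentiableAt

lemma diff_P1 (hω : ω ≠ 0) (j : Fin n) {p : PT n} (hp : p.2 ≠ 0) :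
    DifferentiableAt ℝ (P1 n ω j) p :=
  (((diff_ggsnd hω hp).const_mul 2).mul (diff_coord1 j p)).mul (diff_G n ω hω hp)

lemma diff_P2 (hω : ω ≠ 0) (j : Fin n) {p : PT n} (hp : p.2 ≠ 0) :
    DifferentiableAt ℝ (P2 n ω j) p :=
  (((diff_ggsnd hω hp).const_mul 2).mul (diff_coord2 j p)).mul (diff_G n ω hω hp)

lemma diff_R1 (hω : ω ≠ 0) (j : Fin n) {p : PT n} (hp : p.2 ≠ 0) :
    DifferentiableAt ℝ (R1 n ω j) p :=
  (diff_coord2 j p).mul (diff_G n ω hω hp)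

lemma diff_R2 (hω : ω ≠ 0) (j : Fin n) {p : PT n} (hp : p.2 ≠ 0) :
    DifferentiableAt ℝ (R2 n ω j) p :=
  (diff_coord1 j p).mul (diff_G n ω hω hp)

lemma fderiv_P1_e1 (hω : ω ≠ 0) {x y : Fin n → ℝ} {t : ℝ} (ht : t ≠ 0) (j : Fin n) :
    fderiv ℝ (P1 n ω j) ((x, y), t) ((Pi.single j (1:ℝ), 0), 0)
      = (2 * gg ω t + (2 * gg ω t * x j) ^ 2) * G n ω ((x, y), t) := by
  apply line_fderiv (diff_P1 hω j ht)
  have key : (fun s : ℝ => P1 n ω j (((x, y), t) + s • (((Pi.single j (1:ℝ) : Fin n → ℝ), (0 : Fin n → ℝ)), (0:ℝ))))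
      = fun s : ℝ => (2 * gg ω t * (x j + s)) *
          (aa n ω t * Real.exp (gg ω t * (SS n (x, y) + (2 * x j * s + s ^ 2)))) := by
    funext s
    rw [show (((x, y), t) + s • (((Pi.single j (1:ℝ) : Fin n → ℝ), (0 : Fin n → ℝ)), (0:ℝ)) : PT n)
        = ((x + s • (Pi.single j (1:ℝ) : Fin n → ℝ), y), t) by simp]
    simp only [P1, G]
    rw [SS_line1]
    simp [Pi.single_apply] <;> ring
  rw [key]
  have hlin : HasDerivAt (fun s : ℝ => 2 * gg ω t * (x j + s)) (2 * gg ω t) 0 := by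
    simpa using ((hasDerivAt_id (0 : ℝ)).const_add (x j)).const_mul (2 * gg ω t)
  have h := hlin.mul (exp_line_hasDerivAt (ω := ω) (t0 := t) (aa n ω t) (SS n (x, y)) (x j))
  refine h.congr_deriv (Eq.symm ?_)
  simp only [G]; ring

lemma fderiv_P2_e2 (hω : ω ≠ 0) {x y : Fin n → ℝ} {t : ℝ} (ht : t ≠ 0) (j : Fin n) :
    fderiv ℝ (P2 n ω j) ((x, y), t) ((0, Pi.single j (1:ℝ)), 0)
      = (2 * gg ω t + (2 * gg ω t * y j) ^ 2) * G n ω ((x, y), t) := by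
  apply line_fderiv (diff_P2 hω j ht)
  have key : (fun s : ℝ => P2 n ω j (((x, y), t) + s • (((0 : Fin n → ℝ), (Pi.single j (1:ℝ) : Fin n → ℝ)), (0:ℝ))))
      = fun s : ℝ => (2 * gg ω t * (y j + s)) *
          (aa n ω t * Real.exp (gg ω t * (SS n (x, y) + (2 * y j * s + s ^ 2)))) := by
    funext s
    rw [show (((x, y), t) + s • (((0 : Fin n → ℝ), (Pi.single j (1:ℝ) : Fin n → ℝ)), (0:ℝ)) : PT n)
        = ((x, y + s • (Pi.single j (1:ℝ) : Fin n → ℝ)), t) by simp]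
    simp only [P2, G]
    rw [SS_line2]
    simp [Pi.single_apply] <;> ring
  rw [key]
  have hlin : HasDerivAt (fun s : ℝ => 2 * gg ω t * (y j + s)) (2 * gg ω t) 0 := by
    simpa using ((hasDerivAt_id (0 : ℝ)).const_add (y j)).const_mul (2 * gg ω t)
  have h := hlin.mul (exp_line_hasDerivAt (ω := ω) (t0 := t) (aa n ω t) (SS n (x, y)) (y j))
  refine h.congr_deriv (Eq.symm ?_)
  simp only [G]; ring

lemma fderiv_R1_e1 (hω : ω ≠ 0) {x y : Fin n → ℝ} {t : ℝ} (ht : t ≠ 0) (j : Fin n) :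
    fderiv ℝ (R1 n ω j) ((x, y), t) ((Pi.single j (1:ℝ), 0), 0)
      = y j * (2 * gg ω t * x j * G n ω ((x, y), t)) := by
  apply line_fderiv (diff_R1 hω j ht)
  have key : (fun s : ℝ => R1 n ω j (((x, y), t) + s • (((Pi.single j (1:ℝ) : Fin n → ℝ), (0 : Fin n → ℝ)), (0:ℝ))))
      = fun s : ℝ => y j *
          (aa n ω t * Real.exp (gg ω t * (SS n (x, y) + (2 * x j * s + s ^ 2)))) := by
    funext s
    rw [show (((x, y), t) + s • (((Pi.single j (1:ℝ) : Fin n → ℝ), (0 : Fin n → ℝ)), (0:ℝ)) : PT n)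
        = ((x + s • (Pi.single j (1:ℝ) : Fin n → ℝ), y), t) by simp]
    simp only [R1, G]
    rw [SS_line1]
  rw [key]
  have h := (exp_line_hasDerivAt (ω := ω) (t0 := t) (aa n ω t) (SS n (x, y)) (x j)).const_mul (y j)
  refine h.congr_deriv (Eq.symm ?_)
  simp only [G]; ring

lemma fderiv_R2_e2 (hω : ω ≠ 0) {x y : Fin n → ℝ} {t : ℝ} (ht : t ≠ 0) (j : Fin n) :
    fderiv ℝ (R2 n ω j) ((x, y), t) ((0, Pi.single j (1:ℝ)), 0)
      = x j * (2 * gg ω t * y j * G n ω ((x, y), t)) := by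
  apply line_fderiv (diff_R2 hω j ht)
  have key : (fun s : ℝ => R2 n ω j (((x, y), t) + s • (((0 : Fin n → ℝ), (Pi.single j (1:ℝ) : Fin n → ℝ)), (0:ℝ))))
      = fun s : ℝ => x j *
          (aa n ω t * Real.exp (gg ω t * (SS n (x, y) + (2 * y j * s + s ^ 2)))) := by
    funext s
    rw [show (((x, y), t) + s • (((0 : Fin n → ℝ), (Pi.single j (1:ℝ) : Fin n → ℝ)), (0:ℝ)) : PT n)
        = ((x, y + s • (Pi.single j (1:ℝ) : Fin n → ℝ)), t) by simp]
    simp only [R2, G]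
    rw [SS_line2]
  rw [key]
  have h := (exp_line_hasDerivAt (ω := ω) (t0 := t) (aa n ω t) (SS n (x, y)) (y j)).const_mul (x j)
  refine h.congr_deriv (Eq.symm ?_)
  simp only [G]; ring


/-! ### the PDE -/

lemma hD1K (hω : ω ≠ 0) (j : Fin n) {q : PT n} (hq : q.2 ≠ 0) :
    fderiv ℝ (KF n ω) q (((Pi.single j (1:ℝ) : Fin n → ℝ), (0 : Fin n → ℝ)), (0:ℝ))
      = ((P1 n ω j q : ℝ) : ℂ) := by
  have hEV : KF n ω =ᶠ[nhds q] (fun p => ((G n ω p : ℝ) : ℂ)) := by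
    filter_upwards [(isOpen_V n).mem_nhds hq] with p hp
    exact KF_eq n ω hω hp
  rw [hEV.fderiv_eq]
  have hco := (Complex.ofRealCLM.hasFDerivAt.comp q (diff_G n ω hω hq).hasFDerivAt).fderiv
  rw [show (fun p => ((G n ω p : ℝ) : ℂ)) = (Complex.ofRealCLM ∘ G n ω) from rfl, hco]
  obtain ⟨⟨xq, yq⟩, tq⟩ := q
  simp only [ContinuousLinearMap.coe_comp', Function.comp_apply, Complex.ofRealCLM_apply]
  rw [fderiv_G_e1 hω hq j]
  rfl

lemma hD2K (hω : ω ≠ 0) (j : Fin n) {q : PT n} (hq : q.2 ≠ 0) :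
    fderiv ℝ (KF n ω) q (((0 : Fin n → ℝ), (Pi.single j (1:ℝ) : Fin n → ℝ)), (0:ℝ))
      = ((P2 n ω j q : ℝ) : ℂ) := by
  have hEV : KF n ω =ᶠ[nhds q] (fun p => ((G n ω p : ℝ) : ℂ)) := by
    filter_upwards [(isOpen_V n).mem_nhds hq] with p hp
    exact KF_eq n ω hω hp
  rw [hEV.fderiv_eq]
  have hco := (Complex.ofRealCLM.hasFDerivAt.comp q (diff_G n ω hω hq).hasFDerivAt).fderiv
  rw [show (fun p => ((G n ω p : ℝ) : ℂ)) = (Complex.ofRealCLM ∘ G n ω) from rfl, hco]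
  obtain ⟨⟨xq, yq⟩, tq⟩ := q
  simp only [ContinuousLinearMap.coe_comp', Function.comp_apply, Complex.ofRealCLM_apply]
  rw [fderiv_G_e2 hω hq j]
  rfl

lemma hDtK (hn : 1 ≤ n) (hω : ω ≠ 0) {q : PT n} (hq : q.2 ≠ 0) :
    fderiv ℝ (KF n ω) q (((0 : Fin n → ℝ), (0 : Fin n → ℝ)), (1:ℝ))
      = (((2 * n * gg ω q.2 + (2 * gg ω q.2 ^ 2 - ω ^ 2 / 2) * SS n q.1)
          * G n ω q : ℝ) : ℂ) := by
  have hEV : KF n ω =ᶠ[nhds q] (fun p => ((G n ω p : ℝ) : ℂ)) := by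
    filter_upwards [(isOpen_V n).mem_nhds hq] with p hp
    exact KF_eq n ω hω hp
  rw [hEV.fderiv_eq]
  have hco := (Complex.ofRealCLM.hasFDerivAt.comp q (diff_G n ω hω hq).hasFDerivAt).fderiv
  rw [show (fun p => ((G n ω p : ℝ) : ℂ)) = (Complex.ofRealCLM ∘ G n ω) from rfl, hco]
  obtain ⟨⟨xq, yq⟩, tq⟩ := q
  simp only [ContinuousLinearMap.coe_comp', Function.comp_apply, Complex.ofRealCLM_apply]
  rw [fderiv_G_et hn hω hq]

/-- value of the `A_j (A_j K)` term. -/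
lemma A_term (hω : ω ≠ 0) (j : Fin n) {p : PT n} (hp : p.2 ≠ 0) :
    fderiv ℝ (fun q : PT n =>
        fderiv ℝ (KF n ω) q (((Pi.single j (1:ℝ) : Fin n → ℝ), (0 : Fin n → ℝ)), (0:ℝ))
          - Complex.I * (ω : ℂ) * ((q.1.2 j : ℝ) : ℂ) * KF n ω q) p
        (((Pi.single j (1:ℝ) : Fin n → ℝ), (0 : Fin n → ℝ)), (0:ℝ))
      - Complex.I * (ω : ℂ) * ((p.1.2 j : ℝ) : ℂ) *
        (fderiv ℝ (KF n ω) p (((Pi.single j (1:ℝ) : Fin n → ℝ), (0 : Fin n → ℝ)), (0:ℝ))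
          - Complex.I * (ω : ℂ) * ((p.1.2 j : ℝ) : ℂ) * KF n ω p)
    = ((((2 * gg ω p.2 + (2 * gg ω p.2 * p.1.1 j) ^ 2 - ω ^ 2 * p.1.2 j ^ 2)
          * G n ω p : ℝ) : ℂ))
      - Complex.I * (((4 * ω * gg ω p.2 * p.1.1 j * p.1.2 j) * G n ω p : ℝ) : ℂ) := by
  have hEV : (fun q : PT n =>
      fderiv ℝ (KF n ω) q (((Pi.single j (1:ℝ) : Fin n → ℝ), (0 : Fin n → ℝ)), (0:ℝ))
        - Complex.I * (ω : ℂ) * ((q.1.2 j : ℝ) : ℂ) * KF n ω q)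
      =ᶠ[nhds p] (fun q : PT n =>
        ((P1 n ω j q : ℝ) : ℂ) - (Complex.I * ω) * ((R1 n ω j q : ℝ) : ℂ)) := by
    filter_upwards [(isOpen_V n).mem_nhds hp] with q hq
    rw [hD1K hω j hq, KF_eq n ω hω hq, R1]
    push_cast
    ring
  rw [hEV.fderiv_eq]
  have h1 := Complex.ofRealCLM.hasFDerivAt.comp p (diff_P1 hω j hp).hasFDerivAt
  have h2 := Complex.ofRealCLM.hasFDerivAt.comp p (diff_R1 hω j hp).hasFDerivAt
  have h3 := h1.sub (h2.const_mul (Complex.I * ω))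
  have h4 : HasFDerivAt (fun q : PT n =>
      ((P1 n ω j q : ℝ) : ℂ) - (Complex.I * ω) * ((R1 n ω j q : ℝ) : ℂ))
      (Complex.ofRealCLM.comp (fderiv ℝ (P1 n ω j) p)
        - (Complex.I * ω) • Complex.ofRealCLM.comp (fderiv ℝ (R1 n ω j) p)) p := h3
  rw [h4.fderiv]
  obtain ⟨⟨xq, yq⟩, tq⟩ := p
  simp only [ContinuousLinearMap.coe_sub', Pi.sub_apply, ContinuousLinearMap.coe_smul',
    Pi.smul_apply, ContinuousLinearMap.coe_comp', Function.comp_apply,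
    Complex.ofRealCLM_apply, smul_eq_mul]
  rw [hD1K hω j hp, KF_eq n ω hω hp, fderiv_P1_e1 hω hp j, fderiv_R1_e1 hω hp j]
  simp only [P1]
  push_cast
  linear_combination (ω^2 * ((yq j : ℂ))^2 * ((G n ω ((xq, yq), tq) : ℝ) : ℂ)) * Complex.I_sq

/-- value of the `B_j (B_j K)` term. -/
lemma B_term (hω : ω ≠ 0) (j : Fin n) {p : PT n} (hp : p.2 ≠ 0) :
    fderiv ℝ (fun q : PT n =>
        fderiv ℝ (KF n ω) q (((0 : Fin n → ℝ), (Pi.single j (1:ℝ) : Fin n → ℝ)), (0:ℝ))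
          + Complex.I * (ω : ℂ) * ((q.1.1 j : ℝ) : ℂ) * KF n ω q) p
        (((0 : Fin n → ℝ), (Pi.single j (1:ℝ) : Fin n → ℝ)), (0:ℝ))
      + Complex.I * (ω : ℂ) * ((p.1.1 j : ℝ) : ℂ) *
        (fderiv ℝ (KF n ω) p (((0 : Fin n → ℝ), (Pi.single j (1:ℝ) : Fin n → ℝ)), (0:ℝ))
          + Complex.I * (ω : ℂ) * ((p.1.1 j : ℝ) : ℂ) * KF n ω p)
    = ((((2 * gg ω p.2 + (2 * gg ω p.2 * p.1.2 j) ^ 2 - ω ^ 2 * p.1.1 j ^ 2)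
          * G n ω p : ℝ) : ℂ))
      + Complex.I * (((4 * ω * gg ω p.2 * p.1.1 j * p.1.2 j) * G n ω p : ℝ) : ℂ) := by
  have hEV : (fun q : PT n =>
      fderiv ℝ (KF n ω) q (((0 : Fin n → ℝ), (Pi.single j (1:ℝ) : Fin n → ℝ)), (0:ℝ))
        + Complex.I * (ω : ℂ) * ((q.1.1 j : ℝ) : ℂ) * KF n ω q)
      =ᶠ[nhds p] (fun q : PT n =>
        ((P2 n ω j q : ℝ) : ℂ) + (Complex.I * ω) * ((R2 n ω j q : ℝ) : ℂ)) := by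
    filter_upwards [(isOpen_V n).mem_nhds hp] with q hq
    rw [hD2K hω j hq, KF_eq n ω hω hq, R2]
    push_cast
    ring
  rw [hEV.fderiv_eq]
  have h1 := Complex.ofRealCLM.hasFDerivAt.comp p (diff_P2 hω j hp).hasFDerivAt
  have h2 := Complex.ofRealCLM.hasFDerivAt.comp p (diff_R2 hω j hp).hasFDerivAt
  have h3 := h1.add (h2.const_mul (Complex.I * ω))
  have h4 : HasFDerivAt (fun q : PT n =>
      ((P2 n ω j q : ℝ) : ℂ) + (Complex.I * ω) * ((R2 n ω j q : ℝ) : ℂ))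
      (Complex.ofRealCLM.comp (fderiv ℝ (P2 n ω j) p)
        + (Complex.I * ω) • Complex.ofRealCLM.comp (fderiv ℝ (R2 n ω j) p)) p := h3
  rw [h4.fderiv]
  obtain ⟨⟨xq, yq⟩, tq⟩ := p
  simp only [ContinuousLinearMap.coe_add', Pi.add_apply, ContinuousLinearMap.coe_smul',
    Pi.smul_apply, ContinuousLinearMap.coe_comp', Function.comp_apply,
    Complex.ofRealCLM_apply, smul_eq_mul]
  rw [hD2K hω j hp, KF_eq n ω hω hp, fderiv_P2_e2 hω hp j, fderiv_R2_e2 hω hp j]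
  simp only [P2]
  push_cast
  linear_combination (ω^2 * ((xq j : ℂ))^2 * ((G n ω ((xq, yq), tq) : ℝ) : ℂ)) * Complex.I_sq

lemma pde_part (n : ℕ) (hn : 1 ≤ n) (ω : ℝ) (hω : ω ≠ 0) (p : PT n) (hp : 0 < p.2) :
    fderiv ℝ (KF n ω) p (((0 : Fin n → ℝ), (0 : Fin n → ℝ)), (1:ℝ))
      = (1 / 2) * (∑ j, (fderiv ℝ (fun q : PT n =>
            fderiv ℝ (KF n ω) q (((Pi.single j (1:ℝ) : Fin n → ℝ), (0 : Fin n → ℝ)), (0:ℝ))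
              - Complex.I * (ω : ℂ) * ((q.1.2 j : ℝ) : ℂ) * KF n ω q) p
            (((Pi.single j (1:ℝ) : Fin n → ℝ), (0 : Fin n → ℝ)), (0:ℝ))
          - Complex.I * (ω : ℂ) * ((p.1.2 j : ℝ) : ℂ) *
            (fderiv ℝ (KF n ω) p (((Pi.single j (1:ℝ) : Fin n → ℝ), (0 : Fin n → ℝ)), (0:ℝ))
              - Complex.I * (ω : ℂ) * ((p.1.2 j : ℝ) : ℂ) * KF n ω p)))
        + (1 / 2) * ∑ j, (fderiv ℝ (fun q : PT n =>
            fderiv ℝ (KF n ω) q (((0 : Fin n → ℝ), (Pi.single j (1:ℝ) : Fin n → ℝ)), (0:ℝ))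
              + Complex.I * (ω : ℂ) * ((q.1.1 j : ℝ) : ℂ) * KF n ω q) p
            (((0 : Fin n → ℝ), (Pi.single j (1:ℝ) : Fin n → ℝ)), (0:ℝ))
          + Complex.I * (ω : ℂ) * ((p.1.1 j : ℝ) : ℂ) *
            (fderiv ℝ (KF n ω) p (((0 : Fin n → ℝ), (Pi.single j (1:ℝ) : Fin n → ℝ)), (0:ℝ))
              + Complex.I * (ω : ℂ) * ((p.1.1 j : ℝ) : ℂ) * KF n ω p)) := by
  have hp' : p.2 ≠ 0 := ne_of_gt hp
  rw [hDtK hn hω hp',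
    Finset.sum_congr rfl fun j _ => A_term hω j hp',
    Finset.sum_congr rfl fun j _ => B_term hω j hp']
  rw [← mul_add, ← Finset.sum_add_distrib]
  have hsum : ∑ j : Fin n,
      (((((2 * gg ω p.2 + (2 * gg ω p.2 * p.1.1 j) ^ 2 - ω ^ 2 * p.1.2 j ^ 2)
            * G n ω p : ℝ) : ℂ))
        - Complex.I * (((4 * ω * gg ω p.2 * p.1.1 j * p.1.2 j) * G n ω p : ℝ) : ℂ)
       + (((((2 * gg ω p.2 + (2 * gg ω p.2 * p.1.2 j) ^ 2 - ω ^ 2 * p.1.1 j ^ 2)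
            * G n ω p : ℝ) : ℂ))
        + Complex.I * (((4 * ω * gg ω p.2 * p.1.1 j * p.1.2 j) * G n ω p : ℝ) : ℂ)))
      = (((∑ j : Fin n, (4 * gg ω p.2
          + (4 * gg ω p.2 ^ 2 - ω ^ 2) * (p.1.1 j ^ 2 + p.1.2 j ^ 2)) * G n ω p : ℝ)) : ℂ) := by
    push_cast
    apply Finset.sum_congr rfl
    intro j _
    ring
  rw [hsum]
  have hreal : ∑ j : Fin n, (4 * gg ω p.2
        + (4 * gg ω p.2 ^ 2 - ω ^ 2) * (p.1.1 j ^ 2 + p.1.2 j ^ 2)) * G n ω p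
      = (4 * n * gg ω p.2 + (4 * gg ω p.2 ^ 2 - ω ^ 2) * SS n p.1) * G n ω p := by
    have : ∀ j : Fin n, (4 * gg ω p.2
          + (4 * gg ω p.2 ^ 2 - ω ^ 2) * (p.1.1 j ^ 2 + p.1.2 j ^ 2)) * G n ω p
        = 4 * gg ω p.2 * G n ω p
          + ((4 * gg ω p.2 ^ 2 - ω ^ 2) * G n ω p * p.1.1 j ^ 2
            + (4 * gg ω p.2 ^ 2 - ω ^ 2) * G n ω p * p.1.2 j ^ 2) := fun j => by ring
    rw [Finset.sum_congr rfl fun j _ => this j, Finset.sum_add_distrib,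
      Finset.sum_add_distrib, Finset.sum_const, ← Finset.mul_sum, ← Finset.mul_sum]
    simp only [Finset.card_univ, Fintype.card_fin, nsmul_eq_mul, SS]
    ring
  rw [hreal]
  push_cast
  ring

end Stmt11Aux


/-- **Mehler formula.** For `n ≥ 1` and `ω ≠ 0`, the function
`k̂₀(x,t) = (2πt)^{−n} (tω/sinh(tω))^n exp(−(ω/(2 tanh(tω))) |x|²)` on
`ℝ^{2n} × (0,∞)` is smooth and satisfies the heat equation of the twisted harmonic
oscillator `∂_t k̂₀ = ½ ∑_j (∂_{x_j} − iω x_{n+j})² k̂₀ + ½ ∑_j (∂_{x_{n+j}} + iω x_j)² k̂₀`. -/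
theorem stmt11 (n : ℕ) (hn : 1 ≤ n) (ω : ℝ) (hω : ω ≠ 0)
    (K : (((Fin n → ℝ) × (Fin n → ℝ)) × ℝ) → ℂ)
    (hK : K = fun p =>
      ((((2 * Real.pi * p.2) ^ n)⁻¹ * (p.2 * ω / Real.sinh (p.2 * ω)) ^ n *
        Real.exp (-(ω / (2 * Real.tanh (p.2 * ω))) *
          ((∑ j, p.1.1 j ^ 2) + ∑ j, p.1.2 j ^ 2)) : ℝ) : ℂ))
    (Dt : ((((Fin n → ℝ) × (Fin n → ℝ)) × ℝ) → ℂ) →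
      (((Fin n → ℝ) × (Fin n → ℝ)) × ℝ) → ℂ)
    (hDt : Dt = fun f p => fderiv ℝ f p ((0, 0), 1))
    (D1 : Fin n → ((((Fin n → ℝ) × (Fin n → ℝ)) × ℝ) → ℂ) →
      (((Fin n → ℝ) × (Fin n → ℝ)) × ℝ) → ℂ)
    (hD1 : D1 = fun j f p => fderiv ℝ f p ((Pi.single j 1, 0), 0))
    (D2 : Fin n → ((((Fin n → ℝ) × (Fin n → ℝ)) × ℝ) → ℂ) →
      (((Fin n → ℝ) × (Fin n → ℝ)) × ℝ) → ℂ)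
    (hD2 : D2 = fun j f p => fderiv ℝ f p ((0, Pi.single j 1), 0))
    (A : Fin n → ((((Fin n → ℝ) × (Fin n → ℝ)) × ℝ) → ℂ) →
      (((Fin n → ℝ) × (Fin n → ℝ)) × ℝ) → ℂ)
    (hA : A = fun j f p => D1 j f p - Complex.I * (ω : ℂ) * ((p.1.2 j : ℝ) : ℂ) * f p)
    (B : Fin n → ((((Fin n → ℝ) × (Fin n → ℝ)) × ℝ) → ℂ) →
      (((Fin n → ℝ) × (Fin n → ℝ)) × ℝ) → ℂ)
    (hB : B = fun j f p => D2 j f p + Complex.I * (ω : ℂ) * ((p.1.1 j : ℝ) : ℂ) * f p) :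
    -- smoothness on {t > 0}
    ContDiffOn ℝ (⊤ : ℕ∞) K {p : ((Fin n → ℝ) × (Fin n → ℝ)) × ℝ | 0 < p.2} ∧
    -- the heat equation of the twisted harmonic oscillator
    (∀ p : ((Fin n → ℝ) × (Fin n → ℝ)) × ℝ, 0 < p.2 →
      Dt K p = (1 / 2) * (∑ j, A j (A j K) p) + (1 / 2) * ∑ j, B j (B j K) p) := by
  subst hK hDt hD1 hD2 hA hB
  refine ⟨Stmt11Aux.smooth_part n ω hω, fun p hp => ?_⟩
  exact Stmt11Aux.pde_part n hn ω hω p hp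
end

section
/- (Karamata's Tauberian theorem, as used for the Weyl asymptotics.) Let λ : ℕ → ℝ be a nondecreasing sequence with λ_k → +∞, let α > 0 and A > 0. Assume that for every t > 0 the series ∑_{k} e^{−t λ_k} converges, and that t^α ∑_{k} e^{−t λ_k} → A as t → 0⁺. Then the counting function satisfies N(x) / x^α → A / Γ(1 + α) as x → +∞, where Γ is the Gamma function. -/
open Filter Topology

section KaramataAux

open Set MeasureTheory Polynomial


private lemma km_mul_nhdsWithin {c : ℝ} (hc : 0 < c) :
    Tendsto (fun t : ℝ => c * t) (𝓝[>] 0) (𝓝[>] 0) := by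
  refine tendsto_nhdsWithin_iff.2 ⟨?_, ?_⟩
  · have := (continuous_mul_left c).tendsto 0
    simpa using this.mono_left nhdsWithin_le_nhds
  · exact eventually_mem_nhdsWithin.mono fun t ht => mul_pos hc ht

private lemma km_rpow_tendsto {α : ℝ} (hα : 0 < α) :
    Tendsto (fun t : ℝ => t ^ α) (𝓝[>] 0) (𝓝 0) := by
  have h := (Real.continuousAt_rpow_const 0 α (Or.inr hα.le)).tendsto
  rw [Real.zero_rpow hα.ne'] at h
  exact h.mono_left nhdsWithin_le_nhds

private lemma km_scaled {lam : ℕ → ℝ} {α A : ℝ} (hα : 0 < α)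
    (hheat : Tendsto (fun t : ℝ => t ^ α * ∑' k : ℕ, Real.exp (-t * lam k))
      (𝓝[>] (0 : ℝ)) (𝓝 A)) {c : ℝ} (hc : 0 < c) :
    Tendsto (fun t : ℝ => t ^ α * ∑' k : ℕ, Real.exp (-(c * t) * lam k))
      (𝓝[>] (0 : ℝ)) (𝓝 (A / c ^ α)) := by
  have hcα : (0:ℝ) < c ^ α := Real.rpow_pos_of_pos hc α
  have h1 := (hheat.comp (km_mul_nhdsWithin hc)).const_mul (c ^ α)⁻¹
  rw [inv_mul_eq_div] at h1
  refine h1.congr' ?_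
  filter_upwards [eventually_mem_nhdsWithin] with t ht
  have : ((c * t) ^ α) = c ^ α * t ^ α := Real.mul_rpow hc.le (le_of_lt ht)
  simp only [Function.comp]
  rw [this]
  field_simp
noncomputable def kmH (p q u : ℝ) : ℝ :=
  min 1 (max 0 ((u - p) * (q - p)⁻¹)) * (max u (Real.exp (-1)))⁻¹

lemma kmH_continuous (p q : ℝ) : Continuous (kmH p q) := by
  have h1 : Continuous fun u : ℝ => min 1 (max 0 ((u - p) * (q - p)⁻¹)) := by
    fun_prop
  have h2 : Continuous fun u : ℝ => (max u (Real.exp (-1)))⁻¹ := by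
    refine Continuous.inv₀ (by fun_prop) fun u => ?_
    have := Real.exp_pos (-1)
    positivity
  exact h1.mul h2

lemma kmH_nonneg (p q u : ℝ) : 0 ≤ kmH p q u := by
  unfold kmH
  have h : (0:ℝ) < max u (Real.exp (-1)) := lt_of_lt_of_le (Real.exp_pos _) (le_max_right _ _)
  have : (0:ℝ) ≤ min 1 (max 0 ((u - p) * (q - p)⁻¹)) := le_min one_pos.le (le_max_left _ _)
  positivity

lemma kmH_le (p q u : ℝ) : kmH p q u ≤ Real.exp 1 := by
  unfold kmH
  have h : Real.exp (-1) ≤ max u (Real.exp (-1)) := le_max_right _ _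
  have h0 : (0:ℝ) < Real.exp (-1) := Real.exp_pos _
  have hinv : (max u (Real.exp (-1)))⁻¹ ≤ (Real.exp (-1))⁻¹ := by
    exact inv_anti₀ h0 h
  have hm : min 1 (max 0 ((u - p) * (q - p)⁻¹)) ≤ 1 := min_le_left _ _
  have hm0 : (0:ℝ) ≤ min 1 (max 0 ((u - p) * (q - p)⁻¹)) := le_min one_pos.le (le_max_left _ _)
  calc min 1 (max 0 ((u - p) * (q - p)⁻¹)) * (max u (Real.exp (-1)))⁻¹
      ≤ 1 * (Real.exp (-1))⁻¹ := by
        apply mul_le_mul hm hinv (by positivity) one_pos.le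
    _ = Real.exp 1 := by rw [one_mul, ← Real.exp_neg, neg_neg]

lemma kmG_le_one (p q : ℝ) {u : ℝ} (hu : 0 ≤ u) : u * kmH p q u ≤ 1 := by
  unfold kmH
  have h : (0:ℝ) < max u (Real.exp (-1)) := lt_of_lt_of_le (Real.exp_pos _) (le_max_right _ _)
  have hm : min 1 (max 0 ((u - p) * (q - p)⁻¹)) ≤ 1 := min_le_left _ _
  have hm0 : (0:ℝ) ≤ min 1 (max 0 ((u - p) * (q - p)⁻¹)) := le_min one_pos.le (le_max_left _ _)
  have hu' : u * (max u (Real.exp (-1)))⁻¹ ≤ 1 := by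
    rw [mul_inv_le_iff₀ h, one_mul]; exact le_max_left _ _
  calc u * (min 1 (max 0 ((u - p) * (q - p)⁻¹)) * (max u (Real.exp (-1)))⁻¹)
      = (u * (max u (Real.exp (-1)))⁻¹) * min 1 (max 0 ((u - p) * (q - p)⁻¹)) := by ring
    _ ≤ 1 * 1 := mul_le_mul hu' hm hm0 (by positivity)
    _ = 1 := one_mul 1

lemma kmH_eq_zero {p q : ℝ} (hpq : p < q) {u : ℝ} (hu : u ≤ p) : kmH p q u = 0 := by
  unfold kmH
  have : (u - p) * (q - p)⁻¹ ≤ 0 := by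
    apply mul_nonpos_of_nonpos_of_nonneg (by linarith)
    exact inv_nonneg.2 (by linarith)
  rw [max_eq_left this]
  simp

lemma kmG_eq_one {p q : ℝ} (hpq : p < q) (hq : Real.exp (-1) ≤ q) {u : ℝ} (hu : q ≤ u) :
    u * kmH p q u = 1 := by
  unfold kmH
  have hu0 : (0:ℝ) < u := lt_of_lt_of_le (lt_of_lt_of_le (Real.exp_pos _) hq) hu
  have hmax : max u (Real.exp (-1)) = u := max_eq_left (le_trans hq hu)
  have hr : (1:ℝ) ≤ (u - p) * (q - p)⁻¹ := by
    rw [le_mul_inv_iff₀ (by linarith), one_mul]; linarith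
  have : min 1 (max 0 ((u - p) * (q - p)⁻¹)) = 1 := by
    rw [min_eq_left]; exact le_trans hr (le_max_right _ _)
  rw [hmax, this, one_mul, mul_inv_cancel₀ hu0.ne']
lemma kmInt_exp {α : ℝ} (hα : 0 < α) {c : ℝ} (hc : 0 < c) :
    ∫ s in Ioi (0:ℝ), s ^ (α-1) * Real.exp (-(c*s)) = Real.Gamma α / c ^ α := by
  rw [Real.integral_rpow_mul_exp_neg_mul_Ioi hα hc, one_div, Real.inv_rpow hc.le]
  rw [inv_mul_eq_div]

lemma kmInt_integrable_exp {α : ℝ} (hα : 0 < α) {c : ℝ} (hc : 0 < c) :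
    IntegrableOn (fun s : ℝ => s ^ (α-1) * Real.exp (-(c*s))) (Ioi 0) := by
  have := integrableOn_rpow_mul_exp_neg_mul_rpow (by linarith : (-1:ℝ) < α - 1)
    one_pos hc
  simpa [Real.rpow_one, neg_mul] using this

lemma kmInt_integrable_ind {α : ℝ} (hα : 0 < α) (L : ℝ) :
    IntegrableOn ((Ioc (0:ℝ) L).indicator fun s : ℝ => s ^ (α-1)) (Ioi 0) := by
  have h : IntegrableOn (fun s : ℝ => s ^ (α-1)) (Ioc 0 L) :=
    (intervalIntegral.intervalIntegrable_rpow' (by linarith : (-1:ℝ) < α - 1)).1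
  exact (h.integrable_indicator measurableSet_Ioc).integrableOn

lemma kmInt_ind {α : ℝ} (hα : 0 < α) {L : ℝ} (hL : 0 < L) :
    ∫ s in Ioi (0:ℝ), (Ioc (0:ℝ) L).indicator (fun s : ℝ => s ^ (α-1)) s
      = L ^ α / α := by
  rw [setIntegral_indicator measurableSet_Ioc]
  have : Ioi (0:ℝ) ∩ Ioc 0 L = Ioc 0 L := inter_eq_right.mpr Ioc_subset_Ioi_self
  rw [this, ← intervalIntegral.integral_of_le hL.le,
    integral_rpow (Or.inl (by linarith : (-1:ℝ) < α - 1))]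
  rw [sub_add_cancel, Real.zero_rpow hα.ne', sub_zero]
lemma kmPoly_int {α : ℝ} (hα : 0 < α) (p : ℝ[X]) :
    IntegrableOn (fun s : ℝ => Real.exp (-s) * eval (Real.exp (-s)) p * s ^ (α-1))
      (Ioi 0) := by
  obtain ⟨M, hM⟩ := isCompact_Icc.exists_bound_of_continuousOn
    (f := fun u : ℝ => eval u p) (p.continuous_aeval.continuousOn)
  refine Integrable.mono' (((Real.GammaIntegral_convergent hα).const_mul M)) ?_ ?_
  · refine ContinuousOn.aestronglyMeasurable ?_ measurableSet_Ioi
    refine ContinuousOn.mul (Continuous.continuousOn (by fun_prop)) ?_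
    intro s hs
    exact (Real.continuousAt_rpow_const s (α-1) (Or.inl (ne_of_gt hs))).continuousWithinAt
  · rw [ae_restrict_iff' measurableSet_Ioi]
    refine ae_of_all _ fun s hs => ?_
    have hs0 : (0:ℝ) < s := hs
    have he1 : Real.exp (-s) ≤ 1 := Real.exp_le_one_iff.2 (by linarith)
    have he0 : (0:ℝ) < Real.exp (-s) := Real.exp_pos _
    have hmem : Real.exp (-s) ∈ Icc (0:ℝ) 1 := ⟨he0.le, he1⟩
    have hb := hM _ hmem
    have hr0 : (0:ℝ) ≤ s ^ (α-1) := Real.rpow_nonneg hs0.le _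
    have : ‖Real.exp (-s) * eval (Real.exp (-s)) p * s ^ (α-1)‖
        = Real.exp (-s) * ‖eval (Real.exp (-s)) p‖ * s ^ (α-1) := by
      rw [norm_mul, norm_mul, Real.norm_eq_abs, Real.norm_eq_abs, Real.norm_eq_abs,
        abs_of_pos he0, abs_of_nonneg hr0]
    rw [this]
    have hMn : (0:ℝ) ≤ M := le_trans (norm_nonneg _) (hM 0 ⟨le_refl 0, zero_le_one⟩)
    calc Real.exp (-s) * ‖eval (Real.exp (-s)) p‖ * s ^ (α-1)
        ≤ Real.exp (-s) * M * s ^ (α-1) :=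
          mul_le_mul_of_nonneg_right (mul_le_mul_of_nonneg_left hb he0.le) hr0
      _ = M * (Real.exp (-s) * s ^ (α-1)) := by ring

lemma kmPoly_lim (lam : ℕ → ℝ) {α A : ℝ} (hα : 0 < α)
    (hsum : ∀ t : ℝ, 0 < t → Summable fun k : ℕ => Real.exp (-t * lam k))
    (hheat : Tendsto (fun t : ℝ => t ^ α * ∑' k : ℕ, Real.exp (-t * lam k))
      (𝓝[>] (0 : ℝ)) (𝓝 A)) (p : ℝ[X]) :
    Tendsto (fun t : ℝ => t ^ α * ∑' k : ℕ,
        Real.exp (-t * lam k) * eval (Real.exp (-t * lam k)) p)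
      (𝓝[>] (0 : ℝ))
      (𝓝 (A / Real.Gamma α *
        ∫ s in Ioi (0:ℝ), Real.exp (-s) * eval (Real.exp (-s)) p * s ^ (α-1))) := by
  set n0 := p.natDegree + 1 with hn0
  have hev : ∀ u : ℝ, eval u p = ∑ n ∈ Finset.range n0, p.coeff n * u ^ n :=
    fun u => by rw [hn0]; exact p.eval_eq_sum_range u
  -- pointwise algebraic identity for exponentials
  have hexp : ∀ (t x : ℝ) (n : ℕ),
      Real.exp (-t * x) * (Real.exp (-t * x)) ^ n = Real.exp (-(((n:ℝ)+1) * t) * x) := by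
    intro t x n
    rw [← Real.exp_nat_mul, ← Real.exp_add]
    congr 1
    push_cast
    ring
  -- Step A : rewrite the function
  have key : ∀ t : ℝ, 0 < t →
      t ^ α * ∑' k : ℕ, Real.exp (-t * lam k) * eval (Real.exp (-t * lam k)) p
        = ∑ n ∈ Finset.range n0, p.coeff n *
            (t ^ α * ∑' k : ℕ, Real.exp (-(((n:ℝ)+1) * t) * lam k)) := by
    intro t ht
    have h1 : ∀ k : ℕ, Real.exp (-t * lam k) * eval (Real.exp (-t * lam k)) p
        = ∑ n ∈ Finset.range n0, p.coeff n * Real.exp (-(((n:ℝ)+1) * t) * lam k) := by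
      intro k
      rw [hev, Finset.mul_sum]
      refine Finset.sum_congr rfl fun n _ => ?_
      rw [← hexp t (lam k) n]; ring
    have hsum2 : ∀ n ∈ Finset.range n0, Summable fun k : ℕ =>
        p.coeff n * Real.exp (-(((n:ℝ)+1) * t) * lam k) := by
      intro n _
      exact (hsum ((((n:ℝ))+1) * t) (by positivity)).mul_left _
    rw [tsum_congr h1, Summable.tsum_finsetSum hsum2, Finset.mul_sum]
    refine Finset.sum_congr rfl fun n _ => ?_
    rw [tsum_mul_left]; ring
  -- Step B : the limit of the right-hand side
  have hB : Tendsto (fun t : ℝ => ∑ n ∈ Finset.range n0, p.coeff n *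
      (t ^ α * ∑' k : ℕ, Real.exp (-(((n:ℝ)+1) * t) * lam k)))
      (𝓝[>] (0:ℝ)) (𝓝 (∑ n ∈ Finset.range n0, p.coeff n * (A / ((n:ℝ)+1) ^ α))) := by
    refine tendsto_finset_sum _ fun n _ => ?_
    exact (km_scaled hα hheat (by positivity : (0:ℝ) < (n:ℝ)+1)).const_mul _
  -- Step C : identify the limit value with the integral
  have hΓ : (0:ℝ) < Real.Gamma α := Real.Gamma_pos_of_pos hα
  have hint : (∫ s in Ioi (0:ℝ), Real.exp (-s) * eval (Real.exp (-s)) p * s ^ (α-1))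
      = ∑ n ∈ Finset.range n0, p.coeff n * (Real.Gamma α / ((n:ℝ)+1) ^ α) := by
    have h2 : ∀ s : ℝ, Real.exp (-s) * eval (Real.exp (-s)) p * s ^ (α-1)
        = ∑ n ∈ Finset.range n0,
            p.coeff n * (s ^ (α-1) * Real.exp (-(((n:ℝ)+1) * s))) := by
      intro s
      rw [hev, Finset.mul_sum, Finset.sum_mul]
      refine Finset.sum_congr rfl fun n _ => ?_
      have := hexp 1 s n
      simp only [neg_mul, one_mul, mul_one] at this ⊢
      rw [← this]; ring
    have h3 : ∀ n ∈ Finset.range n0, IntegrableOn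
        (fun s : ℝ => p.coeff n * (s ^ (α-1) * Real.exp (-(((n:ℝ)+1) * s)))) (Ioi 0) :=
      fun n _ => (kmInt_integrable_exp hα (by positivity : (0:ℝ) < (n:ℝ)+1)).const_mul _
    rw [show (fun s : ℝ => Real.exp (-s) * eval (Real.exp (-s)) p * s ^ (α-1))
        = fun s : ℝ => ∑ n ∈ Finset.range n0,
            p.coeff n * (s ^ (α-1) * Real.exp (-(((n:ℝ)+1) * s))) from funext h2,
      integral_finset_sum _ h3]
    refine Finset.sum_congr rfl fun n _ => ?_
    rw [MeasureTheory.integral_const_mul, kmInt_exp hα (by positivity : (0:ℝ) < (n:ℝ)+1)]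
  rw [hint, Finset.mul_sum]
  have hval : ∀ n ∈ Finset.range n0,
      A / Real.Gamma α * (p.coeff n * (Real.Gamma α / ((n:ℝ)+1) ^ α))
        = p.coeff n * (A / ((n:ℝ)+1) ^ α) := by
    intro n _
    have hx : ((n:ℝ)+1) ^ α ≠ 0 := (Real.rpow_pos_of_pos (by positivity) α).ne'
    field_simp
  rw [Finset.sum_congr rfl hval]
  refine hB.congr' ?_
  filter_upwards [eventually_mem_nhdsWithin] with t ht
  exact (key t ht).symm

lemma kmFin (lam : ℕ → ℝ) (htop : Tendsto lam atTop atTop) (x : ℝ) :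
    {k : ℕ | lam k ≤ x}.Finite := by
  obtain ⟨n, hn⟩ := eventually_atTop.1 (htop.eventually_gt_atTop x)
  refine Set.Finite.subset (Set.finite_Iio n) fun k hk => ?_
  by_contra h
  simp only [Set.mem_Iio, not_lt] at h
  exact absurd hk (not_le.2 (hn k h))

lemma kmCard (lam : ℕ → ℝ) (htop : Tendsto lam atTop atTop) (x : ℝ) :
    ((Nat.card {k : ℕ // lam k ≤ x} : ℝ)) = ∑ _k ∈ (kmFin lam htop x).toFinset, (1:ℝ) := by
  rw [Finset.sum_const, nsmul_eq_mul, mul_one]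
  congr 1
  rw [show {k : ℕ // lam k ≤ x} = ↥{k : ℕ | lam k ≤ x} from rfl,
    Nat.card_coe_set_eq, Set.ncard_eq_toFinset_card _ (kmFin lam htop x)]

lemma kmUpper (lam : ℕ → ℝ) (h0 : ∀ k, 0 ≤ lam k) (htop : Tendsto lam atTop atTop)
    {α A : ℝ} (hα : 0 < α) (hA : 0 < A)
    (hsum : ∀ t : ℝ, 0 < t → Summable fun k : ℕ => Real.exp (-t * lam k))
    (hheat : Tendsto (fun t : ℝ => t ^ α * ∑' k : ℕ, Real.exp (-t * lam k))
      (𝓝[>] (0 : ℝ)) (𝓝 A)) {ε : ℝ} (hε : 0 < ε) :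
    ∀ᶠ t in 𝓝[>] (0:ℝ), t ^ α * (Nat.card {k : ℕ // lam k ≤ t⁻¹} : ℝ)
      ≤ A / Real.Gamma (1+α) + ε := by
  have hΓ : (0:ℝ) < Real.Gamma α := Real.Gamma_pos_of_pos hα
  have hΓ1 : (0:ℝ) < Real.Gamma (1+α) := Real.Gamma_pos_of_pos (by linarith)
  have hΓrel : Real.Gamma (1+α) = α * Real.Gamma α := by
    rw [add_comm]; exact Real.Gamma_add_one hα.ne'
  set C := A / Real.Gamma (1+α) with hC
  -- choose L > 1
  have hcont : Tendsto (fun L : ℝ => A * L ^ α / Real.Gamma (1+α)) (𝓝[>] 1) (𝓝 C) := by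
    have h1 : ContinuousAt (fun L : ℝ => A * L ^ α / Real.Gamma (1+α)) 1 := by
      have := Real.continuousAt_rpow_const 1 α (Or.inl one_ne_zero)
      exact (this.const_mul A).div_const _
    have h2 := h1.tendsto.mono_left (nhdsWithin_le_nhds (s := Set.Ioi (1:ℝ)))
    simpa [Real.one_rpow, mul_one] using h2
  have hev := hcont.eventually (eventually_le_nhds (show C < C + ε/4 by linarith))
  obtain ⟨L, hLb, hL1⟩ := (hev.and eventually_mem_nhdsWithin).exists
  rw [Set.mem_Ioi] at hL1
  have hL0 : (0:ℝ) < L := by linarith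
  set a := Real.exp (-L) with ha
  have haq : a < Real.exp (-1) := Real.exp_lt_exp.2 (by linarith)
  set ε₁ := ε / (8 * (A+1)) with hε₁def
  have hε₁ : 0 < ε₁ := by positivity
  have hε₁A : ε₁ * (A + 1) = ε / 8 := by rw [hε₁def]; field_simp
  -- Weierstrass approximation of kmH a e⁻¹
  obtain ⟨p, hp⟩ := exists_polynomial_near_of_continuousOn 0 1 (kmH a (Real.exp (-1)))
    (kmH_continuous _ _).continuousOn ε₁ hε₁
  have hlim := kmPoly_lim lam hα hsum hheat p
  set cp := A / Real.Gamma α *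
    ∫ s in Ioi (0:ℝ), Real.exp (-s) * eval (Real.exp (-s)) p * s ^ (α-1) with hcp
  -- bound on the integral
  have hint1 := kmInt_integrable_ind hα (α := α) L
  have hint2 : IntegrableOn (fun s : ℝ => ε₁ * (Real.exp (-s) * s ^ (α-1))) (Ioi 0) :=
    (Real.GammaIntegral_convergent hα).const_mul ε₁
  have hIb : (∫ s in Ioi (0:ℝ), Real.exp (-s) * eval (Real.exp (-s)) p * s ^ (α-1))
      ≤ L ^ α / α + ε₁ * Real.Gamma α := by
    have hmono : (∫ s in Ioi (0:ℝ), Real.exp (-s) * eval (Real.exp (-s)) p * s ^ (α-1))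
        ≤ ∫ s in Ioi (0:ℝ), ((Ioc (0:ℝ) L).indicator (fun s : ℝ => s ^ (α-1)) s
            + ε₁ * (Real.exp (-s) * s ^ (α-1))) := by
      refine setIntegral_mono_on (kmPoly_int hα p) (hint1.add hint2) measurableSet_Ioi ?_
      intro s hs
      have hs0 : (0:ℝ) < s := hs
      set u := Real.exp (-s) with hu
      have hu0 : (0:ℝ) < u := Real.exp_pos _
      have hu1 : u ≤ 1 := Real.exp_le_one_iff.2 (by linarith)
      have hr0 : (0:ℝ) ≤ s ^ (α-1) := Real.rpow_nonneg hs0.le _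
      have hq : eval u p ≤ kmH a (Real.exp (-1)) u + ε₁ := by
        have := abs_lt.1 (hp u ⟨hu0.le, hu1⟩)
        linarith [this.2]
      have step1 : Real.exp (-s) * eval (Real.exp (-s)) p * s ^ (α-1)
          ≤ (u * kmH a (Real.exp (-1)) u) * s ^ (α-1) + ε₁ * (u * s ^ (α-1)) := by
        have : u * eval u p ≤ u * kmH a (Real.exp (-1)) u + ε₁ * u := by
          nlinarith [mul_le_mul_of_nonneg_left hq hu0.le]
        calc Real.exp (-s) * eval (Real.exp (-s)) p * s ^ (α-1)
            = (u * eval u p) * s ^ (α-1) := by rw [hu]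
          _ ≤ (u * kmH a (Real.exp (-1)) u + ε₁ * u) * s ^ (α-1) :=
              mul_le_mul_of_nonneg_right this hr0
          _ = (u * kmH a (Real.exp (-1)) u) * s ^ (α-1) + ε₁ * (u * s ^ (α-1)) := by ring
      have step2 : (u * kmH a (Real.exp (-1)) u) * s ^ (α-1)
          ≤ (Ioc (0:ℝ) L).indicator (fun s : ℝ => s ^ (α-1)) s := by
        rcases le_or_gt s L with hsL | hsL
        · rw [Set.indicator_of_mem (Set.mem_Ioc.2 ⟨hs0, hsL⟩)]
          exact mul_le_mul_of_nonneg_right (kmG_le_one _ _ hu0.le) hr0 |>.trans_eq (one_mul _)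
        · rw [Set.indicator_of_notMem (by simp [hsL] : s ∉ Ioc (0:ℝ) L)]
          have hua : u ≤ a := Real.exp_le_exp.2 (by linarith)
          rw [kmH_eq_zero haq hua, mul_zero, zero_mul]
      calc Real.exp (-s) * eval (Real.exp (-s)) p * s ^ (α-1)
          ≤ (u * kmH a (Real.exp (-1)) u) * s ^ (α-1) + ε₁ * (u * s ^ (α-1)) := step1
        _ ≤ (Ioc (0:ℝ) L).indicator (fun s : ℝ => s ^ (α-1)) s
            + ε₁ * (Real.exp (-s) * s ^ (α-1)) := by
            rw [hu]; exact add_le_add_left step2 _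
    rw [integral_add hint1 hint2, kmInt_ind hα hL0, MeasureTheory.integral_const_mul,
      ← Real.Gamma_eq_integral hα] at hmono
    exact hmono
  have hcpb : cp ≤ C + ε/4 + ε/8 := by
    have h1 : cp ≤ A / Real.Gamma α * (L ^ α / α + ε₁ * Real.Gamma α) :=
      mul_le_mul_of_nonneg_left hIb (div_pos hA hΓ).le
    have h2 : A / Real.Gamma α * (L ^ α / α + ε₁ * Real.Gamma α)
        = A * L ^ α / Real.Gamma (1+α) + ε₁ * A := by
      rw [hΓrel]; field_simp
    have h3 : ε₁ * A ≤ ε / 8 := by nlinarith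
    linarith
  -- bound on polynomial coefficients on [0,1]
  obtain ⟨M, hM⟩ := isCompact_Icc.exists_bound_of_continuousOn
    (f := fun u : ℝ => eval u p) (s := Icc (0:ℝ) 1) (p.continuous_aeval.continuousOn)
  -- eventual estimates
  have Ev1 := hlim.eventually (eventually_le_nhds (show cp < cp + ε/8 by linarith))
  have Ev2 := hheat.eventually (eventually_le_nhds (show A < A + 1 by linarith))
  filter_upwards [Ev1, Ev2, eventually_mem_nhdsWithin] with t h1 h2 ht
  have ht0 : (0:ℝ) < t := ht
  have htα : (0:ℝ) ≤ t ^ α := (Real.rpow_pos_of_pos ht0 α).le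
  set u : ℕ → ℝ := fun k => Real.exp (-t * lam k) with hudef
  have hu0 : ∀ k, (0:ℝ) < u k := fun k => Real.exp_pos _
  have hu1 : ∀ k, u k ≤ 1 := fun k => Real.exp_le_one_iff.2 (by
    have := h0 k; nlinarith)
  have humem : ∀ k, u k ∈ Icc (0:ℝ) 1 := fun k => ⟨(hu0 k).le, hu1 k⟩
  -- summabilities
  have hsG : Summable fun k : ℕ => u k * kmH a (Real.exp (-1)) (u k) := by
    refine Summable.of_nonneg_of_le
      (fun k => mul_nonneg (hu0 k).le (kmH_nonneg _ _ _)) (fun k => ?_)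
      ((hsum t ht0).mul_left (Real.exp 1))
    calc u k * kmH a (Real.exp (-1)) (u k) ≤ u k * Real.exp 1 :=
        mul_le_mul_of_nonneg_left (kmH_le _ _ _) (hu0 k).le
      _ = Real.exp 1 * u k := mul_comm _ _
  have hsP : Summable fun k : ℕ => u k * eval (u k) p := by
    refine Summable.of_norm_bounded ((hsum t ht0).mul_left M) fun k => ?_
    rw [norm_mul, Real.norm_eq_abs, Real.norm_eq_abs, abs_of_pos (hu0 k)]
    calc u k * |eval (u k) p| ≤ u k * M :=
        mul_le_mul_of_nonneg_left (hM _ (humem k)) (hu0 k).le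
      _ = M * u k := mul_comm _ _
  have hsL : Summable fun k : ℕ => ε₁ * u k := (hsum t ht0).mul_left ε₁
  -- counting bound
  have hcard : (Nat.card {k : ℕ // lam k ≤ t⁻¹} : ℝ)
      ≤ ∑' k : ℕ, u k * kmH a (Real.exp (-1)) (u k) := by
    rw [kmCard lam htop t⁻¹]
    have heq : ∀ k ∈ (kmFin lam htop t⁻¹).toFinset,
        (1:ℝ) = u k * kmH a (Real.exp (-1)) (u k) := by
      intro k hk
      rw [Set.Finite.mem_toFinset] at hk
      have hlk : lam k ≤ t⁻¹ := hk
      have h1 : t * lam k ≤ 1 := by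
        calc t * lam k ≤ t * t⁻¹ := mul_le_mul_of_nonneg_left hlk ht0.le
          _ = 1 := mul_inv_cancel₀ ht0.ne'
      have : Real.exp (-1) ≤ u k := Real.exp_le_exp.2 (by linarith)
      exact (kmG_eq_one haq (le_refl _) this).symm
    rw [Finset.sum_congr rfl heq]
    exact Summable.sum_le_tsum _ (fun k _ => mul_nonneg (hu0 k).le (kmH_nonneg _ _ _)) hsG
  have htsum : (∑' k : ℕ, u k * kmH a (Real.exp (-1)) (u k))
      ≤ (∑' k : ℕ, u k * eval (u k) p) + ε₁ * ∑' k : ℕ, u k := by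
    have hpt : ∀ k : ℕ, u k * kmH a (Real.exp (-1)) (u k)
        ≤ u k * eval (u k) p + ε₁ * u k := by
      intro k
      have := abs_lt.1 (hp (u k) (humem k))
      nlinarith [(hu0 k).le, this.1]
    calc (∑' k : ℕ, u k * kmH a (Real.exp (-1)) (u k))
        ≤ ∑' k : ℕ, (u k * eval (u k) p + ε₁ * u k) :=
          Summable.tsum_le_tsum hpt hsG (hsP.add hsL)
      _ = (∑' k : ℕ, u k * eval (u k) p) + ∑' k : ℕ, ε₁ * u k := Summable.tsum_add hsP hsL
      _ = (∑' k : ℕ, u k * eval (u k) p) + ε₁ * ∑' k : ℕ, u k := by rw [tsum_mul_left]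
  -- final chain
  have hfin : t ^ α * (Nat.card {k : ℕ // lam k ≤ t⁻¹} : ℝ)
      ≤ (t ^ α * ∑' k : ℕ, u k * eval (u k) p) + ε₁ * (t ^ α * ∑' k : ℕ, u k) := by
    calc t ^ α * (Nat.card {k : ℕ // lam k ≤ t⁻¹} : ℝ)
        ≤ t ^ α * ((∑' k : ℕ, u k * eval (u k) p) + ε₁ * ∑' k : ℕ, u k) :=
          mul_le_mul_of_nonneg_left (hcard.trans htsum) htα
      _ = (t ^ α * ∑' k : ℕ, u k * eval (u k) p) + ε₁ * (t ^ α * ∑' k : ℕ, u k) := by ring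
  have hε₁b : ε₁ * (t ^ α * ∑' k : ℕ, u k) ≤ ε / 8 := by
    have := mul_le_mul_of_nonneg_left h2 hε₁.le
    calc ε₁ * (t ^ α * ∑' k : ℕ, u k) ≤ ε₁ * (A + 1) := this
      _ = ε / 8 := hε₁A
  have : t ^ α * (Nat.card {k : ℕ // lam k ≤ t⁻¹} : ℝ) ≤ (cp + ε/8) + ε/8 :=
    hfin.trans (add_le_add h1 hε₁b)
  calc t ^ α * (Nat.card {k : ℕ // lam k ≤ t⁻¹} : ℝ) ≤ (cp + ε/8) + ε/8 := this
    _ ≤ ((C + ε/4 + ε/8) + ε/8) + ε/8 := by linarith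
    _ ≤ C + ε := by linarith

lemma kmLower (lam : ℕ → ℝ) (h0 : ∀ k, 0 ≤ lam k) (htop : Tendsto lam atTop atTop)
    {α A : ℝ} (hα : 0 < α) (hA : 0 < A)
    (hsum : ∀ t : ℝ, 0 < t → Summable fun k : ℕ => Real.exp (-t * lam k))
    (hheat : Tendsto (fun t : ℝ => t ^ α * ∑' k : ℕ, Real.exp (-t * lam k))
      (𝓝[>] (0 : ℝ)) (𝓝 A)) {ε : ℝ} (hε : 0 < ε) :
    ∀ᶠ t in 𝓝[>] (0:ℝ), A / Real.Gamma (1+α) - ε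
      ≤ t ^ α * (Nat.card {k : ℕ // lam k ≤ t⁻¹} : ℝ) := by
  have hΓ : (0:ℝ) < Real.Gamma α := Real.Gamma_pos_of_pos hα
  have hΓ1 : (0:ℝ) < Real.Gamma (1+α) := Real.Gamma_pos_of_pos (by linarith)
  have hΓrel : Real.Gamma (1+α) = α * Real.Gamma α := by
    rw [add_comm]; exact Real.Gamma_add_one hα.ne'
  set C := A / Real.Gamma (1+α) with hC
  -- choose L < 1
  have hcont : Tendsto (fun L : ℝ => A * L ^ α / Real.Gamma (1+α)) (𝓝[<] 1) (𝓝 C) := by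
    have h1 : ContinuousAt (fun L : ℝ => A * L ^ α / Real.Gamma (1+α)) 1 := by
      have := Real.continuousAt_rpow_const 1 α (Or.inl one_ne_zero)
      exact (this.const_mul A).div_const _
    have h2 := h1.tendsto.mono_left (nhdsWithin_le_nhds (s := Set.Iio (1:ℝ)))
    simpa [Real.one_rpow, mul_one] using h2
  have hev := hcont.eventually (eventually_ge_nhds (show C - ε/4 < C by linarith))
  have hmem : Set.Ioo (0:ℝ) 1 ∈ 𝓝[<] (1:ℝ) :=
    Ioo_mem_nhdsLT_of_mem (by constructor <;> norm_num)
  obtain ⟨L, hLb, hL01⟩ := (hev.and (eventually_of_mem hmem fun x hx => hx)).exists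
  obtain ⟨hL0, hL1⟩ := hL01
  set b := Real.exp (-L) with hb
  have hbq : Real.exp (-1) < b := Real.exp_lt_exp.2 (by linarith)
  have hble : Real.exp (-1) ≤ b := hbq.le
  set ε₁ := ε / (8 * (A+1)) with hε₁def
  have hε₁ : 0 < ε₁ := by positivity
  have hε₁A : ε₁ * (A + 1) = ε / 8 := by rw [hε₁def]; field_simp
  obtain ⟨p, hp⟩ := exists_polynomial_near_of_continuousOn 0 1 (kmH (Real.exp (-1)) b)
    (kmH_continuous _ _).continuousOn ε₁ hε₁
  have hlim := kmPoly_lim lam hα hsum hheat p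
  set cp := A / Real.Gamma α *
    ∫ s in Ioi (0:ℝ), Real.exp (-s) * eval (Real.exp (-s)) p * s ^ (α-1) with hcp
  have hint1 := kmInt_integrable_ind hα (α := α) L
  have hint2 : IntegrableOn (fun s : ℝ => ε₁ * (Real.exp (-s) * s ^ (α-1))) (Ioi 0) :=
    (Real.GammaIntegral_convergent hα).const_mul ε₁
  -- lower bound on the integral
  have hIb : L ^ α / α - ε₁ * Real.Gamma α
      ≤ ∫ s in Ioi (0:ℝ), Real.exp (-s) * eval (Real.exp (-s)) p * s ^ (α-1) := by
    have hmono : (∫ s in Ioi (0:ℝ), ((Ioc (0:ℝ) L).indicator (fun s : ℝ => s ^ (α-1)) s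
            - ε₁ * (Real.exp (-s) * s ^ (α-1))))
        ≤ ∫ s in Ioi (0:ℝ), Real.exp (-s) * eval (Real.exp (-s)) p * s ^ (α-1) := by
      refine setIntegral_mono_on (hint1.sub hint2) (kmPoly_int hα p) measurableSet_Ioi ?_
      intro s hs
      have hs0 : (0:ℝ) < s := hs
      set u := Real.exp (-s) with hu
      have hu0 : (0:ℝ) < u := Real.exp_pos _
      have hu1 : u ≤ 1 := Real.exp_le_one_iff.2 (by linarith)
      have hr0 : (0:ℝ) ≤ s ^ (α-1) := Real.rpow_nonneg hs0.le _
      have hq : kmH (Real.exp (-1)) b u - ε₁ ≤ eval u p := by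
        have := abs_lt.1 (hp u ⟨hu0.le, hu1⟩)
        linarith [this.1]
      have step1 : (u * kmH (Real.exp (-1)) b u) * s ^ (α-1) - ε₁ * (u * s ^ (α-1))
          ≤ Real.exp (-s) * eval (Real.exp (-s)) p * s ^ (α-1) := by
        have h5 : u * kmH (Real.exp (-1)) b u - ε₁ * u ≤ u * eval u p := by
          nlinarith [mul_le_mul_of_nonneg_left hq hu0.le]
        calc (u * kmH (Real.exp (-1)) b u) * s ^ (α-1) - ε₁ * (u * s ^ (α-1))
            = (u * kmH (Real.exp (-1)) b u - ε₁ * u) * s ^ (α-1) := by ring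
          _ ≤ (u * eval u p) * s ^ (α-1) := mul_le_mul_of_nonneg_right h5 hr0
          _ = Real.exp (-s) * eval (Real.exp (-s)) p * s ^ (α-1) := by rw [hu]
      have step2 : (Ioc (0:ℝ) L).indicator (fun s : ℝ => s ^ (α-1)) s
          ≤ (u * kmH (Real.exp (-1)) b u) * s ^ (α-1) := by
        rcases le_or_gt s L with hsL | hsL
        · rw [Set.indicator_of_mem (Set.mem_Ioc.2 ⟨hs0, hsL⟩)]
          have hbu : b ≤ u := Real.exp_le_exp.2 (by linarith)
          rw [kmG_eq_one hbq hble hbu, one_mul]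
        · rw [Set.indicator_of_notMem (by simp [hsL] : s ∉ Ioc (0:ℝ) L)]
          have h6 : (0:ℝ) ≤ u * kmH (Real.exp (-1)) b u :=
            mul_nonneg hu0.le (kmH_nonneg _ _ _)
          positivity
      have : (Ioc (0:ℝ) L).indicator (fun s : ℝ => s ^ (α-1)) s
            - ε₁ * (Real.exp (-s) * s ^ (α-1))
          ≤ (u * kmH (Real.exp (-1)) b u) * s ^ (α-1) - ε₁ * (u * s ^ (α-1)) := by
        rw [hu]
        exact sub_le_sub step2 (le_refl _)
      exact this.trans step1
    rw [integral_sub hint1 hint2, kmInt_ind hα hL0, MeasureTheory.integral_const_mul,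
      ← Real.Gamma_eq_integral hα] at hmono
    exact hmono
  have hcpb : C - ε/4 - ε/8 ≤ cp := by
    have h1 : A / Real.Gamma α * (L ^ α / α - ε₁ * Real.Gamma α) ≤ cp :=
      mul_le_mul_of_nonneg_left hIb (div_pos hA hΓ).le
    have h2 : A / Real.Gamma α * (L ^ α / α - ε₁ * Real.Gamma α)
        = A * L ^ α / Real.Gamma (1+α) - ε₁ * A := by
      rw [hΓrel]; field_simp
    have h3 : ε₁ * A ≤ ε / 8 := by nlinarith
    linarith
  obtain ⟨M, hM⟩ := isCompact_Icc.exists_bound_of_continuousOn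
    (f := fun u : ℝ => eval u p) (s := Icc (0:ℝ) 1) (p.continuous_aeval.continuousOn)
  have Ev1 := hlim.eventually (eventually_ge_nhds (show cp - ε/8 < cp by linarith))
  have Ev2 := hheat.eventually (eventually_le_nhds (show A < A + 1 by linarith))
  filter_upwards [Ev1, Ev2, eventually_mem_nhdsWithin] with t h1 h2 ht
  have ht0 : (0:ℝ) < t := ht
  have htα : (0:ℝ) ≤ t ^ α := (Real.rpow_pos_of_pos ht0 α).le
  set u : ℕ → ℝ := fun k => Real.exp (-t * lam k) with hudef
  have hu0 : ∀ k, (0:ℝ) < u k := fun k => Real.exp_pos _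
  have hu1 : ∀ k, u k ≤ 1 := fun k => Real.exp_le_one_iff.2 (by
    have := h0 k; nlinarith)
  have humem : ∀ k, u k ∈ Icc (0:ℝ) 1 := fun k => ⟨(hu0 k).le, hu1 k⟩
  have hsG : Summable fun k : ℕ => u k * kmH (Real.exp (-1)) b (u k) := by
    refine Summable.of_nonneg_of_le
      (fun k => mul_nonneg (hu0 k).le (kmH_nonneg _ _ _)) (fun k => ?_)
      ((hsum t ht0).mul_left (Real.exp 1))
    calc u k * kmH (Real.exp (-1)) b (u k) ≤ u k * Real.exp 1 :=
        mul_le_mul_of_nonneg_left (kmH_le _ _ _) (hu0 k).le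
      _ = Real.exp 1 * u k := mul_comm _ _
  have hsP : Summable fun k : ℕ => u k * eval (u k) p := by
    refine Summable.of_norm_bounded ((hsum t ht0).mul_left M) fun k => ?_
    rw [norm_mul, Real.norm_eq_abs, Real.norm_eq_abs, abs_of_pos (hu0 k)]
    calc u k * |eval (u k) p| ≤ u k * M :=
        mul_le_mul_of_nonneg_left (hM _ (humem k)) (hu0 k).le
      _ = M * u k := mul_comm _ _
  have hsL : Summable fun k : ℕ => ε₁ * u k := (hsum t ht0).mul_left ε₁
  -- counting bound from above by the card
  have hcard : (∑' k : ℕ, u k * kmH (Real.exp (-1)) b (u k))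
      ≤ (Nat.card {k : ℕ // lam k ≤ t⁻¹} : ℝ) := by
    rw [kmCard lam htop t⁻¹]
    have hzero : ∀ k : ℕ, k ∉ (kmFin lam htop t⁻¹).toFinset →
        u k * kmH (Real.exp (-1)) b (u k) = 0 := by
      intro k hk
      rw [Set.Finite.mem_toFinset] at hk
      have hlk : t⁻¹ < lam k := not_le.1 hk
      have h7 : (1:ℝ) < t * lam k := by
        calc (1:ℝ) = t * t⁻¹ := (mul_inv_cancel₀ ht0.ne').symm
          _ < t * lam k := by
            exact mul_lt_mul_of_pos_left hlk ht0
      have h8 : u k ≤ Real.exp (-1) := Real.exp_le_exp.2 (by linarith)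
      rw [kmH_eq_zero hbq h8, mul_zero]
    rw [tsum_eq_sum hzero]
    refine Finset.sum_le_sum fun k _ => ?_
    calc u k * kmH (Real.exp (-1)) b (u k) ≤ 1 := kmG_le_one _ _ (hu0 k).le
      _ = (1:ℝ) := rfl
  have htsum : (∑' k : ℕ, u k * eval (u k) p)
      ≤ (∑' k : ℕ, u k * kmH (Real.exp (-1)) b (u k)) + ε₁ * ∑' k : ℕ, u k := by
    have hpt : ∀ k : ℕ, u k * eval (u k) p
        ≤ u k * kmH (Real.exp (-1)) b (u k) + ε₁ * u k := by
      intro k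
      have := abs_lt.1 (hp (u k) (humem k))
      nlinarith [(hu0 k).le, this.2]
    calc (∑' k : ℕ, u k * eval (u k) p)
        ≤ ∑' k : ℕ, (u k * kmH (Real.exp (-1)) b (u k) + ε₁ * u k) :=
          Summable.tsum_le_tsum hpt hsP (hsG.add hsL)
      _ = (∑' k : ℕ, u k * kmH (Real.exp (-1)) b (u k)) + ∑' k : ℕ, ε₁ * u k :=
          Summable.tsum_add hsG hsL
      _ = (∑' k : ℕ, u k * kmH (Real.exp (-1)) b (u k)) + ε₁ * ∑' k : ℕ, u k := by
          rw [tsum_mul_left]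
  have hε₁b : ε₁ * (t ^ α * ∑' k : ℕ, u k) ≤ ε / 8 := by
    have := mul_le_mul_of_nonneg_left h2 hε₁.le
    calc ε₁ * (t ^ α * ∑' k : ℕ, u k) ≤ ε₁ * (A + 1) := this
      _ = ε / 8 := hε₁A
  have hchain : cp - ε/8 ≤ t ^ α * (Nat.card {k : ℕ // lam k ≤ t⁻¹} : ℝ) + ε/8 := by
    have h9 : t ^ α * ∑' k : ℕ, u k * eval (u k) p
        ≤ t ^ α * (Nat.card {k : ℕ // lam k ≤ t⁻¹} : ℝ) + ε₁ * (t ^ α * ∑' k : ℕ, u k) := by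
      calc t ^ α * ∑' k : ℕ, u k * eval (u k) p
          ≤ t ^ α * ((∑' k : ℕ, u k * kmH (Real.exp (-1)) b (u k)) + ε₁ * ∑' k : ℕ, u k) :=
            mul_le_mul_of_nonneg_left htsum htα
        _ = t ^ α * (∑' k : ℕ, u k * kmH (Real.exp (-1)) b (u k))
              + ε₁ * (t ^ α * ∑' k : ℕ, u k) := by ring
        _ ≤ t ^ α * (Nat.card {k : ℕ // lam k ≤ t⁻¹} : ℝ)
              + ε₁ * (t ^ α * ∑' k : ℕ, u k) := by
            exact add_le_add_left (mul_le_mul_of_nonneg_left hcard htα) _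
    linarith
  linarith

lemma kmCore (lam : ℕ → ℝ) (h0 : ∀ k, 0 ≤ lam k) (htop : Tendsto lam atTop atTop)
    {α A : ℝ} (hα : 0 < α) (hA : 0 < A)
    (hsum : ∀ t : ℝ, 0 < t → Summable fun k : ℕ => Real.exp (-t * lam k))
    (hheat : Tendsto (fun t : ℝ => t ^ α * ∑' k : ℕ, Real.exp (-t * lam k))
      (𝓝[>] (0 : ℝ)) (𝓝 A)) :
    Tendsto (fun x : ℝ => (Nat.card {k : ℕ // lam k ≤ x} : ℝ) / x ^ α) atTop
      (𝓝 (A / Real.Gamma (1 + α))) := by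
  set C := A / Real.Gamma (1+α) with hC
  have htt : Tendsto (fun t : ℝ => t ^ α * (Nat.card {k : ℕ // lam k ≤ t⁻¹} : ℝ))
      (𝓝[>] (0:ℝ)) (𝓝 C) := by
    rw [Metric.tendsto_nhds]
    intro ε hε
    have hup := kmUpper lam h0 htop hα hA hsum hheat (half_pos hε)
    have hlo := kmLower lam h0 htop hα hA hsum hheat (half_pos hε)
    filter_upwards [hup, hlo] with t h1 h2
    rw [Real.dist_eq, abs_lt]
    constructor <;> [linarith; linarith]
  have hinv : Tendsto (fun x : ℝ => x⁻¹) atTop (𝓝[>] (0:ℝ)) := by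
    refine tendsto_nhdsWithin_iff.2 ⟨tendsto_inv_atTop_zero, ?_⟩
    filter_upwards [eventually_gt_atTop (0:ℝ)] with x hx
    exact inv_pos.2 hx
  have hcomp := htt.comp hinv
  refine hcomp.congr' ?_
  filter_upwards [eventually_gt_atTop (0:ℝ)] with x hx
  have hxα : (0:ℝ) < x ^ α := Real.rpow_pos_of_pos hx α
  simp only [Function.comp]
  rw [inv_inv, Real.inv_rpow hx.le]
  rw [inv_mul_eq_div]

end KaramataAux

/-- **Karamata's Tauberian theorem.** Let `λ : ℕ → ℝ` be nondecreasing
with `λ_k → +∞`, and let `α > 0`, `A > 0`. If `∑_k e^{−t λ_k}` converges for every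
`t > 0` and `t^α ∑_k e^{−t λ_k} → A` as `t → 0⁺`, then the counting function
`N(x) = #{k : λ_k ≤ x}` satisfies `N(x)/x^α → A / Γ(1 + α)` as `x → +∞`. -/
theorem stmt15 (lam : ℕ → ℝ) (hmono : Monotone lam)
    (htop : Tendsto lam atTop atTop)
    (α A : ℝ) (hα : 0 < α) (hA : 0 < A)
    (hsum : ∀ t : ℝ, 0 < t → Summable fun k : ℕ => Real.exp (-t * lam k))
    (hheat : Tendsto (fun t : ℝ => t ^ α * ∑' k : ℕ, Real.exp (-t * lam k))
      (𝓝[>] (0 : ℝ)) (𝓝 A))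
    (N : ℝ → ℕ) (hN : N = fun x => Nat.card {k : ℕ // lam k ≤ x}) :
    Tendsto (fun x : ℝ => (N x : ℝ) / x ^ α) atTop
      (𝓝 (A / Real.Gamma (1 + α))) := by
  subst hN
  set mu : ℕ → ℝ := fun k => max (lam k) 0 with hmu
  have h0 : ∀ k, 0 ≤ mu k := fun k => le_max_right _ _
  have hlemu : ∀ k, lam k ≤ mu k := fun k => le_max_left _ _
  have htop' : Tendsto mu atTop atTop := tendsto_atTop_mono hlemu htop
  have hsum' : ∀ t : ℝ, 0 < t → Summable fun k : ℕ => Real.exp (-t * mu k) := by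
    intro t ht
    refine Summable.of_nonneg_of_le (fun k => (Real.exp_pos _).le) (fun k => ?_) (hsum t ht)
    apply Real.exp_le_exp.2
    have := hlemu k
    nlinarith
  have hF : {k : ℕ | lam k < 0}.Finite := by
    obtain ⟨n, hn⟩ := eventually_atTop.1 (htop.eventually_gt_atTop 0)
    refine Set.Finite.subset (Set.finite_Iio n) fun k hk => ?_
    by_contra h
    simp only [Set.mem_Iio, not_lt] at h
    exact absurd hk (not_lt.2 (hn k h).le)
  have hmueq : ∀ k : ℕ, k ∉ hF.toFinset → mu k = lam k := by
    intro k hk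
    rw [Set.Finite.mem_toFinset] at hk
    simp only [Set.mem_setOf_eq, not_lt] at hk
    exact max_eq_left hk
  have hkey : ∀ t : ℝ, 0 < t → (∑' k : ℕ, Real.exp (-t * mu k))
      = (∑' k : ℕ, Real.exp (-t * lam k))
        + ∑ k ∈ hF.toFinset, (Real.exp (-t * mu k) - Real.exp (-t * lam k)) := by
    intro t ht
    have hz : ∀ k : ℕ, k ∉ hF.toFinset →
        Real.exp (-t * mu k) - Real.exp (-t * lam k) = 0 := by
      intro k hk
      rw [hmueq k hk, sub_self]
    have hd : Summable fun k : ℕ => Real.exp (-t * mu k) - Real.exp (-t * lam k) :=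
      summable_of_ne_finset_zero hz
    calc (∑' k : ℕ, Real.exp (-t * mu k))
        = ∑' k : ℕ, (Real.exp (-t * lam k)
            + (Real.exp (-t * mu k) - Real.exp (-t * lam k))) :=
          tsum_congr fun k => by ring
      _ = (∑' k : ℕ, Real.exp (-t * lam k))
            + ∑' k : ℕ, (Real.exp (-t * mu k) - Real.exp (-t * lam k)) :=
          Summable.tsum_add (hsum t ht) hd
      _ = (∑' k : ℕ, Real.exp (-t * lam k))
            + ∑ k ∈ hF.toFinset, (Real.exp (-t * mu k) - Real.exp (-t * lam k)) := by
          rw [tsum_eq_sum hz]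
  have hheat' : Tendsto (fun t : ℝ => t ^ α * ∑' k : ℕ, Real.exp (-t * mu k))
      (𝓝[>] (0 : ℝ)) (𝓝 A) := by
    have hcontD : Continuous fun t : ℝ =>
        ∑ k ∈ hF.toFinset, (Real.exp (-t * mu k) - Real.exp (-t * lam k)) := by
      fun_prop
    have hD : Tendsto (fun t : ℝ =>
        ∑ k ∈ hF.toFinset, (Real.exp (-t * mu k) - Real.exp (-t * lam k)))
        (𝓝[>] (0:ℝ)) (𝓝 0) := by
      have h1 := hcontD.tendsto 0
      simp only [neg_zero, zero_mul, neg_mul] at h1 ⊢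
      have h2 : (∑ x ∈ hF.toFinset, (Real.exp 0 - Real.exp 0)) = 0 := by simp
      rw [h2] at h1
      exact h1.mono_left nhdsWithin_le_nhds
    have hprod : Tendsto (fun t : ℝ => t ^ α *
        ∑ k ∈ hF.toFinset, (Real.exp (-t * mu k) - Real.exp (-t * lam k)))
        (𝓝[>] (0:ℝ)) (𝓝 0) := by
      have := (km_rpow_tendsto hα).mul hD
      simpa using this
    have hadd := hheat.add hprod
    rw [add_zero] at hadd
    refine hadd.congr' ?_
    filter_upwards [eventually_mem_nhdsWithin] with t ht
    rw [hkey t ht]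
    ring
  have hmain := kmCore mu h0 htop' hα hA hsum' hheat'
  refine hmain.congr' ?_
  filter_upwards [eventually_ge_atTop (0:ℝ)] with x hx
  have hset : {k : ℕ | mu k ≤ x} = {k : ℕ | lam k ≤ x} := by
    ext k
    simp only [Set.mem_setOf_eq, hmu, max_le_iff]
    exact ⟨fun h => h.1, fun h => ⟨h, hx⟩⟩
  have : Nat.card {k : ℕ // mu k ≤ x} = Nat.card {k : ℕ // lam k ≤ x} := by
    rw [show {k : ℕ // mu k ≤ x} = ↥{k : ℕ | mu k ≤ x} from rfl, hset]
    rfl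
  rw [this]
end

section
/- Let d ≥ 1, let n be an integer with 0 ≤ 2n ≤ d, and let L be a real antisymmetric d × d matrix. Let L₀ be the real antisymmetric d × d matrix with (L₀)_{j, n+k} = −2 δ_{jk} and (L₀)_{n+j, k} = 2 δ_{jk} for 1 ≤ j, k ≤ n, and all other entries 0 (so that G_{L₀} is the product group ℍ^{2n+1} × ℝ^{d−2n}). Then there exists a linear isomorphism of ℝ^{d+1} that is a group isomorphism from G_L onto G_{L₀} if and only if the matrix L has rank 2n. -/
open Matrix

/-- entries of the standard "adjacent pairs" antisymmetric matrix -/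
def Jfun (m a b : ℕ) : ℝ :=
  if a % 2 = 0 ∧ a < 2*m ∧ b = a+1 then -1
  else if b % 2 = 0 ∧ b < 2*m ∧ a = b+1 then 1 else 0

/-- entries of the standard "n-split" antisymmetric matrix -/
def Kfun (m a b : ℕ) : ℝ :=
  if a < m ∧ b = a + m then -2
  else if b < m ∧ a = b + m then 2 else 0

def Jmat (d m : ℕ) : Matrix (Fin d) (Fin d) ℝ := Matrix.of fun i j => Jfun m i.val j.val

def L0gen (d m : ℕ) : Matrix (Fin d) (Fin d) ℝ := Matrix.of fun i j => Kfun m i.val j.val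

/-- matrix of a map sending basis vector `k` to basis vector `e k` -/
def cmat {ι κ : Type*} [DecidableEq ι] (e : κ → ι) : Matrix ι κ ℝ :=
  Matrix.of fun i k => if e k = i then 1 else 0

lemma cmat_congr {ι κ : Type*} [DecidableEq ι] [Fintype ι] (e : κ → ι)
    (A : Matrix ι ι ℝ) : (cmat e)ᵀ * A * cmat e = A.submatrix e e := by
  ext p q
  simp only [Matrix.mul_apply, cmat, Matrix.transpose_apply, Matrix.of_apply,
    Matrix.submatrix_apply, ite_mul, one_mul, zero_mul, Finset.sum_ite_eq,
    Finset.mem_univ, if_true, mul_ite, mul_one, mul_zero]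

lemma cmat_mul {ι κ : Type*} [DecidableEq ι] [DecidableEq κ] [Fintype κ] (e : κ ≃ ι) :
    cmat ⇑e * cmat ⇑e.symm = 1 := by
  ext i i'
  simp only [Matrix.mul_apply, cmat, Matrix.of_apply]
  rw [Finset.sum_eq_single (e.symm i')]
  · rw [Equiv.apply_symm_apply, if_pos rfl, mul_one, Matrix.one_apply]
    by_cases h : i = i'
    · simp [h]
    · rw [if_neg (fun hh => h hh.symm), if_neg h]
  · intro k _ hk
    have hn : ¬ e.symm i' = k := fun h => hk h.symm
    rw [if_neg hn, mul_zero]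
  · simp

/-- congruence of square matrices over possibly different (equinumerous) index types -/
def MCongruent {ι κ : Type*} [Fintype ι] [Fintype κ] [DecidableEq ι] [DecidableEq κ]
    (A : Matrix ι ι ℝ) (B : Matrix κ κ ℝ) : Prop :=
  ∃ (P : Matrix ι κ ℝ) (P' : Matrix κ ι ℝ), P * P' = 1 ∧ P' * P = 1 ∧ Pᵀ * A * P = B

lemma MCongruent.refl {ι : Type*} [Fintype ι] [DecidableEq ι] (A : Matrix ι ι ℝ) :
    MCongruent A A := ⟨1, 1, by simp, by simp, by simp⟩

lemma MCongruent.symm {ι κ : Type*} [Fintype ι] [Fintype κ] [DecidableEq ι] [DecidableEq κ]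
    {A : Matrix ι ι ℝ} {B : Matrix κ κ ℝ} (h : MCongruent A B) : MCongruent B A := by
  obtain ⟨P, P', h1, h2, h3⟩ := h
  refine ⟨P', P, h2, h1, ?_⟩
  have hPP : P'ᵀ * Pᵀ = 1 := by
    have : (P * P')ᵀ = (1 : Matrix ι ι ℝ)ᵀ := by rw [h1]
    rw [Matrix.transpose_mul, Matrix.transpose_one] at this
    exact this
  rw [← h3]
  calc P'ᵀ * (Pᵀ * A * P) * P' = (P'ᵀ * Pᵀ) * (A * (P * P')) := by
        simp only [Matrix.mul_assoc]
    _ = A := by rw [hPP, h1, Matrix.one_mul, Matrix.mul_one]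

lemma MCongruent.trans {ι κ ν : Type*} [Fintype ι] [Fintype κ] [Fintype ν]
    [DecidableEq ι] [DecidableEq κ] [DecidableEq ν]
    {A : Matrix ι ι ℝ} {B : Matrix κ κ ℝ} {C : Matrix ν ν ℝ}
    (h : MCongruent A B) (h' : MCongruent B C) : MCongruent A C := by
  obtain ⟨P, P', h1, h2, h3⟩ := h
  obtain ⟨Q, Q', g1, g2, g3⟩ := h'
  refine ⟨P * Q, Q' * P', ?_, ?_, ?_⟩
  · calc P * Q * (Q' * P') = P * ((Q * Q') * P') := by simp only [Matrix.mul_assoc]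
      _ = 1 := by rw [g1, Matrix.one_mul, h1]
  · calc Q' * P' * (P * Q) = Q' * ((P' * P) * Q) := by simp only [Matrix.mul_assoc]
      _ = 1 := by rw [h2, Matrix.one_mul, g2]
  · rw [Matrix.transpose_mul, ← g3, ← h3]; simp only [Matrix.mul_assoc]

lemma MCongruent.of_equiv {ι κ : Type*} [Fintype ι] [Fintype κ] [DecidableEq ι] [DecidableEq κ]
    (A : Matrix ι ι ℝ) (e : κ ≃ ι) : MCongruent A (A.submatrix e e) := by
  refine ⟨cmat ⇑e, cmat ⇑e.symm, cmat_mul e, ?_, cmat_congr ⇑e A⟩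
  have := cmat_mul e.symm
  simpa using this

lemma MCongruent.unit {ι : Type*} [Fintype ι] [DecidableEq ι]
    (A P : Matrix ι ι ℝ) (h : IsUnit P.det) : MCongruent A (Pᵀ * A * P) :=
  ⟨P, P⁻¹, Matrix.mul_nonsing_inv P h, Matrix.nonsing_inv_mul P h, rfl⟩

lemma MCongruent.rank_eq {ι κ : Type*} [Fintype ι] [Fintype κ] [DecidableEq ι] [DecidableEq κ]
    {A : Matrix ι ι ℝ} {B : Matrix κ κ ℝ} (h : MCongruent A B) : A.rank = B.rank := by
  apply le_antisymm
  · obtain ⟨Q, Q', g1, g2, g3⟩ := h.symm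
    calc A.rank = (Qᵀ * B * Q).rank := by rw [g3]
      _ ≤ (Qᵀ * B).rank := Matrix.rank_mul_le_left _ _
      _ ≤ B.rank := Matrix.rank_mul_le_right _ _
  · obtain ⟨P, P', h1, h2, h3⟩ := h
    calc B.rank = (Pᵀ * A * P).rank := by rw [h3]
      _ ≤ (Pᵀ * A).rank := Matrix.rank_mul_le_left _ _
      _ ≤ A.rank := Matrix.rank_mul_le_right _ _

lemma MCongruent.antisymm {ι κ : Type*} [Fintype ι] [Fintype κ] [DecidableEq ι] [DecidableEq κ]
    {A : Matrix ι ι ℝ} {B : Matrix κ κ ℝ} (h : MCongruent A B) (hA : Aᵀ = -A) : Bᵀ = -B := by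
  obtain ⟨P, P', h1, h2, h3⟩ := h
  rw [← h3]
  rw [Matrix.transpose_mul, Matrix.transpose_mul, Matrix.transpose_transpose, hA]
  simp only [Matrix.neg_mul, Matrix.mul_neg, Matrix.mul_assoc]

lemma MCongruent.smul {ι κ : Type*} [Fintype ι] [Fintype κ] [DecidableEq ι] [DecidableEq κ]
    {A : Matrix ι ι ℝ} {B : Matrix κ κ ℝ} (c : ℝ) (h : MCongruent A B) :
    MCongruent (c • A) (c • B) := by
  obtain ⟨P, P', h1, h2, h3⟩ := h
  exact ⟨P, P', h1, h2, by rw [Matrix.mul_smul, Matrix.smul_mul, h3]⟩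

lemma rank_smul {ι : Type*} [Fintype ι] [DecidableEq ι] {c : ℝ} (hc : c ≠ 0)
    (A : Matrix ι ι ℝ) : (c • A).rank = A.rank := by
  have h1 : c • A = (c • (1 : Matrix ι ι ℝ)) * A := by
    rw [Matrix.smul_mul, one_mul]
  rw [h1, Matrix.rank_mul_eq_right_of_isUnit_det]
  rw [Matrix.det_smul, Matrix.det_one, mul_one]
  exact (IsUnit.mk0 _ (pow_ne_zero _ hc))

lemma Jmat_antisymm (d m : ℕ) : (Jmat d m)ᵀ = -(Jmat d m) := by
  ext i j
  simp only [Matrix.transpose_apply, Matrix.neg_apply, Jmat, Matrix.of_apply]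
  unfold Jfun
  split_ifs <;> first | (exfalso; omega) | norm_num

lemma L0gen_antisymm (d m : ℕ) : (L0gen d m)ᵀ = -(L0gen d m) := by
  ext i j
  simp only [Matrix.transpose_apply, Matrix.neg_apply, L0gen, Matrix.of_apply]
  unfold Kfun
  split_ifs <;> first | (exfalso; omega) | norm_num

lemma Jmat_zero (d : ℕ) : Jmat d 0 = 0 := by
  ext i j
  norm_num [Jmat, Jfun]

def fnat (m a : ℕ) : ℕ := if a < 2*m then (if a % 2 = 0 then a/2 else m + a/2) else a

def gnat (m b : ℕ) : ℕ := if b < m then 2*b else if b < 2*m then 2*(b-m)+1 else b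

def fperm (d m : ℕ) (hm : 2*m ≤ d) : Fin d ≃ Fin d where
  toFun p := ⟨fnat m p.val, by have := p.2; unfold fnat; split_ifs <;> omega⟩
  invFun q := ⟨gnat m q.val, by have := q.2; unfold gnat; split_ifs <;> omega⟩
  left_inv p := by
    apply Fin.ext
    show gnat m (fnat m p.val) = p.val
    unfold fnat gnat; split_ifs <;> omega
  right_inv q := by
    apply Fin.ext
    show fnat m (gnat m q.val) = q.val
    unfold fnat gnat; split_ifs <;> omega

lemma Kfun_fnat (m a b : ℕ) : Kfun m (fnat m a) (fnat m b) = 2 * Jfun m a b := by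
  unfold Kfun Jfun fnat
  split_ifs <;> first | (exfalso; omega) | norm_num

lemma L0gen_submatrix (d m : ℕ) (hm : 2*m ≤ d) :
    (L0gen d m).submatrix ⇑(fperm d m hm) ⇑(fperm d m hm) = (2:ℝ) • Jmat d m := by
  ext p q
  simp only [Matrix.submatrix_apply, Matrix.smul_apply, smul_eq_mul, L0gen, Jmat,
    Matrix.of_apply]
  exact Kfun_fnat m p.val q.val

def Emat (d m : ℕ) : Matrix (Fin d) (Fin (2*m)) ℝ :=
  Matrix.of fun i j => if (i:ℕ) = (j:ℕ) then 1 else 0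

lemma EtE (d m : ℕ) (hm : 2*m ≤ d) : (Emat d m)ᵀ * Emat d m = 1 := by
  ext j k
  simp only [Matrix.mul_apply, Emat, Matrix.transpose_apply, Matrix.of_apply]
  rw [Finset.sum_eq_single (⟨j.val, lt_of_lt_of_le j.2 hm⟩ : Fin d)]
  · simp [Matrix.one_apply, Fin.ext_iff]
  · intro i _ hi
    rw [if_neg (fun h => hi (Fin.ext h)), zero_mul]
  · simp

lemma EEt_apply (d m : ℕ) (i k : Fin d) :
    (Emat d m * (Emat d m)ᵀ) i k = if (i:ℕ) = (k:ℕ) ∧ (i:ℕ) < 2*m then 1 else 0 := by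
  simp only [Matrix.mul_apply, Emat, Matrix.transpose_apply, Matrix.of_apply]
  by_cases h : (i:ℕ) < 2*m
  · rw [Finset.sum_eq_single (⟨i.val, h⟩ : Fin (2*m))]
    · show (if (i:ℕ) = (i:ℕ) then (1:ℝ) else 0) * (if (k:ℕ) = (i:ℕ) then (1:ℝ) else 0) = _
      rw [if_pos rfl, one_mul]
      split_ifs <;> first | (exfalso; omega) | norm_num
    · intro b _ hb
      rw [if_neg (fun hh => hb (Fin.ext hh.symm)), zero_mul]
    · simp
  · rw [if_neg (by omega)]
    apply Finset.sum_eq_zero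
    intro j _
    rw [if_neg (by omega : ¬ (i:ℕ) = (j:ℕ)), zero_mul]

lemma Kfun_row (m a b : ℕ) (ha : ¬ a < 2*m) : Kfun m a b = 0 := by
  unfold Kfun; split_ifs <;> first | (exfalso; omega) | norm_num

lemma L0gen_eq_EEt_mul (d m : ℕ) (hm : 2*m ≤ d) :
    Emat d m * ((Emat d m)ᵀ * L0gen d m) = L0gen d m := by
  have h1 : ∀ (j : Fin (2*m)) (k : Fin d),
      ((Emat d m)ᵀ * L0gen d m) j k = Kfun m j.val k.val := by
    intro j k
    simp only [Matrix.mul_apply, Emat, Matrix.transpose_apply, Matrix.of_apply, L0gen]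
    rw [Finset.sum_eq_single (⟨j.val, lt_of_lt_of_le j.2 hm⟩ : Fin d)]
    · rw [if_pos rfl, one_mul]
    · intro i' _ hi'
      rw [if_neg (fun h => hi' (Fin.ext h)), zero_mul]
    · simp
  ext i k
  rw [Matrix.mul_apply]
  have hsum : ∀ j : Fin (2*m), Emat d m i j * ((Emat d m)ᵀ * L0gen d m) j k
      = (if (i:ℕ) = (j:ℕ) then (1:ℝ) else 0) * Kfun m j.val k.val := by
    intro j; rw [h1 j k]; rfl
  rw [Finset.sum_congr rfl (fun j _ => hsum j)]
  show _ = Kfun m i.val k.val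
  by_cases h : (i:ℕ) < 2*m
  · rw [Finset.sum_eq_single (⟨(i:ℕ), h⟩ : Fin (2*m))]
    · show (if (i:ℕ) = (i:ℕ) then (1:ℝ) else 0) * Kfun m (i:ℕ) (k:ℕ) = _
      rw [if_pos rfl, one_mul]
    · intro b _ hb
      rw [if_neg (fun hh => hb (Fin.ext hh.symm)), zero_mul]
    · simp
  · rw [Finset.sum_eq_zero (fun j _ => by rw [if_neg (by omega : ¬ (i:ℕ) = (j:ℕ)), zero_mul])]
    rw [Kfun_row m _ _ h]

lemma Kfun_sum (d m : ℕ) (hm : 2*m ≤ d) (i k : Fin d) :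
    (∑ j : Fin d, Kfun m (i:ℕ) (j:ℕ) * Kfun m (j:ℕ) (k:ℕ))
      = if (i:ℕ) = (k:ℕ) ∧ (i:ℕ) < 2*m then -4 else 0 := by
  by_cases h1 : (i:ℕ) < m
  · rw [Finset.sum_eq_single (⟨(i:ℕ) + m, by omega⟩ : Fin d)]
    · show Kfun m (i:ℕ) ((i:ℕ)+m) * Kfun m ((i:ℕ)+m) (k:ℕ) = _
      unfold Kfun; split_ifs <;> first | (exfalso; omega) | norm_num
    · intro j _ hj
      have hj' : (j:ℕ) ≠ (i:ℕ) + m := fun h => hj (Fin.ext h)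
      unfold Kfun; split_ifs <;> first | (exfalso; omega) | norm_num
    · simp
  · by_cases h2 : (i:ℕ) < 2*m
    · rw [Finset.sum_eq_single (⟨(i:ℕ) - m, by omega⟩ : Fin d)]
      · show Kfun m (i:ℕ) ((i:ℕ)-m) * Kfun m ((i:ℕ)-m) (k:ℕ) = _
        unfold Kfun; split_ifs <;> first | (exfalso; omega) | norm_num
      · intro j _ hj
        have hj' : (j:ℕ) ≠ (i:ℕ) - m := fun h => hj (Fin.ext h)
        unfold Kfun; split_ifs <;> first | (exfalso; omega) | norm_num
      · simp
    · rw [if_neg (by omega)]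
      apply Finset.sum_eq_zero; intro j _
      rw [Kfun_row m _ _ (by omega), zero_mul]

lemma L0gen_sq (d m : ℕ) (hm : 2*m ≤ d) :
    L0gen d m * L0gen d m = (-4:ℝ) • (Emat d m * (Emat d m)ᵀ) := by
  ext i k
  rw [Matrix.smul_apply, EEt_apply, Matrix.mul_apply, smul_eq_mul]
  show (∑ j : Fin d, Kfun m (i:ℕ) (j:ℕ) * Kfun m (j:ℕ) (k:ℕ)) = _
  rw [Kfun_sum d m hm i k]
  split_ifs <;> norm_num

lemma L0gen_rank (d m : ℕ) (hm : 2*m ≤ d) : (L0gen d m).rank = 2*m := by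
  apply le_antisymm
  · calc (L0gen d m).rank = (Emat d m * ((Emat d m)ᵀ * L0gen d m)).rank := by
          rw [L0gen_eq_EEt_mul d m hm]
      _ ≤ (Emat d m).rank := Matrix.rank_mul_le_left _ _
      _ ≤ Fintype.card (Fin (2*m)) := Matrix.rank_le_card_width _
      _ = 2*m := by simp
  · have key : (Emat d m)ᵀ * (L0gen d m * L0gen d m) * Emat d m
        = (-4:ℝ) • (1 : Matrix (Fin (2*m)) (Fin (2*m)) ℝ) := by
      rw [L0gen_sq d m hm, Matrix.mul_smul, Matrix.smul_mul]
      congr 1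
      calc (Emat d m)ᵀ * (Emat d m * (Emat d m)ᵀ) * Emat d m
          = ((Emat d m)ᵀ * Emat d m) * ((Emat d m)ᵀ * Emat d m) := by
            simp only [Matrix.mul_assoc]
        _ = 1 := by rw [EtE d m hm, Matrix.one_mul]
    calc 2*m = ((-4:ℝ) • (1 : Matrix (Fin (2*m)) (Fin (2*m)) ℝ)).rank := by
          rw [rank_smul (by norm_num), Matrix.rank_one]; simp
      _ = ((Emat d m)ᵀ * (L0gen d m * L0gen d m) * Emat d m).rank := by rw [key]
      _ ≤ ((Emat d m)ᵀ * (L0gen d m * L0gen d m)).rank := Matrix.rank_mul_le_left _ _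
      _ ≤ (L0gen d m * L0gen d m).rank := Matrix.rank_mul_le_right _ _
      _ ≤ (L0gen d m).rank := Matrix.rank_mul_le_left _ _

lemma MCongruent.blockLift {k : ℕ} {ι κ : Type*} [Fintype ι] [Fintype κ]
    [DecidableEq ι] [DecidableEq κ]
    (K : Matrix (Fin k) (Fin k) ℝ) {C : Matrix ι ι ℝ} {C' : Matrix κ κ ℝ}
    (h : MCongruent C C') :
    MCongruent (Matrix.fromBlocks K 0 0 C) (Matrix.fromBlocks K 0 0 C') := by
  obtain ⟨P, P', h1, h2, h3⟩ := h
  refine ⟨Matrix.fromBlocks 1 0 0 P, Matrix.fromBlocks 1 0 0 P', ?_, ?_, ?_⟩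
  · rw [Matrix.fromBlocks_multiply]
    simp [h1, Matrix.fromBlocks_one]
  · rw [Matrix.fromBlocks_multiply]
    simp [h2, Matrix.fromBlocks_one]
  · rw [Matrix.fromBlocks_transpose, Matrix.fromBlocks_multiply, Matrix.fromBlocks_multiply]
    simp [h3]

lemma e_inl_val (m : ℕ) (i : Fin 2) :
    (((finSumFinEquiv.trans (finCongr (show 2+m = m+2 by omega))) (Sum.inl i)) : ℕ) = (i : ℕ) := by
  simp [finSumFinEquiv, finCongr]

lemma e_inr_val (m : ℕ) (j : Fin m) :
    (((finSumFinEquiv.trans (finCongr (show 2+m = m+2 by omega))) (Sum.inr j)) : ℕ) = 2 + (j : ℕ) := by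
  simp [finSumFinEquiv, finCongr]
  omega

lemma classify (d : ℕ) : ∀ (L : Matrix (Fin d) (Fin d) ℝ), Lᵀ = -L →
    ∃ m, 2*m ≤ d ∧ MCongruent L (Jmat d m) := by
  induction d using Nat.strong_induction_on with
  | _ d IH =>
  intro L hL
  by_cases h0 : L = 0
  · refine ⟨0, by omega, ?_⟩
    subst h0
    rw [Jmat_zero]
    exact MCongruent.refl 0
  · have hdiag : ∀ i, L i i = 0 := by
      intro i
      have := congrFun (congrFun hL i) i
      simp only [Matrix.transpose_apply, Matrix.neg_apply] at this
      linarith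
    obtain ⟨j0, k0, hjk⟩ : ∃ j k, L j k ≠ 0 := by
      by_contra hc
      push_neg at hc
      exact h0 (by ext i j; simpa using hc i j)
    have hne : j0 ≠ k0 := by rintro rfl; exact hjk (hdiag j0)
    have hd2 : 2 ≤ d := by
      by_contra hlt
      exact hne (Fin.ext (by omega))
    obtain ⟨m, rfl⟩ : ∃ m, d = m + 2 := ⟨d - 2, by omega⟩
    have h01 : (0 : Fin (m+2)) ≠ 1 := by
      simp [Fin.ext_iff]
    set τ := Equiv.swap (0 : Fin (m+2)) j0 with hτ
    have hτk : τ.symm k0 ≠ 0 := by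
      intro h
      apply hne
      have h2 := congrArg τ h
      rw [Equiv.apply_symm_apply] at h2
      rw [h2, hτ, Equiv.swap_apply_left]
    set σ := (Equiv.swap (1 : Fin (m+2)) (τ.symm k0)).trans τ with hσ
    have hσ0 : σ 0 = j0 := by
      simp only [hσ, Equiv.trans_apply]
      rw [Equiv.swap_apply_of_ne_of_ne h01 (fun h => hτk h.symm), hτ, Equiv.swap_apply_left]
    have hσ1 : σ 1 = k0 := by
      simp only [hσ, Equiv.trans_apply]
      rw [Equiv.swap_apply_left, Equiv.apply_symm_apply]
    set e : (Fin 2 ⊕ Fin m) ≃ Fin (m+2) :=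
      finSumFinEquiv.trans (finCongr (show 2+m = m+2 by omega)) with he
    set ε := e.trans σ with hε
    set A := L.submatrix ⇑ε ⇑ε with hA
    have congA : MCongruent L A := MCongruent.of_equiv L ε
    have hAanti : Aᵀ = -A := congA.antisymm hL
    have hAdiag : ∀ x, A x x = 0 := by
      intro x
      have := congrFun (congrFun hAanti x) x
      simp only [Matrix.transpose_apply, Matrix.neg_apply] at this
      linarith
    set α := L j0 k0 with hαdef
    have he0 : e (Sum.inl 0) = 0 := by
      apply Fin.ext
      rw [he, e_inl_val]
      rfl
    have he1 : e (Sum.inl 1) = 1 := by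
      apply Fin.ext
      rw [he, e_inl_val]
      rfl
    have hA01 : A (Sum.inl 0) (Sum.inl 1) = α := by
      rw [hA, Matrix.submatrix_apply, hε]
      simp only [Equiv.trans_apply]
      rw [he0, he1, hσ0, hσ1]
    have hA10 : A (Sum.inl 1) (Sum.inl 0) = -α := by
      have := congrFun (congrFun hAanti (Sum.inl 0)) (Sum.inl 1)
      simp only [Matrix.transpose_apply, Matrix.neg_apply] at this
      rw [hA01] at this
      linarith
    -- blocks of A
    set A1 := A.toBlocks₁₁ with hA1def
    set A2 := A.toBlocks₁₂ with hA2def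
    set A3 := A.toBlocks₂₁ with hA3def
    set A4 := A.toBlocks₂₂ with hA4def
    have hAblocks : A = Matrix.fromBlocks A1 A2 A3 A4 := (Matrix.fromBlocks_toBlocks A).symm
    have hA1eq : A1 = !![0, α; -α, 0] := by
      ext i j
      fin_cases i <;> fin_cases j <;>
        simp [hA1def, Matrix.toBlocks₁₁, hAdiag, hA01, hA10]
    set dd := Matrix.diagonal ![1, -α⁻¹] with hdd
    set D := Matrix.fromBlocks dd 0 0 (1 : Matrix (Fin m) (Fin m) ℝ) with hD
    have hα : α ≠ 0 := hjk
    have hDdet : IsUnit D.det := by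
      rw [hD, Matrix.det_fromBlocks_zero₂₁, Matrix.det_one, mul_one, hdd,
        Matrix.det_diagonal, Fin.prod_univ_two]
      simp only [Matrix.cons_val_zero, Matrix.cons_val_one, Matrix.head_cons, one_mul]
      exact IsUnit.mk0 _ (by simp [hα])
    have hDt : Dᵀ = D := by
      rw [hD, Matrix.fromBlocks_transpose, Matrix.diagonal_transpose]
      simp [hdd]
    set B := Dᵀ * A * D with hB
    have congB : MCongruent A B := MCongruent.unit A D hDdet
    have hBanti : Bᵀ = -B := congB.antisymm hAanti
    set J2 : Matrix (Fin 2) (Fin 2) ℝ := !![0, -1; 1, 0] with hJ2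
    have hBblocks : B = Matrix.fromBlocks J2 (dd*A2) (A3*dd) A4 := by
      rw [hB, hDt, hD, hAblocks, Matrix.fromBlocks_multiply, Matrix.fromBlocks_multiply]
      have h11 : dd * A1 * dd = J2 := by
        rw [hA1eq, hdd, hJ2]
        ext i j
        fin_cases i <;> fin_cases j <;>
          simp [Matrix.diagonal_mul, Matrix.mul_diagonal] <;>
          field_simp
      rw [← h11]
      congr 1 <;> simp [Matrix.mul_assoc]
    set B2 := dd * A2 with hB2def
    set B3 := A3 * dd with hB3def
    have hBanti2 := hBanti
    rw [hBblocks, Matrix.fromBlocks_transpose] at hBanti2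
    rw [show -(Matrix.fromBlocks J2 B2 B3 A4) = Matrix.fromBlocks (-J2) (-B2) (-B3) (-A4) from
      (Matrix.fromBlocks_neg J2 B2 B3 A4)] at hBanti2
    have hB3eq : B3 = -B2ᵀ := by
      have h12 := congrArg Matrix.toBlocks₁₂ hBanti2
      simp only [Matrix.toBlocks_fromBlocks₁₂] at h12
      -- h12 : B3ᵀ = -B2
      have := congrArg Matrix.transpose h12
      rw [Matrix.transpose_transpose] at this
      rw [this, Matrix.transpose_neg]
    have hA4anti : A4ᵀ = -A4 := by
      have h22 := congrArg Matrix.toBlocks₂₂ hBanti2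
      simpa only [Matrix.toBlocks_fromBlocks₂₂] using h22
    set X := J2 * B2 with hXdef
    have hJ2sq : J2 * J2 = -1 := by
      ext i j
      fin_cases i <;> fin_cases j <;>
        norm_num [hJ2, Matrix.mul_apply, Fin.sum_univ_two, Matrix.one_apply]
    have hJ2t : J2ᵀ = !![0, 1; -1, 0] := by
      ext i j
      fin_cases i <;> fin_cases j <;> norm_num [hJ2, Matrix.transpose_apply]
    have hJ2tJ : J2ᵀ * J2 = 1 := by
      rw [hJ2t]
      ext i j
      fin_cases i <;> fin_cases j <;>
        norm_num [hJ2, Matrix.mul_apply, Fin.sum_univ_two, Matrix.one_apply]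
    have h12zero : J2 * X + B2 = 0 := by
      rw [hXdef, ← Matrix.mul_assoc, hJ2sq]
      simp
    have h21zero : Xᵀ * J2 + B3 = 0 := by
      rw [hXdef, hB3eq, Matrix.transpose_mul, Matrix.mul_assoc, hJ2tJ]
      simp
    set L' := Xᵀ * B2 + A4 with hL'def
    set P₂ := Matrix.fromBlocks (1 : Matrix (Fin 2) (Fin 2) ℝ) X 0 (1 : Matrix (Fin m) (Fin m) ℝ) with hP₂def
    have hP₂t : P₂ᵀ = Matrix.fromBlocks 1 0 Xᵀ 1 := by
      rw [hP₂def, Matrix.fromBlocks_transpose]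
      simp only [Matrix.transpose_one, Matrix.transpose_zero]
    have hN : P₂ᵀ * B * P₂ = Matrix.fromBlocks J2 0 0 L' := by
      rw [hP₂t, hBblocks, hP₂def, Matrix.fromBlocks_multiply, Matrix.fromBlocks_multiply]
      simp only [Matrix.one_mul, Matrix.mul_one, Matrix.zero_mul, Matrix.mul_zero,
        add_zero, zero_add]
      rw [h12zero, h21zero, Matrix.zero_mul, zero_add, hL'def]
    have congN : MCongruent B (Matrix.fromBlocks J2 0 0 L') := by
      refine ⟨P₂, Matrix.fromBlocks (1 : Matrix (Fin 2) (Fin 2) ℝ) (-X) 0 (1 : Matrix (Fin m) (Fin m) ℝ), ?_, ?_, hN⟩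
      · rw [hP₂def, Matrix.fromBlocks_multiply]
        simp [Matrix.fromBlocks_one]
      · rw [hP₂def, Matrix.fromBlocks_multiply]
        simp [Matrix.fromBlocks_one]
    have hNanti := congN.antisymm hBanti
    have hL'anti : L'ᵀ = -L' := by
      rw [Matrix.fromBlocks_transpose,
        show -(Matrix.fromBlocks J2 (0:Matrix (Fin 2) (Fin m) ℝ)
          (0:Matrix (Fin m) (Fin 2) ℝ) L') = Matrix.fromBlocks (-J2) (-0) (-0) (-L') from
          Matrix.fromBlocks_neg _ _ _ _] at hNanti
      have h22 := congrArg Matrix.toBlocks₂₂ hNanti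
      simpa only [Matrix.toBlocks_fromBlocks₂₂] using h22
    obtain ⟨n', hn', congL'⟩ := IH m (by omega) L' hL'anti
    have congLift := MCongruent.blockLift J2 congL'
    have hJ2v : ∀ i j : Fin 2, J2 i j = Jfun 1 (i:ℕ) (j:ℕ) := by
      intro i j
      fin_cases i <;> fin_cases j <;> norm_num [hJ2, Jfun]
    have hJsub : (Jmat (m+2) (n'+1)).submatrix ⇑e ⇑e
        = Matrix.fromBlocks J2 0 0 (Jmat m n') := by
      ext x y
      cases x with
      | inl i =>
        cases y with
        | inl j =>
          rw [Matrix.submatrix_apply, Matrix.fromBlocks_apply₁₁, hJ2v]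
          show Jfun (n'+1) ((e (Sum.inl i)):ℕ) ((e (Sum.inl j)):ℕ) = Jfun 1 (i:ℕ) (j:ℕ)
          rw [he, e_inl_val, e_inl_val]
          have hi : (i:ℕ) < 2 := i.2
          have hj : (j:ℕ) < 2 := j.2
          unfold Jfun
          have c1 : ((i:ℕ)%2 = 0 ∧ (i:ℕ) < 2*(n'+1) ∧ (j:ℕ) = (i:ℕ)+1)
              ↔ ((i:ℕ)%2 = 0 ∧ (i:ℕ) < 2*1 ∧ (j:ℕ) = (i:ℕ)+1) := by omega
          have c2 : ((j:ℕ)%2 = 0 ∧ (j:ℕ) < 2*(n'+1) ∧ (i:ℕ) = (j:ℕ)+1)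
              ↔ ((j:ℕ)%2 = 0 ∧ (j:ℕ) < 2*1 ∧ (i:ℕ) = (j:ℕ)+1) := by omega
          rw [if_congr c1 rfl (if_congr c2 rfl rfl)]
        | inr j =>
          rw [Matrix.submatrix_apply, Matrix.fromBlocks_apply₁₂, Matrix.zero_apply]
          show Jfun (n'+1) ((e (Sum.inl i)):ℕ) ((e (Sum.inr j)):ℕ) = 0
          rw [he, e_inl_val, e_inr_val]
          have hi : (i:ℕ) < 2 := i.2
          unfold Jfun
          have c1 : ¬((i:ℕ)%2 = 0 ∧ (i:ℕ) < 2*(n'+1) ∧ 2+(j:ℕ) = (i:ℕ)+1) := by omega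
          have c2 : ¬((2+(j:ℕ))%2 = 0 ∧ 2+(j:ℕ) < 2*(n'+1) ∧ (i:ℕ) = (2+(j:ℕ))+1) := by omega
          rw [if_neg c1, if_neg c2]
      | inr i =>
        cases y with
        | inl j =>
          rw [Matrix.submatrix_apply, Matrix.fromBlocks_apply₂₁, Matrix.zero_apply]
          show Jfun (n'+1) ((e (Sum.inr i)):ℕ) ((e (Sum.inl j)):ℕ) = 0
          rw [he, e_inr_val, e_inl_val]
          have hj : (j:ℕ) < 2 := j.2
          unfold Jfun
          have c1 : ¬((2+(i:ℕ))%2 = 0 ∧ 2+(i:ℕ) < 2*(n'+1) ∧ (j:ℕ) = (2+(i:ℕ))+1) := by omega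
          have c2 : ¬((j:ℕ)%2 = 0 ∧ (j:ℕ) < 2*(n'+1) ∧ 2+(i:ℕ) = (j:ℕ)+1) := by omega
          rw [if_neg c1, if_neg c2]
        | inr j =>
          rw [Matrix.submatrix_apply, Matrix.fromBlocks_apply₂₂]
          show Jfun (n'+1) ((e (Sum.inr i)):ℕ) ((e (Sum.inr j)):ℕ) = Jfun n' (i:ℕ) (j:ℕ)
          rw [he, e_inr_val, e_inr_val]
          unfold Jfun
          have c1 : ((2+(i:ℕ))%2 = 0 ∧ 2+(i:ℕ) < 2*(n'+1) ∧ 2+(j:ℕ) = (2+(i:ℕ))+1)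
              ↔ ((i:ℕ)%2 = 0 ∧ (i:ℕ) < 2*n' ∧ (j:ℕ) = (i:ℕ)+1) := by omega
          have c2 : ((2+(j:ℕ))%2 = 0 ∧ 2+(j:ℕ) < 2*(n'+1) ∧ 2+(i:ℕ) = (2+(j:ℕ))+1)
              ↔ ((j:ℕ)%2 = 0 ∧ (j:ℕ) < 2*n' ∧ (i:ℕ) = (j:ℕ)+1) := by omega
          rw [if_congr c1 rfl (if_congr c2 rfl rfl)]
    have congJ : MCongruent (Jmat (m+2) (n'+1)) (Matrix.fromBlocks J2 0 0 (Jmat m n')) := by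
      rw [← hJsub]
      exact MCongruent.of_equiv _ e
    exact ⟨n'+1, by omega,
      (((congA.trans congB).trans congN).trans congLift).trans congJ.symm⟩

def cform {d : ℕ} (M : Matrix (Fin d) (Fin d) ℝ) (v w : Fin d → ℝ) : ℝ :=
  ∑ j, ∑ k, M j k * v j * w k

lemma cform_single {d : ℕ} (M : Matrix (Fin d) (Fin d) ℝ) (j k : Fin d) :
    cform M (Pi.single j 1) (Pi.single k 1) = M j k := by
  unfold cform
  rw [Finset.sum_eq_single j]
  · rw [Finset.sum_eq_single k]
    · simp
    · intro b _ hb; simp [Pi.single_apply, hb]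
    · simp
  · intro b _ hb
    apply Finset.sum_eq_zero
    intro c _
    simp [Pi.single_apply, hb]
  · simp

lemma cform_zero {d : ℕ} (v w : Fin d → ℝ) : cform (0 : Matrix (Fin d) (Fin d) ℝ) v w = 0 := by
  simp [cform]

lemma cform_antisymm {d : ℕ} {M : Matrix (Fin d) (Fin d) ℝ} (hM : Mᵀ = -M) (v w : Fin d → ℝ) :
    cform M w v = - cform M v w := by
  unfold cform
  rw [Finset.sum_comm]
  have hterm : ∀ x y : Fin d, M y x * w y * v x = -(M x y * v x * w y) := by
    intro x y
    have h := congrFun (congrFun hM x) y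
    simp only [Matrix.transpose_apply, Matrix.neg_apply] at h
    rw [h]; ring
  calc (∑ x : Fin d, ∑ y : Fin d, M y x * w y * v x)
      = ∑ x : Fin d, ∑ y : Fin d, -(M x y * v x * w y) :=
        Finset.sum_congr rfl fun x _ => Finset.sum_congr rfl fun y _ => hterm x y
    _ = -∑ x : Fin d, ∑ y : Fin d, M x y * v x * w y := by
        simp [Finset.sum_neg_distrib]

lemma cform_dot {d : ℕ} (M : Matrix (Fin d) (Fin d) ℝ) (v w : Fin d → ℝ) :
    cform M v w = dotProduct v (M.mulVec w) := by
  unfold cform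
  simp only [dotProduct, Matrix.mulVec, Finset.mul_sum]
  apply Finset.sum_congr rfl
  intro j _
  apply Finset.sum_congr rfl
  intro k _
  ring

lemma key_forward (d : ℕ) (L M : Matrix (Fin d) (Fin d) ℝ) (hL : Lᵀ = -L) (hM : Mᵀ = -M)
    (φ : (ℝ × (Fin d → ℝ)) ≃ₗ[ℝ] ℝ × (Fin d → ℝ))
    (hφ : ∀ x y : ℝ × (Fin d → ℝ),
      φ (x.1 + y.1 + (1/2) * cform L x.2 y.2, x.2 + y.2)
        = ((φ x).1 + (φ y).1 + (1/2) * cform M (φ x).2 (φ y).2, (φ x).2 + (φ y).2)) :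
    L.rank ≤ M.rank ∨ (M = 0 ∧ L = 0) := by
  have comm : ∀ x y : ℝ × (Fin d → ℝ),
      cform L x.2 y.2 • φ (1, 0) = (cform M (φ x).2 (φ y).2) • ((1:ℝ), (0 : Fin d → ℝ)) := by
    intro x y
    have e1 : (x.1 + y.1 + (1/2) * cform L x.2 y.2, x.2 + y.2)
        - (y.1 + x.1 + (1/2) * cform L y.2 x.2, y.2 + x.2)
        = (cform L x.2 y.2) • ((1:ℝ), (0 : Fin d → ℝ)) := by
      rw [cform_antisymm hL y.2 x.2]
      rw [Prod.ext_iff]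
      constructor
      · simp only [Prod.fst_sub, Prod.smul_fst, smul_eq_mul, mul_one]
        ring
      · simp only [Prod.snd_sub, Prod.smul_snd, smul_zero]
        abel
    have e2 : ((φ x).1 + (φ y).1 + (1/2) * cform M (φ x).2 (φ y).2, (φ x).2 + (φ y).2)
        - ((φ y).1 + (φ x).1 + (1/2) * cform M (φ y).2 (φ x).2, (φ y).2 + (φ x).2)
        = (cform M (φ x).2 (φ y).2) • ((1:ℝ), (0 : Fin d → ℝ)) := by
      rw [cform_antisymm hM (φ y).2 (φ x).2]
      rw [Prod.ext_iff]
      constructor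
      · simp only [Prod.fst_sub, Prod.smul_fst, smul_eq_mul, mul_one]
        ring
      · simp only [Prod.snd_sub, Prod.smul_snd, smul_zero]
        abel
    calc cform L x.2 y.2 • φ (1, 0)
        = φ (cform L x.2 y.2 • ((1:ℝ), (0 : Fin d → ℝ))) := (φ.map_smul _ _).symm
      _ = φ ((x.1 + y.1 + (1/2) * cform L x.2 y.2, x.2 + y.2)
            - (y.1 + x.1 + (1/2) * cform L y.2 x.2, y.2 + x.2)) := by rw [e1]
      _ = φ (x.1 + y.1 + (1/2) * cform L x.2 y.2, x.2 + y.2)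
            - φ (y.1 + x.1 + (1/2) * cform L y.2 x.2, y.2 + x.2) := φ.map_sub _ _
      _ = (cform M (φ x).2 (φ y).2) • ((1:ℝ), (0 : Fin d → ℝ)) := by
            rw [hφ x y, hφ y x, e2]
  have key1 : ∀ x y : ℝ × (Fin d → ℝ),
      cform L x.2 y.2 * (φ (1, 0)).1 = cform M (φ x).2 (φ y).2 := by
    intro x y
    have h := congrArg Prod.fst (comm x y)
    simpa using h
  by_cases ha : (φ (1, 0)).1 = 0
  · right
    have hM0 : M = 0 := by
      have hzero : ∀ u u' : Fin d → ℝ, cform M u u' = 0 := by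
        intro u u'
        have h := key1 (φ.symm (0, u)) (φ.symm (0, u'))
        rw [ha, mul_zero] at h
        simpa using h.symm
      ext j k
      have := hzero (Pi.single j 1) (Pi.single k 1)
      rw [cform_single] at this
      simpa using this
    refine ⟨hM0, ?_⟩
    have heq : ∀ x y : ℝ × (Fin d → ℝ),
        (x.1 + y.1 + (1/2) * cform L x.2 y.2, x.2 + y.2)
          = (y.1 + x.1 + (1/2) * cform L y.2 x.2, y.2 + x.2) := by
      intro x y
      apply φ.injective
      rw [hφ x y, hφ y x]
      subst hM0
      rw [cform_zero, cform_zero]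
      rw [Prod.ext_iff]
      constructor
      · show (φ x).1 + (φ y).1 + 1/2 * 0 = (φ y).1 + (φ x).1 + 1/2 * 0
        ring
      · show (φ x).2 + (φ y).2 = (φ y).2 + (φ x).2
        abel
    ext j k
    have h := congrArg Prod.fst (heq (0, Pi.single j 1) (0, Pi.single k 1))
    simp only [] at h
    rw [cform_single, cform_single] at h
    have hskew := congrFun (congrFun hL j) k
    simp only [Matrix.transpose_apply, Matrix.neg_apply] at hskew
    simp only [Matrix.zero_apply]
    -- h : 0 + 0 + 1/2 * L j k = 0 + 0 + 1/2 * L k j, hskew : L k j = - L j k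
    have : L j k = L k j := by linarith
    rw [hskew] at this
    linarith
  · left
    set ψ : (Fin d → ℝ) →ₗ[ℝ] (Fin d → ℝ) :=
      (LinearMap.snd ℝ ℝ (Fin d → ℝ)).comp
        (φ.toLinearMap.comp (LinearMap.inr ℝ ℝ (Fin d → ℝ))) with hψdef
    set A := LinearMap.toMatrix' ψ with hAdef
    have hψ : ∀ v, A.mulVec v = (φ (0, v)).2 := by
      intro v
      have h : Matrix.toLin' A = ψ := Matrix.toLin'_toMatrix' ψ
      calc A.mulVec v = Matrix.toLin' A v := (Matrix.toLin'_apply A v).symm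
        _ = ψ v := by rw [h]
        _ = (φ (0,v)).2 := rfl
    have hcong : (φ (1, 0)).1 • L = Aᵀ * M * A := by
      ext j k
      rw [Matrix.smul_apply, smul_eq_mul]
      have h1 := key1 (0, Pi.single j 1) (0, Pi.single k 1)
      simp only [] at h1
      rw [cform_single] at h1
      rw [mul_comm, h1, ← hψ, ← hψ]
      rw [Matrix.mulVec_single_one, Matrix.mulVec_single_one]
      simp only [Matrix.col_apply']
      unfold cform
      rw [Matrix.mul_apply]
      rw [Finset.sum_comm]
      apply Finset.sum_congr rfl
      intro q _
      rw [Matrix.mul_apply, Finset.sum_mul]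
      apply Finset.sum_congr rfl
      intro p _
      rw [Matrix.transpose_apply]
      ring
    calc L.rank = ((φ (1, 0)).1 • L).rank := (rank_smul ha L).symm
      _ = (Aᵀ * M * A).rank := by rw [hcong]
      _ ≤ (Aᵀ * M).rank := Matrix.rank_mul_le_left _ _
      _ ≤ M.rank := Matrix.rank_mul_le_right _ _

/-- Let `L` be a real antisymmetric `d × d` matrix, `0 ≤ 2n ≤ d`,
and let `L₀` be the standard antisymmetric matrix of rank `2n` (so that `G_{L₀}` is
`ℍ^{2n+1} × ℝ^{d−2n}`). Then there is a linear isomorphism of `ℝ^{d+1}` which is a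
group isomorphism from `G_L` onto `G_{L₀}` if and only if `L` has rank `2n`. -/
theorem stmt17 (d n : ℕ) (hd : 1 ≤ d) (h2n : 2 * n ≤ d)
    (L : Matrix (Fin d) (Fin d) ℝ) (hL : L.transpose = -L)
    (L₀ : Matrix (Fin d) (Fin d) ℝ)
    (hL₀ : ∀ i j : Fin d, L₀ i j =
      if (i : ℕ) < n ∧ (j : ℕ) = (i : ℕ) + n then -2
      else if (j : ℕ) < n ∧ (i : ℕ) = (j : ℕ) + n then 2 else 0)
    (mul : Matrix (Fin d) (Fin d) ℝ →
      (ℝ × (Fin d → ℝ)) → (ℝ × (Fin d → ℝ)) → ℝ × (Fin d → ℝ))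
    (hmul : mul = fun M x y =>
      (x.1 + y.1 + (1 / 2) * ∑ j, ∑ k, M j k * x.2 j * y.2 k, x.2 + y.2)) :
    (∃ φ : (ℝ × (Fin d → ℝ)) ≃ₗ[ℝ] ℝ × (Fin d → ℝ),
      ∀ x y, φ (mul L x y) = mul L₀ (φ x) (φ y)) ↔ L.rank = 2 * n := by
  subst hmul
  have hL0L : L₀ = L0gen d n := by
    ext i j
    rw [hL₀ i j]
    rfl
  have hL₀anti : L₀ᵀ = -L₀ := by rw [hL0L]; exact L0gen_antisymm d n
  have hrankL₀ : L₀.rank = 2*n := by rw [hL0L]; exact L0gen_rank d n h2n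
  constructor
  · rintro ⟨φ, hφ⟩
    have hφ' : ∀ x y : ℝ × (Fin d → ℝ),
        φ (x.1 + y.1 + (1/2) * cform L x.2 y.2, x.2 + y.2)
          = ((φ x).1 + (φ y).1 + (1/2) * cform L₀ (φ x).2 (φ y).2, (φ x).2 + (φ y).2) :=
      fun x y => hφ x y
    have hsym : ∀ x y : ℝ × (Fin d → ℝ),
        φ.symm (x.1 + y.1 + (1/2) * cform L₀ x.2 y.2, x.2 + y.2)
          = ((φ.symm x).1 + (φ.symm y).1 + (1/2) * cform L (φ.symm x).2 (φ.symm y).2,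
             (φ.symm x).2 + (φ.symm y).2) := by
      intro x y
      apply φ.injective
      rw [hφ' (φ.symm x) (φ.symm y)]
      simp only [LinearEquiv.apply_symm_apply]
    have h1 := key_forward d L L₀ hL hL₀anti φ hφ'
    have h2 := key_forward d L₀ L hL₀anti hL φ.symm hsym
    rcases h1 with h1 | ⟨hM0, hL0⟩
    · rcases h2 with h2 | ⟨hM0', hL0'⟩
      · rw [hrankL₀] at h1 h2
        omega
      · rw [hM0', Matrix.rank_zero]
        rw [hL0', Matrix.rank_zero] at hrankL₀
        omega
    · rw [hL0, Matrix.rank_zero]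
      rw [hM0, Matrix.rank_zero] at hrankL₀
      omega
  · intro hrank
    obtain ⟨n', hn', cong1⟩ := classify d L hL
    have congK : MCongruent (L0gen d n') ((2:ℝ) • Jmat d n') := by
      rw [← L0gen_submatrix d n' hn']
      exact MCongruent.of_equiv _ (fperm d n' hn')
    have hJrank : (Jmat d n').rank = 2*n' := by
      have h := congK.rank_eq
      rw [L0gen_rank d n' hn', rank_smul (two_ne_zero) _] at h
      exact h.symm
    have hnn : n' = n := by
      have h := cong1.rank_eq
      rw [hrank, hJrank] at h
      omega
    subst hnn
    have c1 : MCongruent L₀ ((2:ℝ) • Jmat d n') := by rw [hL0L]; exact congK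
    have c2 : MCongruent ((2:ℝ) • L) ((2:ℝ) • Jmat d n') := cong1.smul 2
    have c3 : MCongruent L₀ ((2:ℝ) • L) := c1.trans c2.symm
    obtain ⟨P, P', hPP', hP'P, hP⟩ := c3
    have hPdet : IsUnit P.det := Matrix.isUnit_det_of_left_inverse hP'P
    refine ⟨(LinearEquiv.smulOfNeZero ℝ ℝ 2 two_ne_zero).prodCongr
      (P.toLinearEquiv' (P.invertibleOfIsUnitDet hPdet)), ?_⟩
    intro x y
    have hcf : ∀ v w : Fin d → ℝ, cform L₀ (P.mulVec v) (P.mulVec w) = 2 * cform L v w := by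
      intro v w
      rw [cform_dot, cform_dot]
      rw [Matrix.mulVec_mulVec]
      rw [Matrix.dotProduct_mulVec]
      rw [show P.mulVec v = Matrix.vecMul v Pᵀ from (Matrix.vecMul_transpose P v).symm]
      rw [Matrix.vecMul_vecMul]
      rw [← Matrix.mul_assoc, hP]
      rw [← Matrix.dotProduct_mulVec]
      rw [Matrix.smul_mulVec, dotProduct_smul]
      rw [smul_eq_mul]
    have happ : ∀ z : ℝ × (Fin d → ℝ),
        ((LinearEquiv.smulOfNeZero ℝ ℝ 2 two_ne_zero).prodCongr
          (P.toLinearEquiv' (P.invertibleOfIsUnitDet hPdet))) z = (2 * z.1, P.mulVec z.2) := by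
      intro z
      rw [LinearEquiv.prodCongr_apply]
      show ((2:ℝ) • z.1, Matrix.toLin' P z.2) = (2 * z.1, P.mulVec z.2)
      rw [smul_eq_mul, Matrix.toLin'_apply]
    simp only [happ]
    rw [Prod.ext_iff]
    constructor
    · show 2 * (x.1 + y.1 + 1/2 * cform L x.2 y.2)
        = 2*x.1 + 2*y.1 + 1/2 * cform L₀ (P.mulVec x.2) (P.mulVec y.2)
      rw [hcf]
      ring
    · show P.mulVec (x.2 + y.2) = P.mulVec x.2 + P.mulVec y.2
      exact Matrix.mulVec_add P x.2 y.2
end
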